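/- arXiv:1604.02014 — 9 statements merged into one kernel-verified Lean document; each statement's English description precedes it below -/
import Mathlib

section
/- There is a constant C > 0 (depending only on d and s) such that for every locally finite Borel measure μ on ℝ^d and every x ∈ ℝ^d, ∫₀^∞ (μ(B(x,r))/r^s)² dr/r ≤ C · Σ_{Q ∈ 𝒟} (μ(Q)/ℓ(Q)^s)² χ_Q(x), where 𝒟 is the lattice of triples of dyadic cubes. Consequently, the Wolff energy 𝒲₂(μ, ℝ^d) = ∫_{ℝ^d} ∫₀^∞ (μ(B(x,r))/r^s)² dr/r dμ(x) is at most C · Σ_{Q ∈ 𝒟} D_μ(Q)² μ(Q), with D_μ(Q) = μ(Q)/ℓ(Q)^s. -/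
open MeasureTheory Metric Set Filter ENNReal
noncomputable section

/-- Points of `ℝ^d` with the Euclidean metric. -/
abbrev Pt (d : ℕ) := EuclideanSpace ℝ (Fin d)

/-- The open cube in `ℝ^d` with center `c` (given coordinatewise) and side length `l`. -/
def cubeSet {d : ℕ} (c : Fin d → ℝ) (l : ℝ) : Set (Pt d) := {x | ∀ i, |x i - c i| < l / 2}

/-- The lattice of concentric triples of standard dyadic cubes, each cube recorded as the
pair (center, side length). -/
def triples (d : ℕ) : Set ((Fin d → ℝ) × ℝ) :=
  {p | ∃ (n : ℤ) (m : Fin d → ℤ), p.2 = 3 * 2 ^ n ∧ ∀ i, p.1 i = (2:ℝ) ^ n * (m i + 1 / 2)}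

/-- The s-dimensional density `μ(Q)/ℓ(Q)^s` of a cube. -/
def DensR {d : ℕ} (μ : Measure (Pt d)) (s : ℝ) (p : (Fin d → ℝ) × ℝ) : ℝ :=
  (μ (cubeSet p.1 p.2)).toReal / p.2 ^ s

/-- `[Q':Q] = |log₂(ℓ(Q')/ℓ(Q))|`, as a function of the two side lengths. -/
def ratio (l l' : ℝ) : ℝ := |Real.logb 2 (l' / l)|

/-- `Q'` dominates `Q` from above: `Q' ⊇ Q` and `D(Q') ≥ 2^{ε[Q':Q]} D(Q)`. -/
def DomAbove {d : ℕ} (μ : Measure (Pt d)) (s ε : ℝ) (Q' Q : (Fin d → ℝ) × ℝ) : Prop :=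
  cubeSet Q.1 Q.2 ⊆ cubeSet Q'.1 Q'.2 ∧
  (2:ℝ) ^ (ε * ratio Q.2 Q'.2) * DensR μ s Q ≤ DensR μ s Q'

/-- The selected cubes: those in the lattice that cannot be dominated from above by
another cube of the lattice. -/
def Dsel {d : ℕ} (μ : Measure (Pt d)) (s ε : ℝ) : Set ((Fin d → ℝ) × ℝ) :=
  {Q ∈ triples d | ¬ ∃ Q' ∈ triples d, Q' ≠ Q ∧ DomAbove μ s ε Q' Q}


lemma coord_le_dist {d : ℕ} (x y : Pt d) (i : Fin d) : |x i - y i| ≤ dist x y := by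
  rw [EuclideanSpace.dist_eq, ← Real.sqrt_sq_eq_abs]
  apply Real.sqrt_le_sqrt
  calc (x i - y i) ^ 2 = dist (x i) (y i) ^ 2 := by rw [Real.dist_eq, sq_abs]
    _ ≤ ∑ j, dist (x j) (y j) ^ 2 :=
        Finset.single_le_sum (f := fun j => dist (x j) (y j) ^ 2)
          (fun j _ => sq_nonneg _) (Finset.mem_univ i)

lemma measurableSet_cubeSet {d : ℕ} (c : Fin d → ℝ) (l : ℝ) :
    MeasurableSet (cubeSet c l) := by
  have h : cubeSet c l = ⋂ i, {x : Pt d | |x i - c i| < l / 2} := by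
    ext x; simp [cubeSet]
  rw [h]
  refine MeasurableSet.iInter fun i => ?_
  have hc : Continuous fun x : Pt d => |x i - c i| :=
    ((EuclideanSpace.proj (𝕜 := ℝ) i).continuous.sub continuous_const).abs
  exact measurableSet_lt hc.measurable measurable_const

lemma countable_triples (d : ℕ) : (triples d).Countable := by
  have hsub : triples d ⊆ Set.range (fun p : ℤ × (Fin d → ℤ) =>
      ((fun i => (2:ℝ) ^ p.1 * (p.2 i + 1 / 2)), 3 * (2:ℝ) ^ p.1)) := by
    rintro ⟨c, l⟩ ⟨n, m, hl, hc⟩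
    exact ⟨(n, m), by simp only [Prod.mk.injEq]; exact ⟨funext fun i => (hc i).symm, hl.symm⟩⟩
  exact (Set.countable_range _).mono hsub

/-- centers of the dyadic triples containing `x` at scale `2 ^ (n+1)` -/
def cen {d : ℕ} (x : Pt d) (n : ℤ) : Fin d → ℝ :=
  fun i => (2:ℝ) ^ (n + 1) * (⌊x i / (2:ℝ) ^ (n + 1)⌋ + 1 / 2)

lemma hx_near {d : ℕ} (x : Pt d) (n : ℤ) (i : Fin d) :
    |x i - cen x n i| ≤ (2:ℝ) ^ (n + 1) / 2 := by
  set T : ℝ := (2:ℝ) ^ (n + 1) with hT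
  have hT0 : (0:ℝ) < T := zpow_pos (by norm_num) _
  have h1 : T * ⌊x i / T⌋ ≤ x i := by
    have h := Int.floor_le (x i / T)
    have := mul_le_mul_of_nonneg_left h hT0.le
    rwa [mul_div_cancel₀ _ hT0.ne'] at this
  have h2 : x i < T * ⌊x i / T⌋ + T := by
    have h := Int.lt_floor_add_one (x i / T)
    have := mul_lt_mul_of_pos_left h hT0
    rw [mul_add, mul_one, mul_div_cancel₀ _ hT0.ne'] at this
    linarith
  have hc : cen x n i = T * ⌊x i / T⌋ + T / 2 := by
    simp only [cen]; ring
  rw [abs_le, hc]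
  constructor <;> linarith

lemma hx_mem {d : ℕ} (x : Pt d) (n : ℤ) :
    x ∈ cubeSet (cen x n) (3 * (2:ℝ) ^ (n + 1)) := by
  intro i
  have h := hx_near x n i
  have hT0 : (0:ℝ) < (2:ℝ) ^ (n + 1) := zpow_pos (by norm_num) _
  calc |x i - cen x n i| ≤ (2:ℝ) ^ (n + 1) / 2 := h
    _ < 3 * (2:ℝ) ^ (n + 1) / 2 := by linarith

lemma hball_sub {d : ℕ} (x : Pt d) (n : ℤ) {r : ℝ} (hr : r ≤ (2:ℝ) ^ (n + 1)) :
    ball x r ⊆ cubeSet (cen x n) (3 * (2:ℝ) ^ (n + 1)) := by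
  intro y hy i
  have h1 : |y i - x i| ≤ dist y x := coord_le_dist y x i
  have h2 : dist y x < r := mem_ball.1 hy
  have h3 := hx_near x n i
  have h4 : |y i - cen x n i| ≤ |y i - x i| + |x i - cen x n i| := abs_sub_le _ _ _
  have h5 : |y i - cen x n i| < (2:ℝ) ^ (n + 1) + (2:ℝ) ^ (n + 1) / 2 := by linarith
  calc |y i - cen x n i| < (2:ℝ) ^ (n + 1) + (2:ℝ) ^ (n + 1) / 2 := h5
    _ = 3 * (2:ℝ) ^ (n + 1) / 2 := by ring

lemma hq_triples {d : ℕ} (x : Pt d) (n : ℤ) :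
    ((cen x n, 3 * (2:ℝ) ^ (n + 1)) : (Fin d → ℝ) × ℝ) ∈ triples d :=
  ⟨n + 1, fun i => ⌊x i / (2:ℝ) ^ (n + 1)⌋, rfl, fun i => rfl⟩

/-- Pointwise domination of the radial Wolff integrand by the dyadic one, and the resulting
bound `𝒲₂(μ, ℝ^d) ≤ C Σ_{Q ∈ 𝒟} D_μ(Q)² μ(Q)`. -/
theorem wolff_radial_le_dyadic (d : ℕ) (hd : 1 ≤ d) (s : ℝ) (hs : s ∈ Set.Ioo 0 (d : ℝ)) :
    ∃ C : ℝ≥0∞, 0 < C ∧ C < ⊤ ∧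
      ∀ μ : Measure (Pt d), IsLocallyFiniteMeasure μ →
        (∀ x : Pt d,
          (∫⁻ r in Set.Ioi (0:ℝ),
              (μ (ball x r) / ENNReal.ofReal (r ^ s)) ^ 2 * ENNReal.ofReal r⁻¹) ≤
            C * ∑' Q : triples d,
              (μ (cubeSet Q.1.1 Q.1.2) / ENNReal.ofReal (Q.1.2 ^ s)) ^ 2 *
                (cubeSet Q.1.1 Q.1.2).indicator (fun _ => (1 : ℝ≥0∞)) x) ∧
        (∫⁻ x, (∫⁻ r in Set.Ioi (0:ℝ),
              (μ (ball x r) / ENNReal.ofReal (r ^ s)) ^ 2 * ENNReal.ofReal r⁻¹) ∂μ) ≤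
          C * ∑' Q : triples d,
            (μ (cubeSet Q.1.1 Q.1.2) / ENNReal.ofReal (Q.1.2 ^ s)) ^ 2 *
              μ (cubeSet Q.1.1 Q.1.2) := by
  obtain ⟨hs0, hsd⟩ := hs
  set c6 : ℝ≥0∞ := ENNReal.ofReal ((6:ℝ) ^ s) with hc6
  have hc6pos : 0 < c6 := ENNReal.ofReal_pos.2 (Real.rpow_pos_of_pos (by norm_num) s)
  refine ⟨c6 ^ 2, ENNReal.pow_pos hc6pos 2, ENNReal.pow_lt_top ENNReal.ofReal_lt_top, ?_⟩
  intro μ _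
  -- pointwise bound
  have key : ∀ x : Pt d,
      (∫⁻ r in Set.Ioi (0:ℝ),
          (μ (ball x r) / ENNReal.ofReal (r ^ s)) ^ 2 * ENNReal.ofReal r⁻¹) ≤
        c6 ^ 2 * ∑' Q : triples d,
          (μ (cubeSet Q.1.1 Q.1.2) / ENNReal.ofReal (Q.1.2 ^ s)) ^ 2 *
            (cubeSet Q.1.1 Q.1.2).indicator (fun _ => (1 : ℝ≥0∞)) x := by
    intro x
    set D : ℤ → ℝ≥0∞ := fun n =>
      μ (cubeSet (cen x n) (3 * (2:ℝ) ^ (n + 1))) /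
        ENNReal.ofReal ((3 * (2:ℝ) ^ (n + 1)) ^ s) with hD
    -- band estimate
    have band : ∀ n : ℤ,
        (∫⁻ r in Set.Ioc ((2:ℝ) ^ n) ((2:ℝ) ^ (n + 1)),
            (μ (ball x r) / ENNReal.ofReal (r ^ s)) ^ 2 * ENNReal.ofReal r⁻¹) ≤
          c6 ^ 2 * D n ^ 2 := by
      intro n
      have h2n : (0:ℝ) < 2 ^ n := zpow_pos (by norm_num) n
      have h2n1 : (0:ℝ) < 2 ^ (n + 1) := zpow_pos (by norm_num) (n + 1)
      have hLs : (3 * (2:ℝ) ^ (n + 1)) ^ s = 6 ^ s * ((2:ℝ) ^ n) ^ s := by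
        rw [← Real.mul_rpow (by norm_num) h2n.le]
        congr 1
        rw [zpow_add_one₀ (two_ne_zero)]
        ring
      have h6s : (0:ℝ) < 6 ^ s := Real.rpow_pos_of_pos (by norm_num) s
      have hCD : c6 * D n =
          μ (cubeSet (cen x n) (3 * (2:ℝ) ^ (n + 1))) / ENNReal.ofReal (((2:ℝ) ^ n) ^ s) := by
        rw [hD, ← mul_div_assoc, hLs, ENNReal.ofReal_mul h6s.le,
          ENNReal.mul_div_mul_left _ _ (by exact_mod_cast hc6pos.ne') ENNReal.ofReal_ne_top]
      have pt : ∀ r ∈ Set.Ioc ((2:ℝ) ^ n) ((2:ℝ) ^ (n + 1)),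
          (μ (ball x r) / ENNReal.ofReal (r ^ s)) ^ 2 * ENNReal.ofReal r⁻¹ ≤
            c6 ^ 2 * D n ^ 2 * ENNReal.ofReal (((2:ℝ) ^ n)⁻¹) := by
        intro r hr
        have hA : μ (ball x r) / ENNReal.ofReal (r ^ s) ≤ c6 * D n := by
          rw [hCD]
          refine ENNReal.div_le_div (measure_mono (hball_sub x n hr.2)) ?_
          exact ENNReal.ofReal_le_ofReal (Real.rpow_le_rpow h2n.le hr.1.le hs0.le)
        have hB : ENNReal.ofReal r⁻¹ ≤ ENNReal.ofReal (((2:ℝ) ^ n)⁻¹) :=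
          ENNReal.ofReal_le_ofReal (inv_anti₀ h2n hr.1.le)
        calc (μ (ball x r) / ENNReal.ofReal (r ^ s)) ^ 2 * ENNReal.ofReal r⁻¹ ≤
            (c6 * D n) ^ 2 * ENNReal.ofReal (((2:ℝ) ^ n)⁻¹) := by
              exact mul_le_mul' (pow_le_pow_left' hA 2) hB
          _ = c6 ^ 2 * D n ^ 2 * ENNReal.ofReal (((2:ℝ) ^ n)⁻¹) := by rw [mul_pow]
      calc (∫⁻ r in Set.Ioc ((2:ℝ) ^ n) ((2:ℝ) ^ (n + 1)),
              (μ (ball x r) / ENNReal.ofReal (r ^ s)) ^ 2 * ENNReal.ofReal r⁻¹)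
          ≤ ∫⁻ _ in Set.Ioc ((2:ℝ) ^ n) ((2:ℝ) ^ (n + 1)),
              c6 ^ 2 * D n ^ 2 * ENNReal.ofReal (((2:ℝ) ^ n)⁻¹) :=
            setLIntegral_mono' measurableSet_Ioc pt
        _ = c6 ^ 2 * D n ^ 2 * ENNReal.ofReal (((2:ℝ) ^ n)⁻¹) *
              volume (Set.Ioc ((2:ℝ) ^ n) ((2:ℝ) ^ (n + 1))) := setLIntegral_const _ _
        _ = c6 ^ 2 * D n ^ 2 := by
            rw [Real.volume_Ioc, mul_assoc, ← ENNReal.ofReal_mul (inv_nonneg.2 h2n.le)]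
            have h1 : ((2:ℝ) ^ n)⁻¹ * ((2:ℝ) ^ (n + 1) - 2 ^ n) = 1 := by
              rw [zpow_add_one₀ (two_ne_zero)]
              field_simp
              ring
            rw [h1, ENNReal.ofReal_one, mul_one]
    -- decomposition of Ioi 0
    have hun : Set.Ioi (0:ℝ) = ⋃ n : ℤ, Set.Ioc ((2:ℝ) ^ n) ((2:ℝ) ^ (n + 1)) := by
      ext r
      simp only [Set.mem_Ioi, Set.mem_iUnion]
      constructor
      · intro hr; exact exists_mem_Ioc_zpow hr one_lt_two
      · rintro ⟨n, hn⟩; exact (zpow_pos (by norm_num) n).trans hn.1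
    have hdisj : Pairwise (Function.onFun Disjoint
        fun n : ℤ => Set.Ioc ((2:ℝ) ^ n) ((2:ℝ) ^ (n + 1))) := by
      intro m n hmn
      refine Set.disjoint_left.2 fun r hrm hrn => hmn ?_
      have h1 : m < n + 1 := (zpow_lt_zpow_iff_right₀ (by norm_num : (1:ℝ) < 2)).1
        (hrm.1.trans_le hrn.2)
      have h2 : n < m + 1 := (zpow_lt_zpow_iff_right₀ (by norm_num : (1:ℝ) < 2)).1
        (hrn.1.trans_le hrm.2)
      omega
    rw [hun, lintegral_iUnion (fun _ => measurableSet_Ioc) hdisj]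
    -- sum the bands, then compare with the tsum over triples
    set g : triples d → ℝ≥0∞ := fun Q =>
      (μ (cubeSet Q.1.1 Q.1.2) / ENNReal.ofReal (Q.1.2 ^ s)) ^ 2 *
        (cubeSet Q.1.1 Q.1.2).indicator (fun _ => (1 : ℝ≥0∞)) x with hg
    set F : ℤ → triples d := fun n => ⟨(cen x n, 3 * (2:ℝ) ^ (n + 1)), hq_triples x n⟩ with hF
    have hFinj : Function.Injective F := by
      intro m n h
      have h2 : (3:ℝ) * (2:ℝ) ^ (m + 1) = 3 * (2:ℝ) ^ (n + 1) :=
        congrArg (fun Q : triples d => Q.1.2) h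
      have h3 : (2:ℝ) ^ (m + 1) = (2:ℝ) ^ (n + 1) := by linarith
      have := zpow_right_injective₀ (by norm_num : (0:ℝ) < 2) (by norm_num) h3
      omega
    have hsum : ∑' n : ℤ, D n ^ 2 ≤ ∑' Q : triples d, g Q := by
      have heq : ∀ n : ℤ, g (F n) = D n ^ 2 := by
        intro n
        simp only [hg, hF, hD]
        rw [Set.indicator_of_mem (hx_mem x n), mul_one]
      calc ∑' n : ℤ, D n ^ 2 = ∑' n : ℤ, g (F n) := tsum_congr fun n => (heq n).symm
        _ ≤ ∑' Q : triples d, g Q := ENNReal.tsum_comp_le_tsum_of_injective hFinj g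
    calc (∑' n : ℤ, ∫⁻ r in Set.Ioc ((2:ℝ) ^ n) ((2:ℝ) ^ (n + 1)),
            (μ (ball x r) / ENNReal.ofReal (r ^ s)) ^ 2 * ENNReal.ofReal r⁻¹)
        ≤ ∑' n : ℤ, c6 ^ 2 * D n ^ 2 := ENNReal.tsum_le_tsum band
      _ = c6 ^ 2 * ∑' n : ℤ, D n ^ 2 := ENNReal.tsum_mul_left
      _ ≤ c6 ^ 2 * ∑' Q : triples d, g Q := mul_le_mul_right hsum _
  refine ⟨key, ?_⟩
  haveI : Countable (triples d) := (countable_triples d).to_subtype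
  have hmeas : ∀ Q : triples d, AEMeasurable (fun y : Pt d =>
      (μ (cubeSet Q.1.1 Q.1.2) / ENNReal.ofReal (Q.1.2 ^ s)) ^ 2 *
        (cubeSet Q.1.1 Q.1.2).indicator (fun _ => (1 : ℝ≥0∞)) y) μ := fun Q =>
    (measurable_const.mul
      (measurable_const.indicator (measurableSet_cubeSet _ _))).aemeasurable
  calc (∫⁻ x, (∫⁻ r in Set.Ioi (0:ℝ),
          (μ (ball x r) / ENNReal.ofReal (r ^ s)) ^ 2 * ENNReal.ofReal r⁻¹) ∂μ)
      ≤ ∫⁻ x, c6 ^ 2 * ∑' Q : triples d,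
          (μ (cubeSet Q.1.1 Q.1.2) / ENNReal.ofReal (Q.1.2 ^ s)) ^ 2 *
            (cubeSet Q.1.1 Q.1.2).indicator (fun _ => (1 : ℝ≥0∞)) x ∂μ := lintegral_mono key
    _ = c6 ^ 2 * ∫⁻ x, ∑' Q : triples d,
          (μ (cubeSet Q.1.1 Q.1.2) / ENNReal.ofReal (Q.1.2 ^ s)) ^ 2 *
            (cubeSet Q.1.1 Q.1.2).indicator (fun _ => (1 : ℝ≥0∞)) x ∂μ :=
        lintegral_const_mul' _ _ (pow_ne_top ENNReal.ofReal_ne_top)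
    _ = c6 ^ 2 * ∑' Q : triples d, ∫⁻ x,
          (μ (cubeSet Q.1.1 Q.1.2) / ENNReal.ofReal (Q.1.2 ^ s)) ^ 2 *
            (cubeSet Q.1.1 Q.1.2).indicator (fun _ => (1 : ℝ≥0∞)) x ∂μ := by
        rw [lintegral_tsum hmeas]
    _ = c6 ^ 2 * ∑' Q : triples d,
          (μ (cubeSet Q.1.1 Q.1.2) / ENNReal.ofReal (Q.1.2 ^ s)) ^ 2 *
            μ (cubeSet Q.1.1 Q.1.2) := by
        congr 1
        refine tsum_congr fun Q => ?_
        rw [lintegral_const_mul _ (measurable_const.indicator (measurableSet_cubeSet _ _)),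
          lintegral_indicator (measurableSet_cubeSet _ _), setLIntegral_const, one_mul]
end
end

section
/- Fix ε > 0 and a locally finite Borel measure μ on ℝ^d. If Q belongs to 𝒟_sel(μ) (i.e., Q cannot be dominated from above by any other cube in 𝒟), then for every M > 1 one has μ(MQ) ≤ C M^{s+ε} μ(Q) for a constant C depending only on d, s, ε. -/
open MeasureTheory Metric Set Filter ENNReal
noncomputable section

lemma cube_meas_lt_top {d : ℕ} (μ : Measure (Pt d)) [IsLocallyFiniteMeasure μ]
    (c : Fin d → ℝ) (l : ℝ) : μ (cubeSet c l) < ⊤ := by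
  have hsub : cubeSet c l ⊆ Metric.closedBall (WithLp.toLp 2 c : Pt d)
      (Real.sqrt (d * (l / 2) ^ 2)) := by
    intro x hx
    rw [Metric.mem_closedBall, EuclideanSpace.dist_eq]
    apply Real.sqrt_le_sqrt
    have : ∀ i, dist (x i) (c i) ^ 2 ≤ (l / 2) ^ 2 := by
      intro i
      have h := hx i
      have h0 : (0:ℝ) ≤ dist (x i) (c i) := dist_nonneg
      have h1 : dist (x i) (c i) ≤ l / 2 := by
        rw [Real.dist_eq]; exact h.le
      exact sq_le_sq' (by linarith) h1
    calc ∑ i, dist (x i) (c i) ^ 2 ≤ ∑ _i : Fin d, (l / 2) ^ 2 :=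
          Finset.sum_le_sum fun i _ => this i
      _ = d * (l / 2) ^ 2 := by simp [Finset.sum_const, nsmul_eq_mul]
  exact (measure_mono hsub).trans_lt (isCompact_closedBall _ _).measure_lt_top

lemma cube_subset {d : ℕ} {c c' : Fin d → ℝ} {l l' : ℝ}
    (h : ∀ i, |c i - c' i| + l / 2 ≤ l' / 2) :
    cubeSet c l ⊆ cubeSet c' l' := by
  intro x hx i
  have := abs_sub_le (x i) (c i) (c' i)
  have h2 := hx i
  have h3 := h i
  linarith

lemma center_bound (n : ℤ) (k : ℕ) (m : ℤ) :
    |(2:ℝ) ^ n * (m + 1 / 2) - (2:ℝ) ^ (n + (k:ℤ)) * ((m / 2 ^ k : ℤ) + 1 / 2)|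
      ≤ ((2:ℝ) ^ (n + (k:ℤ)) - 2 ^ n) / 2 := by
  have h2n : (0:ℝ) < 2 ^ n := zpow_pos (by norm_num) n
  have h2k : (0:ℝ) < (2:ℝ) ^ k := by positivity
  have hadd : (2:ℝ) ^ (n + (k:ℤ)) = 2 ^ n * 2 ^ k := by
    rw [zpow_add₀ (by norm_num : (2:ℝ) ≠ 0), zpow_natCast]
  have hm : (m : ℝ) = 2 ^ k * ((m / 2 ^ k : ℤ) : ℝ) + ((m % 2 ^ k : ℤ) : ℝ) := by
    exact_mod_cast (congrArg (Int.cast : ℤ → ℝ) (Int.mul_ediv_add_emod m (2 ^ k)).symm)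
  have hr0 : (0:ℝ) ≤ ((m % 2 ^ k : ℤ) : ℝ) := by
    exact_mod_cast Int.emod_nonneg m (by positivity)
  have hr1 : ((m % 2 ^ k : ℤ) : ℝ) ≤ 2 ^ k - 1 := by
    have := Int.emod_lt_of_pos m (show (0:ℤ) < 2 ^ k by positivity)
    have : (m % 2 ^ k : ℤ) ≤ 2 ^ k - 1 := by omega
    exact_mod_cast this
  rw [hadd, hm, abs_le]
  constructor <;>
    nlinarith [mul_nonneg h2n.le hr0, mul_le_mul_of_nonneg_left hr1 h2n.le,
      mul_pos h2n h2k]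

lemma ratio_eq' (n : ℤ) (k : ℕ) :
    ratio (3 * (2:ℝ) ^ n) (3 * (2:ℝ) ^ (n + (k:ℤ))) = k := by
  have h2n : ((2:ℝ) ^ n) ≠ 0 := zpow_ne_zero n (by norm_num)
  have h : (3 * (2:ℝ) ^ (n + (k:ℤ))) / (3 * 2 ^ n) = (2:ℝ) ^ ((k:ℝ)) := by
    rw [zpow_add₀ (by norm_num : (2:ℝ) ≠ 0), zpow_natCast, Real.rpow_natCast]
    field_simp
  rw [ratio, h, Real.logb_rpow (by norm_num) (by norm_num), abs_of_nonneg (by positivity)]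


/-- Selected cubes are doubling: if `Q ∈ 𝒟_sel(μ)` then `μ(MQ) ≤ C M^{s+ε} μ(Q)`. -/
theorem sel_doubling (d : ℕ) (s : ℝ) (hs : s ∈ Set.Ioo 0 (d : ℝ)) (ε : ℝ) (hε : 0 < ε) :
    ∃ C : ℝ, 0 < C ∧
      ∀ μ : Measure (Pt d), IsLocallyFiniteMeasure μ →
        ∀ Q ∈ Dsel μ s ε, ∀ M : ℝ, 1 < M →
          μ (cubeSet Q.1 (M * Q.2)) ≤ ENNReal.ofReal (C * M ^ (s + ε)) * μ (cubeSet Q.1 Q.2) := by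
  have hsε : (0:ℝ) < s + ε := by have := hs.1; linarith
  refine ⟨4 ^ (s + ε), by positivity, ?_⟩
  intro μ hμ Q hQ M hM
  obtain ⟨⟨n, m, hl, hc⟩, hnd⟩ := hQ
  have hM0 : (0:ℝ) < M := by linarith
  -- choice of the level k
  set x : ℝ := Real.logb 2 M with hxdef
  have hx0 : 0 ≤ x := Real.logb_nonneg (by norm_num) hM.le
  set k : ℕ := ⌈x⌉₊ + 1 with hk
  have hMx : (2:ℝ) ^ x = M := Real.rpow_logb (by norm_num) (by norm_num) hM0
  have hceil : (2:ℝ) ^ (⌈x⌉₊ : ℕ) = (2:ℝ) ^ ((⌈x⌉₊ : ℕ) : ℝ) := (Real.rpow_natCast 2 _).symm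
  have h2k_ge : 2 * M ≤ (2:ℝ) ^ k := by
    have h2 : (2:ℝ) ^ x ≤ (2:ℝ) ^ ((⌈x⌉₊ : ℕ) : ℝ) :=
      Real.rpow_le_rpow_of_exponent_le (by norm_num) (Nat.le_ceil _)
    rw [← hceil] at h2
    rw [hk, pow_succ]
    nlinarith [hMx]
  have h2k_le : (2:ℝ) ^ k ≤ 4 * M := by
    have h2 : ((⌈x⌉₊ : ℕ) : ℝ) ≤ x + 1 := (Nat.ceil_lt_add_one hx0).le
    have h3 : (2:ℝ) ^ ((⌈x⌉₊ : ℕ) : ℝ) ≤ (2:ℝ) ^ (x + 1) :=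
      Real.rpow_le_rpow_of_exponent_le (by norm_num) h2
    rw [← hceil, Real.rpow_add (by norm_num), hMx, Real.rpow_one] at h3
    rw [hk, pow_succ]
    nlinarith
  have h2n : (0:ℝ) < 2 ^ n := zpow_pos (by norm_num) n
  have h2kp : (0:ℝ) < (2:ℝ) ^ k := by positivity
  have hadd : (2:ℝ) ^ (n + (k:ℤ)) = 2 ^ n * 2 ^ k := by
    rw [zpow_add₀ (by norm_num : (2:ℝ) ≠ 0), zpow_natCast]
  have h2nk : (0:ℝ) < (2:ℝ) ^ (n + (k:ℤ)) := zpow_pos (by norm_num) _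
  -- the ancestor cube
  set c' : Fin d → ℝ := fun i => (2:ℝ) ^ (n + (k:ℤ)) * (((m i / 2 ^ k : ℤ) : ℝ) + 1 / 2)
    with hc'def
  set Q' : (Fin d → ℝ) × ℝ := (c', 3 * (2:ℝ) ^ (n + (k:ℤ))) with hQ'def
  have hQ't : Q' ∈ triples d := ⟨n + (k:ℤ), fun i => m i / 2 ^ k, rfl, fun i => rfl⟩
  have hne : Q' ≠ Q := by
    intro h
    have h1 : (3:ℝ) * 2 ^ (n + (k:ℤ)) = 3 * 2 ^ n := by
      rw [← hl]; exact congrArg Prod.snd h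
    rw [hadd] at h1
    nlinarith
  have hcd : ∀ i, |Q.1 i - c' i| ≤ ((2:ℝ) ^ (n + (k:ℤ)) - 2 ^ n) / 2 := by
    intro i
    rw [hc i]
    exact center_bound n k (m i)
  have h2le : (2:ℝ) ^ n ≤ 2 ^ (n + (k:ℤ)) := by
    rw [hadd]; nlinarith
  -- Q ⊆ Q'
  have hsub1 : cubeSet Q.1 Q.2 ⊆ cubeSet Q'.1 Q'.2 := by
    apply cube_subset
    intro i
    have := hcd i
    rw [hl]
    show |Q.1 i - c' i| + 3 * 2 ^ n / 2 ≤ 3 * 2 ^ (n + (k:ℤ)) / 2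
    linarith
  -- MQ ⊆ Q'
  have hsub2 : cubeSet Q.1 (M * Q.2) ⊆ cubeSet c' (3 * (2:ℝ) ^ (n + (k:ℤ))) := by
    apply cube_subset
    intro i
    have := hcd i
    rw [hl]
    have hM3 : 3 * M * 2 ^ n ≤ 2 * 2 ^ (n + (k:ℤ)) := by
      rw [hadd]
      nlinarith [mul_le_mul_of_nonneg_left h2k_ge h2n.le]
    nlinarith
  -- non-domination gives the density bound
  have hdens : DensR μ s Q' < (2:ℝ) ^ (ε * ratio Q.2 Q'.2) * DensR μ s Q := by
    by_contra h
    exact hnd ⟨Q', hQ't, hne, hsub1, not_lt.1 h⟩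
  have hratio : ratio Q.2 Q'.2 = k := by
    rw [hl]
    exact ratio_eq' n k
  rw [hratio] at hdens
  -- unfold the densities
  set A : ℝ := (μ (cubeSet c' (3 * (2:ℝ) ^ (n + (k:ℤ))))).toReal with hA
  set B : ℝ := (μ (cubeSet Q.1 Q.2)).toReal with hB
  have hA0 : 0 ≤ A := ENNReal.toReal_nonneg
  have hB0 : 0 ≤ B := ENNReal.toReal_nonneg
  have hRpos : (0:ℝ) < (3 * (2:ℝ) ^ n) ^ s := Real.rpow_pos_of_pos (by positivity) s
  have hPpos : (0:ℝ) < (3 * (2:ℝ) ^ (n + (k:ℤ))) ^ s := Real.rpow_pos_of_pos (by positivity) s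
  have hdens' : A / (3 * (2:ℝ) ^ (n + (k:ℤ))) ^ s
      < (2:ℝ) ^ (ε * (k:ℝ)) * (B / (3 * (2:ℝ) ^ n) ^ s) := by
    have e1 : DensR μ s Q' = A / (3 * (2:ℝ) ^ (n + (k:ℤ))) ^ s := rfl
    have e2 : DensR μ s Q = B / (3 * (2:ℝ) ^ n) ^ s := by
      rw [DensR, ← hB, hl]
    rw [e1, e2] at hdens
    exact hdens
  -- turn the density bound into a measure bound
  have hP : (3 * (2:ℝ) ^ (n + (k:ℤ))) ^ s = (3 * (2:ℝ) ^ n) ^ s * ((2:ℝ) ^ k) ^ s := by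
    rw [hadd, ← Real.mul_rpow (by positivity) (by positivity)]
    ring_nf
  have hT : (2:ℝ) ^ (ε * (k:ℝ)) = ((2:ℝ) ^ k) ^ ε := by
    rw [← Real.rpow_natCast 2 k, ← Real.rpow_mul (by norm_num)]
    rw [mul_comm]
  have key : A < B * ((2:ℝ) ^ k) ^ (s + ε) := by
    rw [div_lt_iff₀ hPpos] at hdens'
    rw [hP] at hdens'
    have : (2:ℝ) ^ (ε * (k:ℝ)) * (B / (3 * (2:ℝ) ^ n) ^ s) * ((3 * (2:ℝ) ^ n) ^ s * ((2:ℝ) ^ k) ^ s)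
        = B * (((2:ℝ) ^ k) ^ ε * ((2:ℝ) ^ k) ^ s) := by
      rw [hT]; field_simp
    rw [this] at hdens'
    rw [Real.rpow_add h2kp]
    calc A < B * (((2:ℝ) ^ k) ^ ε * ((2:ℝ) ^ k) ^ s) := hdens'
      _ = B * (((2:ℝ) ^ k) ^ s * ((2:ℝ) ^ k) ^ ε) := by ring
  have hbound : ((2:ℝ) ^ k) ^ (s + ε) ≤ 4 ^ (s + ε) * M ^ (s + ε) := by
    rw [← Real.mul_rpow (by norm_num) hM0.le]
    exact Real.rpow_le_rpow (by positivity) h2k_le hsε.le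
  have key2 : A ≤ (4 ^ (s + ε) * M ^ (s + ε)) * B := by
    calc A ≤ B * ((2:ℝ) ^ k) ^ (s + ε) := key.le
      _ ≤ B * (4 ^ (s + ε) * M ^ (s + ε)) := by
          exact mul_le_mul_of_nonneg_left hbound hB0
      _ = (4 ^ (s + ε) * M ^ (s + ε)) * B := by ring
  -- finish in ENNReal
  have hfin' : μ (cubeSet c' (3 * (2:ℝ) ^ (n + (k:ℤ)))) ≠ ⊤ := (cube_meas_lt_top μ _ _).ne
  have hfinQ : μ (cubeSet Q.1 Q.2) ≠ ⊤ := (cube_meas_lt_top μ _ _).ne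
  calc μ (cubeSet Q.1 (M * Q.2)) ≤ μ (cubeSet c' (3 * (2:ℝ) ^ (n + (k:ℤ)))) :=
        measure_mono hsub2
    _ = ENNReal.ofReal A := (ENNReal.ofReal_toReal hfin').symm
    _ ≤ ENNReal.ofReal ((4 ^ (s + ε) * M ^ (s + ε)) * B) := ENNReal.ofReal_le_ofReal key2
    _ = ENNReal.ofReal (4 ^ (s + ε) * M ^ (s + ε)) * ENNReal.ofReal B := by
        rw [ENNReal.ofReal_mul (by positivity)]
    _ = ENNReal.ofReal (4 ^ (s + ε) * M ^ (s + ε)) * μ (cubeSet Q.1 Q.2) := by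
        rw [hB, ENNReal.ofReal_toReal hfinQ]
end
end

section
/- Suppose sup_{Q ∈ 𝒟} D_μ(Q) < ∞. Then every cube Q ∈ 𝒟 ∖ 𝒟_sel(μ) with μ(Q) > 0 is dominated from above by some cube in 𝒟_sel(μ). -/
open MeasureTheory Metric Set Filter ENNReal
noncomputable section

namespace DomProof

variable {d : ℕ}

lemma proj_subset {c c' : Fin d → ℝ} {l l' : ℝ}
    (h : cubeSet c l ⊆ cubeSet c' l') (i : Fin d) (hl : 0 < l) :
    Set.Ioo (c i - l/2) (c i + l/2) ⊆ Set.Ioo (c' i - l'/2) (c' i + l'/2) := by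
  intro z hz
  have hx : (WithLp.toLp 2 (fun j => if j = i then z else c j) : Pt d) ∈ cubeSet c l := by
    intro j
    dsimp only [WithLp.ofLp_toLp]
    split_ifs with hj
    · rw [abs_sub_lt_iff, hj]
      exact ⟨by linarith [hz.2], by linarith [hz.1]⟩
    · simp only [sub_self, abs_zero]
      linarith
  have h2 : |z - c' i| < l' / 2 := by simpa using h hx i
  rw [abs_sub_lt_iff] at h2
  exact ⟨by linarith [h2.2], by linarith [h2.1]⟩

lemma len_le (hd : 0 < d) {c c' : Fin d → ℝ} {l l' : ℝ} (hl : 0 < l)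
    (h : cubeSet c l ⊆ cubeSet c' l') : l ≤ l' := by
  set i : Fin d := ⟨0, hd⟩
  have h2 := (Set.Ioo_subset_Ioo_iff (by linarith : c i - l/2 < c i + l/2)).mp
    (proj_subset h i hl)
  linarith [h2.1, h2.2]

lemma center_eq {c c' : Fin d → ℝ} {l : ℝ} (hl : 0 < l)
    (h : cubeSet c l ⊆ cubeSet c' l) : c = c' := by
  funext i
  have h2 := (Set.Ioo_subset_Ioo_iff (by linarith : c i - l/2 < c i + l/2)).mp
    (proj_subset h i hl)
  linarith [h2.1, h2.2]

lemma meas_cube_lt_top (μ : Measure (Pt d)) [IsLocallyFiniteMeasure μ]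
    (c : Fin d → ℝ) (l : ℝ) : μ (cubeSet c l) < ⊤ := by
  have hb : Bornology.IsBounded (cubeSet c l) := by
    rw [Metric.isBounded_iff]
    refine ⟨Real.sqrt ((d : ℝ) * l ^ 2), fun x hx y hy => ?_⟩
    rw [EuclideanSpace.dist_eq]
    apply Real.sqrt_le_sqrt
    calc ∑ i, dist (x i) (y i) ^ 2 ≤ ∑ _i : Fin d, l ^ 2 := by
          apply Finset.sum_le_sum
          intro i _
          have h1 := hx i
          have h2 := hy i
          have hdist : dist (x i) (y i) ≤ l := by
            rw [Real.dist_eq]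
            calc |x i - y i| ≤ |x i - c i| + |c i - y i| := abs_sub_le _ _ _
              _ = |x i - c i| + |y i - c i| := by rw [abs_sub_comm (c i)]
              _ ≤ l := by linarith
          nlinarith [dist_nonneg (x := x i) (y := y i)]
      _ = (d : ℝ) * l ^ 2 := by
          rw [Finset.sum_const, Finset.card_univ, Fintype.card_fin, nsmul_eq_mul]
  calc μ (cubeSet c l) ≤ μ (closure (cubeSet c l)) := measure_mono subset_closure
    _ < ⊤ := hb.isCompact_closure.measure_lt_top

lemma densR_pos {μ : Measure (Pt d)} [IsLocallyFiniteMeasure μ] {s : ℝ}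
    {Q : (Fin d → ℝ) × ℝ} (hl : 0 < Q.2) (hμ : 0 < μ (cubeSet Q.1 Q.2)) :
    0 < DensR μ s Q :=
  div_pos (ENNReal.toReal_pos hμ.ne' (meas_cube_lt_top μ Q.1 Q.2).ne)
    (Real.rpow_pos_of_pos hl s)

lemma densR_nonneg {μ : Measure (Pt d)} {s : ℝ} {Q : (Fin d → ℝ) × ℝ} (hl : 0 < Q.2) :
    0 ≤ DensR μ s Q :=
  div_nonneg ENNReal.toReal_nonneg (Real.rpow_pos_of_pos hl s).le

lemma ratio_eq {l l' : ℝ} (hl : 0 < l) (hll : l ≤ l') :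
    ratio l l' = Real.logb 2 (l' / l) :=
  abs_of_nonneg (Real.logb_nonneg one_lt_two ((one_le_div hl).2 hll))

lemma ratio_add {l l'' l' : ℝ} (hl : 0 < l) (h1 : l ≤ l'') (h2 : l'' ≤ l') :
    ratio l l' = ratio l l'' + ratio l'' l' := by
  have hl'' : 0 < l'' := lt_of_lt_of_le hl h1
  have hl' : 0 < l' := lt_of_lt_of_le hl'' h2
  rw [ratio_eq hl (h1.trans h2), ratio_eq hl h1, ratio_eq hl'' h2,
    show l' / l = (l' / l'') * (l'' / l) by field_simp,
    Real.logb_mul (by positivity) (by positivity), add_comm]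

lemma triples_len_pos {Q : (Fin d → ℝ) × ℝ} (hQ : Q ∈ triples d) : 0 < Q.2 := by
  obtain ⟨n, m, hn, -⟩ := hQ
  rw [hn]; positivity

lemma dom_trans {μ : Measure (Pt d)} {s ε : ℝ} (hd : 0 < d) (hε : 0 ≤ ε)
    {Q Q'' Q' : (Fin d → ℝ) × ℝ} (hl : 0 < Q.2)
    (h1 : DomAbove μ s ε Q'' Q) (h2 : DomAbove μ s ε Q' Q'') :
    DomAbove μ s ε Q' Q := by
  obtain ⟨hs1, hd1⟩ := h1
  obtain ⟨hs2, hd2⟩ := h2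
  have hll : Q.2 ≤ Q''.2 := len_le hd hl hs1
  have hll2 : Q''.2 ≤ Q'.2 := len_le hd (lt_of_lt_of_le hl hll) hs2
  refine ⟨hs1.trans hs2, ?_⟩
  rw [ratio_add hl hll hll2, mul_add, Real.rpow_add two_pos]
  calc (2:ℝ) ^ (ε * ratio Q.2 Q''.2) * 2 ^ (ε * ratio Q''.2 Q'.2) * DensR μ s Q
      = 2 ^ (ε * ratio Q''.2 Q'.2) * (2 ^ (ε * ratio Q.2 Q''.2) * DensR μ s Q) := by ring
    _ ≤ 2 ^ (ε * ratio Q''.2 Q'.2) * DensR μ s Q'' := by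
        apply mul_le_mul_of_nonneg_left hd1 (Real.rpow_nonneg two_pos.le _)
    _ ≤ DensR μ s Q' := hd2

lemma log2_ne : Real.log 2 ≠ 0 := by
  have := Real.log_pos one_lt_two
  linarith

lemma ratio_ge_one (hd : 0 < d) {Q Q' : (Fin d → ℝ) × ℝ}
    (hQ : Q ∈ triples d) (hQ' : Q' ∈ triples d) (hne : Q' ≠ Q)
    (hsub : cubeSet Q.1 Q.2 ⊆ cubeSet Q'.1 Q'.2) : 1 ≤ ratio Q.2 Q'.2 := by
  obtain ⟨n, m, hn, hm⟩ := hQ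
  obtain ⟨n', m', hn', hm'⟩ := hQ'
  have hl : 0 < Q.2 := by rw [hn]; positivity
  have hcalc : ratio Q.2 Q'.2 = |((n' - n : ℤ) : ℝ)| := by
    rw [ratio, hn, hn']
    have : (3 * (2:ℝ) ^ n') / (3 * 2 ^ n) = 2 ^ (n' - n) := by
      rw [zpow_sub₀ (two_ne_zero)]
      field_simp
    rw [this, Real.logb, Real.log_zpow, Int.cast_sub, mul_div_assoc,
      div_self log2_ne, mul_one]
  rcases eq_or_ne n' n with h | h
  · exfalso
    have hlen : Q'.2 = Q.2 := by rw [hn, hn', h]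
    have hc : Q.1 = Q'.1 := center_eq hl (hlen ▸ hsub)
    exact hne (Prod.ext hc.symm hlen)
  · rw [hcalc]
    have h1 : (1:ℤ) ≤ |n' - n| := Int.one_le_abs (by omega)
    calc (1:ℝ) = ((1:ℤ):ℝ) := by norm_num
      _ ≤ ((|n' - n| : ℤ) : ℝ) := by exact_mod_cast h1
      _ = |((n' - n : ℤ) : ℝ)| := by rw [Int.cast_abs]

end DomProof

open DomProof

/-- If the densities are uniformly bounded, every non-selected cube of positive measure is
dominated from above by a selected cube. -/
theorem dominated_by_selected (d : ℕ) (s : ℝ) (hs : s ∈ Set.Ioo 0 (d : ℝ)) (ε : ℝ) (hε : 0 < ε)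
    (μ : Measure (Pt d)) (hloc : IsLocallyFiniteMeasure μ)
    (hsup : ∃ M : ℝ, ∀ Q ∈ triples d, DensR μ s Q ≤ M) :
    ∀ Q ∈ triples d \ Dsel μ s ε, 0 < μ (cubeSet Q.1 Q.2) →
      ∃ Q' ∈ Dsel μ s ε, Q' ≠ Q ∧ DomAbove μ s ε Q' Q := by
  haveI := hloc
  obtain ⟨M, hM⟩ := hsup
  have hd0 : 0 < d := by
    have : (0:ℝ) < d := lt_trans hs.1 hs.2
    exact_mod_cast this
  have h2e : 1 < (2:ℝ) ^ ε := Real.one_lt_rpow_iff_of_pos two_pos |>.2 (Or.inl ⟨one_lt_two, hε⟩)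
  have key : ∀ k : ℕ, ∀ Q ∈ triples d, 0 < μ (cubeSet Q.1 Q.2) →
      M < 2 ^ (ε * k) * DensR μ s Q →
      Q ∈ Dsel μ s ε ∨ ∃ Q' ∈ Dsel μ s ε, Q' ≠ Q ∧ DomAbove μ s ε Q' Q := by
    intro k
    induction k with
    | zero =>
        intro Q hQ _ hMlt
        rw [Nat.cast_zero, mul_zero, Real.rpow_zero, one_mul] at hMlt
        exact absurd (hM Q hQ) (not_le.2 hMlt)
    | succ k ih =>
        intro Q hQ hμQ hMlt
        by_cases hsel : Q ∈ Dsel μ s ε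
        · exact Or.inl hsel
        right
        have hQ2 : 0 < Q.2 := triples_len_pos hQ
        obtain ⟨Q'', hQ''t, hne'', hdom''⟩ :
            ∃ Q'' ∈ triples d, Q'' ≠ Q ∧ DomAbove μ s ε Q'' Q := by
          by_contra h
          exact hsel ⟨hQ, h⟩
        have hsub := hdom''.1
        have hμQ'' : 0 < μ (cubeSet Q''.1 Q''.2) := lt_of_lt_of_le hμQ (measure_mono hsub)
        have hDQpos : 0 < DensR μ s Q := densR_pos hQ2 hμQ
        have hr : 1 ≤ ratio Q.2 Q''.2 := ratio_ge_one hd0 hQ hQ''t hne'' hsub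
        have hgrow : 2 ^ ε * DensR μ s Q ≤ DensR μ s Q'' := by
          refine le_trans ?_ hdom''.2
          apply mul_le_mul_of_nonneg_right _ hDQpos.le
          apply Real.rpow_le_rpow_of_exponent_le one_lt_two.le
          exact le_mul_of_one_le_right hε.le hr
        have hMlt'' : M < 2 ^ (ε * k) * DensR μ s Q'' := by
          calc M < 2 ^ (ε * ((k:ℕ)+1 : ℕ)) * DensR μ s Q := hMlt
            _ = 2 ^ (ε * k) * (2 ^ ε * DensR μ s Q) := by
                rw [show ε * (((k:ℕ)+1 : ℕ) : ℝ) = ε * k + ε by push_cast; ring,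
                  Real.rpow_add two_pos, mul_assoc]
            _ ≤ 2 ^ (ε * k) * DensR μ s Q'' :=
                mul_le_mul_of_nonneg_left hgrow (Real.rpow_nonneg two_pos.le _)
        rcases ih Q'' hQ''t hμQ'' hMlt'' with hsel'' | ⟨Q', hQ', hne', hdom'⟩
        · exact ⟨Q'', hsel'', hne'', hdom''⟩
        · refine ⟨Q', hQ', ?_, dom_trans hd0 hε.le hQ2 hdom'' hdom'⟩
          intro he
          have hQ''2 : 0 < Q''.2 := triples_len_pos hQ''t
          have hD2 : DensR μ s Q'' ≤ DensR μ s Q' := by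
            refine le_trans ?_ hdom'.2
            apply le_mul_of_one_le_left (densR_nonneg hQ''2)
            apply Real.one_le_rpow one_le_two
            exact mul_nonneg hε.le (abs_nonneg _)
          have hlt : DensR μ s Q < DensR μ s Q' := by
            nlinarith [hdom''.2, hgrow]
          rw [he] at hlt
          exact lt_irrefl _ hlt
  intro Q hQ hμQ
  have hQ2 : 0 < Q.2 := triples_len_pos hQ.1
  have hDQpos : 0 < DensR μ s Q := densR_pos hQ2 hμQ
  obtain ⟨k, hk⟩ := pow_unbounded_of_one_lt (M / DensR μ s Q) h2e
  have hMlt : M < 2 ^ (ε * k) * DensR μ s Q := by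
    have h1 := (div_lt_iff₀ hDQpos).1 hk
    have h2 : ((2:ℝ) ^ ε) ^ k = 2 ^ (ε * (k:ℝ)) := by
      rw [← Real.rpow_natCast ((2:ℝ) ^ ε) k, ← Real.rpow_mul two_pos.le]
    rw [h2] at h1
    linarith
  rcases key k Q hQ.1 hμQ hMlt with h | h
  · exact absurd h hQ.2
  · exact h
end
end

section
/- (Upward domination lemma) Suppose sup_{Q ∈ 𝒟} D_μ(Q) < ∞. Then there is a constant c(ε) > 0, depending only on d, s, ε, such that Σ_{Q ∈ 𝒟_sel(μ)} D_μ(Q)² μ(Q) ≥ c(ε) Σ_{Q ∈ 𝒟} D_μ(Q)² μ(Q). -/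
open MeasureTheory Metric Set Filter ENNReal
noncomputable section

namespace UpDom

variable {d : ℕ}

/-- center of the lattice triple indexed by (n, m) -/
def ctr (n : ℤ) (m : Fin d → ℤ) : Fin d → ℝ := fun i => (2:ℝ) ^ n * (m i + 1 / 2)

/-- parametrization of the lattice -/
def P (d : ℕ) (p : ℤ × (Fin d → ℤ)) : (Fin d → ℝ) × ℝ := (ctr p.1 p.2, 3 * (2:ℝ) ^ p.1)

lemma triples_eq_range : triples d = Set.range (P d) := by
  ext q
  constructor
  · rintro ⟨n, m, h1, h2⟩
    exact ⟨(n, m), Prod.ext (funext fun i => (h2 i).symm) h1.symm⟩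
  · rintro ⟨⟨n, m⟩, rfl⟩
    exact ⟨n, m, rfl, fun i => rfl⟩

lemma P_injective : Function.Injective (P d) := by
  rintro ⟨n, m⟩ ⟨n', m'⟩ h
  have h2 : (3:ℝ) * 2 ^ n = 3 * 2 ^ n' := congrArg Prod.snd h
  have hn : n = n' := by
    have : (2:ℝ) ^ n = 2 ^ n' := by linarith
    exact zpow_right_injective₀ (by norm_num) (by norm_num) this
  subst hn
  have h1 : ctr n m = ctr n m' := congrArg Prod.fst h
  have hm : m = m' := by
    funext i
    have := congrFun h1 i
    simp only [ctr] at this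
    have h2n : (2:ℝ) ^ n ≠ 0 := by positivity
    have : ((m i : ℝ) + 1/2) = ((m' i : ℝ) + 1/2) := mul_left_cancel₀ h2n this
    have hmm : (m i : ℝ) = m' i := by linarith
    exact_mod_cast hmm
  rw [hm]

lemma mem_cubeSet {c : Fin d → ℝ} {l : ℝ} {x : Pt d} :
    x ∈ cubeSet c l ↔ ∀ i, |x i - c i| < l / 2 := Iff.rfl

lemma cubeSet_subset_coord {c c' : Fin d → ℝ} {l l' : ℝ} (hl : 0 < l)
    (h : cubeSet c l ⊆ cubeSet c' l') (i : Fin d) :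
    Set.Ioo (c i - l / 2) (c i + l / 2) ⊆ Set.Ioo (c' i - l' / 2) (c' i + l' / 2) := by
  intro t ht
  classical
  set x : Pt d := WithLp.toLp 2 (fun j => if j = i then t else c j : Fin d → ℝ) with hx
  have hxmem : x ∈ cubeSet c l := by
    intro j
    by_cases hj : j = i
    · subst hj
      have : x j = t := by simp [hx]
      rw [this]
      rw [abs_lt]
      constructor <;> [linarith [ht.1]; linarith [ht.2]]
    · have : x j = c j := by simp [hx, hj]
      rw [this]
      simp only [sub_self, abs_zero]
      linarith
  have hx' := h hxmem i
  have hxi : x i = t := by simp [hx]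
  rw [hxi, abs_lt] at hx'
  exact ⟨by linarith [hx'.1], by linarith [hx'.2]⟩

lemma side_le_of_subset (hd : 0 < d) {c c' : Fin d → ℝ} {l l' : ℝ} (hl : 0 < l)
    (h : cubeSet c l ⊆ cubeSet c' l') : l ≤ l' := by
  have i : Fin d := ⟨0, hd⟩
  have hIoo := cubeSet_subset_coord hl h i
  rw [Set.Ioo_subset_Ioo_iff (by linarith)] at hIoo
  linarith [hIoo.1, hIoo.2]

lemma center_eq_of_subset {c c' : Fin d → ℝ} {l : ℝ} (hl : 0 < l)
    (h : cubeSet c l ⊆ cubeSet c' l) : c = c' := by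
  funext i
  have hIoo := cubeSet_subset_coord hl h i
  rw [Set.Ioo_subset_Ioo_iff (by linarith)] at hIoo
  have := hIoo.1; have := hIoo.2
  linarith


lemma ratio_eq (n n' : ℤ) : ratio (3 * (2:ℝ) ^ n) (3 * (2:ℝ) ^ n') = |(n' - n : ℤ)| := by
  have h1 : (3 * (2:ℝ) ^ n') / (3 * 2 ^ n) = (2:ℝ) ^ (n' - n) := by
    rw [zpow_sub₀ (by norm_num : (2:ℝ) ≠ 0)]
    field_simp
  rw [ratio, h1]
  rw [show ((2:ℝ) ^ (n' - n) = (2:ℝ) ^ ((n' - n : ℤ) : ℝ)) from (Real.rpow_intCast 2 _).symm]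
  rw [Real.logb_rpow (by norm_num) (by norm_num)]
  push_cast
  rfl

-- measurability and boundedness
lemma cubeSet_isOpen {c : Fin d → ℝ} {l : ℝ} : IsOpen (cubeSet c l) := by
  have : cubeSet c l = ⋂ i, (fun x : Pt d => |x i - c i|) ⁻¹' Set.Iio (l / 2) := by
    ext x; simp [cubeSet, Set.mem_iInter]
  rw [this]
  exact isOpen_iInter_of_finite fun i =>
    (show Continuous (fun x : Pt d => |x i - c i|) by fun_prop).isOpen_preimage _ isOpen_Iio

lemma cubeSet_measurable {c : Fin d → ℝ} {l : ℝ} : MeasurableSet (cubeSet c l) :=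
  cubeSet_isOpen.measurableSet

lemma cubeSet_subset_closedBall {c : Fin d → ℝ} {l : ℝ} (hl : 0 < l) :
    cubeSet c l ⊆ Metric.closedBall (WithLp.toLp 2 c : Pt d) (Real.sqrt d * l) := by
  intro x hx
  rw [Metric.mem_closedBall, EuclideanSpace.dist_eq]
  have h1 : ∑ i, dist (x i) ((WithLp.toLp 2 c : Pt d) i) ^ 2 ≤ (d : ℝ) * l ^ 2 := by
    calc ∑ i, dist (x i) ((WithLp.toLp 2 c : Pt d) i) ^ 2
        ≤ ∑ _i : Fin d, l ^ 2 := by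
          apply Finset.sum_le_sum
          intro i _
          have hxi := hx i
          have : dist (x i) ((WithLp.toLp 2 c : Pt d) i) = |x i - c i| := by
            simp [Real.dist_eq]
          rw [this]
          nlinarith [abs_nonneg (x i - c i)]
      _ = (d : ℝ) * l ^ 2 := by simp [Finset.sum_const, Finset.card_univ, mul_comm]
  calc Real.sqrt (∑ i, dist (x i) ((WithLp.toLp 2 c : Pt d) i) ^ 2)
      ≤ Real.sqrt ((d:ℝ) * l ^ 2) := Real.sqrt_le_sqrt h1
    _ = Real.sqrt d * l := by
        rw [Real.sqrt_mul (Nat.cast_nonneg d), Real.sqrt_sq hl.le]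

lemma cube_lt_top (μ : Measure (Pt d)) [IsLocallyFiniteMeasure μ] {c : Fin d → ℝ} {l : ℝ}
    (hl : 0 < l) : μ (cubeSet c l) < ⊤ :=
  lt_of_le_of_lt (measure_mono (cubeSet_subset_closedBall hl)) measure_closedBall_lt_top

lemma DensR_nonneg {μ : Measure (Pt d)} {s : ℝ} {p : (Fin d → ℝ) × ℝ} (hp : 0 ≤ p.2) :
    0 ≤ DensR μ s p := div_nonneg ENNReal.toReal_nonneg (Real.rpow_nonneg hp s)

lemma DensR_pos {μ : Measure (Pt d)} [IsLocallyFiniteMeasure μ] {s : ℝ} {p : (Fin d → ℝ) × ℝ}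
    (hp : 0 < p.2) (hμ : μ (cubeSet p.1 p.2) ≠ 0) : 0 < DensR μ s p := by
  apply div_pos _ (Real.rpow_pos_of_pos hp s)
  exact ENNReal.toReal_pos hμ (cube_lt_top μ hp).ne


lemma exists_dominator {μ : Measure (Pt d)} {s ε : ℝ} (hd : 0 < d)
    {Q : (Fin d → ℝ) × ℝ} (hQ : Q ∈ triples d) (hns : Q ∉ Dsel μ s ε) :
    ∃ Q' ∈ triples d, ∃ k : ℕ, 1 ≤ k ∧ cubeSet Q.1 Q.2 ⊆ cubeSet Q'.1 Q'.2 ∧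
      Q'.2 = 2 ^ k * Q.2 ∧ (2:ℝ) ^ (ε * k) * DensR μ s Q ≤ DensR μ s Q' := by
  have hdom : ∃ Q' ∈ triples d, Q' ≠ Q ∧ DomAbove μ s ε Q' Q := by
    by_contra h
    exact hns ⟨hQ, h⟩
  obtain ⟨Q', hQ', hne, hsub, hdens⟩ := hdom
  obtain ⟨n, m, hn2, hn1⟩ := hQ
  obtain ⟨n', m', hn2', hn1'⟩ := hQ'
  have hl : (0:ℝ) < 3 * 2 ^ n := by positivity
  have hsub2 : cubeSet Q.1 (3 * 2 ^ n) ⊆ cubeSet Q'.1 (3 * 2 ^ n') := by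
    rw [← hn2, ← hn2']; exact hsub
  have hle : (3:ℝ) * 2 ^ n ≤ 3 * 2 ^ n' := side_le_of_subset hd (by positivity) hsub2
  have hnn' : n ≤ n' := by
    have : (2:ℝ) ^ n ≤ 2 ^ n' := by linarith
    exact (zpow_le_zpow_iff_right₀ (by norm_num : (1:ℝ) < 2)).mp this
  have hlt : n < n' := by
    rcases lt_or_eq_of_le hnn' with h | h
    · exact h
    · exfalso
      apply hne
      have h22 : Q'.2 = Q.2 := by rw [hn2, hn2', h]
      rw [h22] at hsub
      have hc : Q.1 = Q'.1 :=
        center_eq_of_subset (show (0:ℝ) < Q.2 by rw [hn2]; positivity) hsub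
      exact Prod.ext hc.symm h22
  refine ⟨Q', ⟨n', m', hn2', hn1'⟩, (n' - n).toNat, ?_, hsub, ?_, ?_⟩
  · omega
  · rw [hn2, hn2']
    have ht : (((n' - n).toNat : ℤ)) = n' - n := Int.toNat_of_nonneg (by omega)
    have h2 : (2:ℝ) ^ (n' - n).toNat = (2:ℝ) ^ (n' - n) := by
      rw [← zpow_natCast (2:ℝ) (n' - n).toNat, ht]
    rw [h2, zpow_sub₀ (by norm_num : (2:ℝ) ≠ 0)]
    field_simp
  · have hr : ratio Q.2 Q'.2 = ((n' - n).toNat : ℝ) := by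
      rw [hn2, hn2', ratio_eq]
      have h1 : |n' - n| = n' - n := abs_of_nonneg (by omega)
      have h2 : (((n' - n).toNat : ℤ)) = n' - n := Int.toNat_of_nonneg (by omega)
      rw [h1]
      exact_mod_cast h2.symm
    rw [← hr]
    exact hdens

def GoodRel (μ : Measure (Pt d)) (s ε : ℝ) (R Q : (Fin d → ℝ) × ℝ) : Prop :=
  R ∈ Dsel μ s ε ∧ cubeSet Q.1 Q.2 ⊆ cubeSet R.1 R.2 ∧
    ∃ k : ℕ, R.2 = 2 ^ k * Q.2 ∧ (2:ℝ) ^ (ε * k) * DensR μ s Q ≤ DensR μ s R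

lemma find_good {μ : Measure (Pt d)} {s ε : ℝ} (hd : 0 < d) (hε : 0 < ε) {M : ℝ}
    (hM : ∀ Q ∈ triples d, DensR μ s Q ≤ M) :
    ∀ N : ℕ, ∀ Q ∈ triples d, M < (2:ℝ) ^ (ε * N) * DensR μ s Q →
      ∃ R, GoodRel μ s ε R Q := by
  intro N
  induction N with
  | zero =>
    intro Q hQ hlt
    exfalso
    rw [Nat.cast_zero, mul_zero, Real.rpow_zero, one_mul] at hlt
    exact absurd (hM Q hQ) (not_le.mpr hlt)
  | succ N ih =>
    intro Q hQ hlt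
    by_cases hsel : Q ∈ Dsel μ s ε
    · refine ⟨Q, hsel, subset_rfl, 0, ?_, ?_⟩
      · simp
      · simp [Real.rpow_zero]
    · obtain ⟨Q', hQ', k₁, hk₁, hsub, hside, hdens⟩ := exists_dominator hd hQ hsel
      have hQ2pos : 0 < Q.2 := by obtain ⟨n, m, h2, _⟩ := hQ; rw [h2]; positivity
      have hDQ : 0 ≤ DensR μ s Q := DensR_nonneg hQ2pos.le
      have h2e : (2:ℝ) ^ (ε * (1:ℕ)) ≤ (2:ℝ) ^ (ε * k₁) := by
        apply Real.rpow_le_rpow_left_iff (by norm_num : (1:ℝ) < 2) |>.mpr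
        have h1k : (1:ℝ) ≤ (k₁:ℝ) := by exact_mod_cast hk₁
        push_cast
        nlinarith [hε.le]
      have hlt' : M < (2:ℝ) ^ (ε * N) * DensR μ s Q' := by
        have e1 : (2:ℝ) ^ (ε * (N+1:ℕ)) * DensR μ s Q
            = (2:ℝ) ^ (ε * N) * ((2:ℝ) ^ (ε * (1:ℕ)) * DensR μ s Q) := by
          rw [← mul_assoc, ← Real.rpow_add (by norm_num : (0:ℝ) < 2)]
          push_cast
          ring_nf
        have e2 : (2:ℝ) ^ (ε * (1:ℕ)) * DensR μ s Q ≤ DensR μ s Q' := by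
          calc (2:ℝ) ^ (ε * (1:ℕ)) * DensR μ s Q ≤ (2:ℝ) ^ (ε * k₁) * DensR μ s Q :=
                mul_le_mul_of_nonneg_right h2e hDQ
            _ ≤ DensR μ s Q' := hdens
        calc M < (2:ℝ) ^ (ε * (N+1:ℕ)) * DensR μ s Q := hlt
          _ = (2:ℝ) ^ (ε * N) * ((2:ℝ) ^ (ε * (1:ℕ)) * DensR μ s Q) := e1
          _ ≤ (2:ℝ) ^ (ε * N) * DensR μ s Q' := by
              apply mul_le_mul_of_nonneg_left e2 (by positivity)
      obtain ⟨R, hRsel, hRsub, k₂, hRside, hRdens⟩ := ih Q' hQ' hlt'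
      refine ⟨R, hRsel, hsub.trans hRsub, k₁ + k₂, ?_, ?_⟩
      · rw [hRside, hside, pow_add]; ring
      · have : (2:ℝ) ^ (ε * (k₁ + k₂ : ℕ)) * DensR μ s Q
            = (2:ℝ) ^ (ε * k₂) * ((2:ℝ) ^ (ε * k₁) * DensR μ s Q) := by
          rw [← mul_assoc, ← Real.rpow_add (by norm_num : (0:ℝ) < 2)]
          push_cast
          ring_nf
        rw [this]
        calc (2:ℝ) ^ (ε * k₂) * ((2:ℝ) ^ (ε * k₁) * DensR μ s Q)
            ≤ (2:ℝ) ^ (ε * k₂) * DensR μ s Q' := by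
              apply mul_le_mul_of_nonneg_left hdens (by positivity)
          _ ≤ DensR μ s R := hRdens

lemma exists_good {μ : Measure (Pt d)} {s ε : ℝ} (hd : 0 < d) (hε : 0 < ε) {M : ℝ}
    (hM : ∀ Q ∈ triples d, DensR μ s Q ≤ M) {Q : (Fin d → ℝ) × ℝ} (hQ : Q ∈ triples d)
    (hpos : 0 < DensR μ s Q) : ∃ R, GoodRel μ s ε R Q := by
  have h21 : (1:ℝ) < (2:ℝ) ^ ε := by
    rw [show (1:ℝ) = (2:ℝ) ^ (0:ℝ) from (Real.rpow_zero 2).symm]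
    exact Real.rpow_lt_rpow_left_iff (by norm_num : (1:ℝ) < 2) |>.mpr hε
  obtain ⟨N, hN⟩ := pow_unbounded_of_one_lt (M / DensR μ s Q) h21
  apply find_good hd hε hM N Q hQ
  have : ((2:ℝ) ^ ε) ^ N = (2:ℝ) ^ (ε * N) := by
    rw [← Real.rpow_natCast ((2:ℝ) ^ ε) N, ← Real.rpow_mul (by norm_num : (0:ℝ) ≤ 2)]
  rw [← this]
  exact (div_lt_iff₀ hpos).mp hN


lemma cube_disjoint_of_res {n : ℤ} {m m' : Fin d → ℤ} (hne : m ≠ m')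
    (hres : ∀ i, ((m i : ZMod 3) = (m' i : ZMod 3))) :
    Disjoint (cubeSet (ctr n m) (3 * 2 ^ n)) (cubeSet (ctr n m') (3 * 2 ^ n)) := by
  rw [Set.disjoint_left]
  intro x hx hx'
  obtain ⟨i, hi⟩ := Function.ne_iff.mp hne
  have hdvd : (3:ℤ) ∣ (m i - m' i) := by
    have : ((m i - m' i : ℤ) : ZMod 3) = 0 := by
      push_cast
      rw [hres i]
      ring
    exact_mod_cast (ZMod.intCast_zmod_eq_zero_iff_dvd _ 3).mp this
  have habs : (3:ℤ) ≤ |m i - m' i| := by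
    apply Int.le_of_dvd (abs_pos.mpr (sub_ne_zero.mpr hi))
    exact (dvd_abs _ _).mpr hdvd
  have h1 := hx i
  have h2 := hx' i
  simp only [ctr] at h1 h2
  have hpos : (0:ℝ) < 2 ^ n := by positivity
  have key : |(2:ℝ) ^ n * (m i + 1/2) - 2 ^ n * (m' i + 1/2)| < 3 * 2 ^ n := by
    calc |(2:ℝ) ^ n * (m i + 1/2) - 2 ^ n * (m' i + 1/2)|
        = |((2:ℝ) ^ n * (m i + 1/2) - x i) + (x i - 2 ^ n * (m' i + 1/2))| := by ring_nf
      _ ≤ |(2:ℝ) ^ n * (m i + 1/2) - x i| + |x i - 2 ^ n * (m' i + 1/2)| := abs_add_le _ _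
      _ < 3 * 2 ^ n / 2 + 3 * 2 ^ n / 2 := by
          rw [abs_sub_comm ((2:ℝ) ^ n * (m i + 1/2)) (x i)]
          exact add_lt_add h1 h2
      _ = 3 * 2 ^ n := by ring
  have key2 : (2:ℝ) ^ n * |(m i : ℝ) - (m' i : ℝ)| < 3 * 2 ^ n := by
    calc (2:ℝ) ^ n * |(m i : ℝ) - (m' i : ℝ)| = |(2:ℝ) ^ n * (m i + 1/2) - 2 ^ n * (m' i + 1/2)| := by
          rw [show (2:ℝ) ^ n * (m i + 1/2) - 2 ^ n * (m' i + 1/2) = 2 ^ n * ((m i : ℝ) - m' i) by ring]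
          rw [abs_mul, abs_of_pos hpos]
      _ < 3 * 2 ^ n := key
  have : |(m i : ℝ) - (m' i : ℝ)| < 3 := by
    nlinarith [abs_nonneg ((m i : ℝ) - (m' i : ℝ))]
  have hcast : |((m i - m' i : ℤ) : ℝ)| < 3 := by push_cast; exact this
  rw [← Int.cast_abs] at hcast
  have : |m i - m' i| < 3 := by exact_mod_cast hcast
  omega

open scoped Classical in
lemma overlap (μ : Measure (Pt d)) {A : Set (Pt d)} (hA : MeasurableSet A) (n : ℤ) :
    ∑' m : Fin d → ℤ, (if cubeSet (ctr n m) (3 * 2 ^ n) ⊆ A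
      then μ (cubeSet (ctr n m) (3 * 2 ^ n)) else 0) ≤ 3 ^ d * μ A := by
  classical
  set B : (Fin d → ℤ) → Set (Pt d) := fun m =>
    if cubeSet (ctr n m) (3 * 2 ^ n) ⊆ A then cubeSet (ctr n m) (3 * 2 ^ n) else ∅ with hB
  have hBμ : ∀ m, (if cubeSet (ctr n m) (3 * 2 ^ n) ⊆ A
      then μ (cubeSet (ctr n m) (3 * 2 ^ n)) else 0) = μ (B m) := by
    intro m
    by_cases h : cubeSet (ctr n m) (3 * 2 ^ n) ⊆ A <;> simp [hB, h]
  have hmeas : ∀ m, MeasurableSet (B m) := by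
    intro m
    by_cases h : cubeSet (ctr n m) (3 * 2 ^ n) ⊆ A <;>
      simp [hB, h, cubeSet_measurable, MeasurableSet.empty]
  have hsub : ∀ m, B m ⊆ A := by
    intro m
    by_cases h : cubeSet (ctr n m) (3 * 2 ^ n) ⊆ A <;> simp [hB, h]
  have hdisj : ∀ m m', m ≠ m' → (∀ i, ((m i : ZMod 3) = (m' i : ZMod 3))) →
      Disjoint (B m) (B m') := by
    intro m m' hne hres
    by_cases h : cubeSet (ctr n m) (3 * 2 ^ n) ⊆ A
    · by_cases h' : cubeSet (ctr n m') (3 * 2 ^ n) ⊆ A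
      · simpa [hB, h, h'] using cube_disjoint_of_res hne hres
      · have e : B m' = ∅ := by simp [hB, h']
        rw [e]; exact Set.disjoint_empty _
    · have e : B m = ∅ := by simp [hB, h]
      rw [e]; exact Set.empty_disjoint _
  simp_rw [hBμ]
  have key : ∀ c : Fin d → ZMod 3,
      (∑' m : (fun (m : Fin d → ℤ) (i : Fin d) => ((m i : ZMod 3))) ⁻¹' {c}, μ (B m)) ≤ μ A := by
    intro c
    have hd' : Pairwise (Function.onFun Disjoint fun m : ((fun (m : Fin d → ℤ) (i : Fin d) =>
        ((m i : ZMod 3))) ⁻¹' {c}) => B m) := by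
      rintro ⟨m, hm⟩ ⟨m', hm'⟩ hne
      simp only [Set.mem_preimage, Set.mem_singleton_iff] at hm hm'
      apply hdisj m m' (fun h => hne (Subtype.ext h))
      intro i
      calc (m i : ZMod 3) = c i := congrFun hm i
        _ = (m' i : ZMod 3) := (congrFun hm' i).symm
    rw [← measure_iUnion hd' (fun m => hmeas m)]
    exact measure_mono (Set.iUnion_subset fun m => hsub m)
  calc ∑' m : Fin d → ℤ, μ (B m)
      = ∑' (c : Fin d → ZMod 3), ∑' m : (fun (m : Fin d → ℤ) (i : Fin d) =>
          ((m i : ZMod 3))) ⁻¹' {c}, μ (B m) := (ENNReal.tsum_fiberwise _ _).symm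
    _ ≤ ∑' (_c : Fin d → ZMod 3), μ A := ENNReal.tsum_le_tsum key
    _ = 3 ^ d * μ A := by
        rw [tsum_fintype]
        rw [Finset.sum_const, nsmul_eq_mul]
        congr 1
        rw [Finset.card_univ, Fintype.card_fun]
        simp

/-- The energy of a single cube. -/
def term {d : ℕ} (μ : Measure (Pt d)) (s : ℝ) (Q : (Fin d → ℝ) × ℝ) : ℝ≥0∞ :=
  ENNReal.ofReal (DensR μ s Q ^ 2) * μ (cubeSet Q.1 Q.2)

/-- The comparison constant. -/
def Kc (ε : ℝ) (d : ℕ) : ℝ≥0∞ := 3 ^ d * (1 - ENNReal.ofReal ((2:ℝ) ^ (-(2 * ε))))⁻¹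

lemma main_bound (s ε : ℝ) (hd : 0 < d) (hε : 0 < ε)
    (μ : Measure (Pt d)) [IsLocallyFiniteMeasure μ] (M : ℝ)
    (hM : ∀ Q ∈ triples d, DensR μ s Q ≤ M) :
    ∑' Q : triples d, term μ s ↑Q ≤ Kc ε d * ∑' Q : Dsel μ s ε, term μ s ↑Q := by
  classical
  set r : ℝ := (2:ℝ) ^ (-(2 * ε)) with hrdef
  have hr0 : 0 ≤ r := (Real.rpow_pos_of_pos (by norm_num) _).le
  -- choice of a selected dominating cube
  have hchoice : ∀ p : ℤ × (Fin d → ℤ),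
      ∃ R, μ (cubeSet (P d p).1 (P d p).2) ≠ 0 → GoodRel μ s ε R (P d p) := by
    intro p
    by_cases h : μ (cubeSet (P d p).1 (P d p).2) = 0
    · exact ⟨P d p, fun hc => absurd h hc⟩
    · have hPt : P d p ∈ triples d := triples_eq_range ▸ Set.mem_range_self p
      have hpos : 0 < DensR μ s (P d p) :=
        DensR_pos (show (0:ℝ) < 3 * (2:ℝ) ^ p.1 by positivity) h
      obtain ⟨R, hR⟩ := exists_good hd hε hM hPt hpos
      exact ⟨R, fun _ => hR⟩
  choose g hg using hchoice
  -- fiber bound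
  have hbound : ∀ R : (Fin d → ℝ) × ℝ,
      (∑' p : g ⁻¹' {R}, term μ s (P d ↑p)) ≤
        Kc ε d * Set.indicator (Dsel μ s ε) (term μ s) R := by
    intro R
    by_cases hRsel : R ∈ Dsel μ s ε
    swap
    · have hz : ∀ p : g ⁻¹' {R}, term μ s (P d ↑p) = 0 := by
        rintro ⟨p, hp⟩
        simp only [Set.mem_preimage, Set.mem_singleton_iff] at hp
        by_cases hμ0 : μ (cubeSet (P d p).1 (P d p).2) = 0
        · simp [term, hμ0]
        · exact absurd (hp ▸ (hg p hμ0).1) hRsel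
      rw [ENNReal.tsum_eq_zero.mpr hz, Set.indicator_of_notMem hRsel]
      simp
    · rw [Set.indicator_of_mem hRsel]
      obtain ⟨⟨N, Mv⟩, rfl⟩ : R ∈ Set.range (P d) := triples_eq_range ▸ hRsel.1
      set DR : ℝ := DensR μ s (P d (N, Mv)) with hDR
      set v : ℤ × (Fin d → ℤ) → ℝ≥0∞ := fun q =>
        if q.1 ≤ N ∧ cubeSet (ctr q.1 q.2) (3 * 2 ^ q.1) ⊆
            cubeSet (P d (N, Mv)).1 (P d (N, Mv)).2
        then ENNReal.ofReal (r ^ (N - q.1).toNat * DR ^ 2) *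
          μ (cubeSet (ctr q.1 q.2) (3 * 2 ^ q.1))
        else 0 with hv
      have hpt : ∀ p : ℤ × (Fin d → ℤ),
          Set.indicator (g ⁻¹' {P d (N, Mv)}) (fun q => term μ s (P d q)) p ≤ v p := by
        intro p
        by_cases hp : p ∈ g ⁻¹' {P d (N, Mv)}
        swap
        · rw [Set.indicator_of_notMem hp]; exact zero_le
        · rw [Set.indicator_of_mem hp]
          by_cases hμ0 : μ (cubeSet (P d p).1 (P d p).2) = 0
          · simp [term, hμ0]
          · have hgood := hg p hμ0
            rw [Set.mem_preimage, Set.mem_singleton_iff] at hp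
            rw [hp] at hgood
            obtain ⟨_, hsub, k₀, hside, hdens⟩ := hgood
            have hNeq : (N:ℤ) = (k₀ : ℤ) + p.1 := by
              have h3 : (3:ℝ) * 2 ^ (N:ℤ) = 2 ^ k₀ * (3 * 2 ^ p.1) := hside
              have h2 : (2:ℝ) ^ (N:ℤ) = (2:ℝ) ^ ((k₀:ℤ) + p.1) := by
                rw [zpow_add₀ (by norm_num : (2:ℝ) ≠ 0), zpow_natCast]
                linarith
              exact zpow_right_injective₀ (by norm_num) (by norm_num) h2
            have hnN : p.1 ≤ N := by omega
            have hkval : (N - p.1).toNat = k₀ := by omega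
            have hD0 : 0 ≤ DensR μ s (P d p) :=
              DensR_nonneg (show (0:ℝ) ≤ 3 * (2:ℝ) ^ p.1 by positivity)
            have hb : DensR μ s (P d p) ≤ (2:ℝ) ^ (-(ε * k₀)) * DR := by
              rw [Real.rpow_neg (by norm_num : (0:ℝ) ≤ 2)]
              exact (le_inv_mul_iff₀ (Real.rpow_pos_of_pos (by norm_num) _)).mpr hdens
            have hsq : DensR μ s (P d p) ^ 2 ≤ r ^ k₀ * DR ^ 2 := by
              have h1 : DensR μ s (P d p) ^ 2 ≤ ((2:ℝ) ^ (-(ε * k₀)) * DR) ^ 2 :=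
                pow_le_pow_left₀ hD0 hb 2
              have hexp : ((2:ℝ) ^ (-(ε * (k₀:ℝ)))) ^ 2 = r ^ k₀ := by
                rw [← Real.rpow_natCast ((2:ℝ) ^ (-(ε * (k₀:ℝ)))) 2,
                  ← Real.rpow_mul (by norm_num : (0:ℝ) ≤ 2), hrdef,
                  ← Real.rpow_natCast ((2:ℝ) ^ (-(2 * ε))) k₀,
                  ← Real.rpow_mul (by norm_num : (0:ℝ) ≤ 2)]
                ring_nf
              rw [mul_pow, hexp] at h1
              exact h1
            have hvp : v p = ENNReal.ofReal (r ^ k₀ * DR ^ 2) *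
                μ (cubeSet (ctr p.1 p.2) (3 * 2 ^ p.1)) := by
              rw [hv]
              simp only
              rw [if_pos ⟨hnN, hsub⟩, hkval]
            rw [hvp]
            exact mul_le_mul' (ENNReal.ofReal_le_ofReal hsq) le_rfl
      -- sum of the majorant
      set w : ℤ → ℝ≥0∞ := fun n =>
        if n ≤ N then ENNReal.ofReal (r ^ (N - n).toNat * DR ^ 2) *
          (3 ^ d * μ (cubeSet (P d (N, Mv)).1 (P d (N, Mv)).2)) else 0 with hw
      have hinner : ∀ n : ℤ, (∑' m : Fin d → ℤ, v (n, m)) ≤ w n := by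
        intro n
        by_cases hn : n ≤ N
        · have hrw : ∀ m : Fin d → ℤ, v (n, m) =
              ENNReal.ofReal (r ^ (N - n).toNat * DR ^ 2) *
                (if cubeSet (ctr n m) (3 * 2 ^ n) ⊆
                    cubeSet (P d (N, Mv)).1 (P d (N, Mv)).2
                  then μ (cubeSet (ctr n m) (3 * 2 ^ n)) else 0) := by
            intro m
            rw [hv]
            simp only
            by_cases hc : cubeSet (ctr n m) (3 * 2 ^ n) ⊆
                cubeSet (P d (N, Mv)).1 (P d (N, Mv)).2
            · rw [if_pos ⟨hn, hc⟩, if_pos hc]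
            · rw [if_neg (fun hh => hc hh.2), if_neg hc, mul_zero]
          calc (∑' m : Fin d → ℤ, v (n, m))
              = ENNReal.ofReal (r ^ (N - n).toNat * DR ^ 2) *
                ∑' m : Fin d → ℤ, (if cubeSet (ctr n m) (3 * 2 ^ n) ⊆
                    cubeSet (P d (N, Mv)).1 (P d (N, Mv)).2
                  then μ (cubeSet (ctr n m) (3 * 2 ^ n)) else 0) := by
                simp_rw [hrw]; exact ENNReal.tsum_mul_left
            _ ≤ ENNReal.ofReal (r ^ (N - n).toNat * DR ^ 2) *
                (3 ^ d * μ (cubeSet (P d (N, Mv)).1 (P d (N, Mv)).2)) :=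
                mul_le_mul' le_rfl (overlap μ cubeSet_measurable n)
            _ = w n := by rw [hw]; simp only; rw [if_pos hn]
        · have : ∀ m : Fin d → ℤ, v (n, m) = 0 := by
            intro m
            rw [hv]
            simp only
            rw [if_neg (fun hh => hn hh.1)]
          rw [ENNReal.tsum_eq_zero.mpr this]
          exact zero_le
      have hinj : Function.Injective (fun k : ℕ => N - (k:ℤ)) := by
        intro a b h
        dsimp at h
        omega
      have hsupp : Function.support w ⊆ Set.range (fun k : ℕ => N - (k:ℤ)) := by
        intro n hn
        by_cases hn' : n ≤ N
        · refine ⟨(N - n).toNat, ?_⟩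
          show N - ((N - n).toNat : ℤ) = n
          omega
        · exfalso; apply hn; rw [hw]; simp only; rw [if_neg hn']
      have hwk : ∀ k : ℕ, w (N - (k:ℤ)) = (ENNReal.ofReal r) ^ k *
          (ENNReal.ofReal (DR ^ 2) *
            (3 ^ d * μ (cubeSet (P d (N, Mv)).1 (P d (N, Mv)).2))) := by
        intro k
        rw [hw]
        simp only
        rw [if_pos (by omega : N - (k:ℤ) ≤ N)]
        have hk : (N - (N - (k:ℤ))).toNat = k := by omega
        rw [hk, ENNReal.ofReal_mul (by positivity), ENNReal.ofReal_pow hr0, mul_assoc]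
      calc (∑' p : g ⁻¹' {P d (N, Mv)}, term μ s (P d ↑p))
          = ∑' p : ℤ × (Fin d → ℤ),
              Set.indicator (g ⁻¹' {P d (N, Mv)}) (fun q => term μ s (P d q)) p :=
            tsum_subtype (g ⁻¹' {P d (N, Mv)}) (fun q => term μ s (P d q))
        _ ≤ ∑' p : ℤ × (Fin d → ℤ), v p := ENNReal.tsum_le_tsum hpt
        _ = ∑' n : ℤ, ∑' m : Fin d → ℤ, v (n, m) := ENNReal.tsum_prod'
        _ ≤ ∑' n : ℤ, w n := ENNReal.tsum_le_tsum hinner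
        _ = ∑' n : Set.range (fun k : ℕ => N - (k:ℤ)), w ↑n :=
            (tsum_subtype_eq_of_support_subset hsupp).symm
        _ = ∑' k : ℕ, w (N - (k:ℤ)) := tsum_range w hinj
        _ = (∑' k : ℕ, (ENNReal.ofReal r) ^ k) *
            (ENNReal.ofReal (DR ^ 2) *
              (3 ^ d * μ (cubeSet (P d (N, Mv)).1 (P d (N, Mv)).2))) := by
            simp_rw [hwk]; exact ENNReal.tsum_mul_right
        _ = Kc ε d * term μ s (P d (N, Mv)) := by
            rw [ENNReal.tsum_geometric, Kc, term, ← hDR, ← hrdef]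
            ring
  calc ∑' Q : triples d, term μ s ↑Q
      = ∑' p : ℤ × (Fin d → ℤ), term μ s (P d p) := by
        rw [triples_eq_range]; exact tsum_range _ P_injective
    _ = ∑' R : (Fin d → ℝ) × ℝ, ∑' p : g ⁻¹' {R}, term μ s (P d ↑p) :=
        (ENNReal.tsum_fiberwise _ g).symm
    _ ≤ ∑' R : (Fin d → ℝ) × ℝ, Kc ε d * Set.indicator (Dsel μ s ε) (term μ s) R :=
        ENNReal.tsum_le_tsum hbound
    _ = Kc ε d * ∑' R : (Fin d → ℝ) × ℝ, Set.indicator (Dsel μ s ε) (term μ s) R :=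
        ENNReal.tsum_mul_left
    _ = Kc ε d * ∑' Q : Dsel μ s ε, term μ s ↑Q := by rw [← tsum_subtype]

lemma Kc_ne_zero {ε : ℝ} (d : ℕ) : Kc ε d ≠ 0 := by
  apply mul_ne_zero
  · positivity
  · rw [ENNReal.inv_ne_zero]
    exact (tsub_le_self.trans_lt ENNReal.one_lt_top).ne

lemma Kc_ne_top {ε : ℝ} (hε : 0 < ε) (d : ℕ) : Kc ε d ≠ ⊤ := by
  apply ENNReal.mul_ne_top
  · exact (ENNReal.pow_ne_top (by norm_num))
  · rw [ENNReal.inv_ne_top]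
    have hr1 : (2:ℝ) ^ (-(2 * ε)) < 1 :=
      Real.rpow_lt_one_of_one_lt_of_neg (by norm_num) (by linarith)
    have hq : ENNReal.ofReal ((2:ℝ) ^ (-(2 * ε))) < 1 := by
      rw [← ENNReal.ofReal_one]
      exact ENNReal.ofReal_lt_ofReal_iff_of_nonneg (Real.rpow_pos_of_pos two_pos _).le |>.mpr hr1
    exact (tsub_pos_of_lt hq).ne'

theorem upward_domination (d : ℕ) (s : ℝ) (hs : s ∈ Set.Ioo 0 (d : ℝ)) (ε : ℝ) (hε : 0 < ε) :
    ∃ c : ℝ, 0 < c ∧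
      ∀ μ : Measure (Pt d), IsLocallyFiniteMeasure μ →
        (∃ M : ℝ, ∀ Q ∈ triples d, DensR μ s Q ≤ M) →
        ENNReal.ofReal c *
            ∑' Q : triples d,
              ENNReal.ofReal (DensR μ s Q.1 ^ 2) * μ (cubeSet Q.1.1 Q.1.2) ≤
          ∑' Q : Dsel μ s ε,
            ENNReal.ofReal (DensR μ s Q.1 ^ 2) * μ (cubeSet Q.1.1 Q.1.2) := by
  have hd : 0 < d := by
    have h0 : (0:ℝ) < d := lt_trans hs.1 hs.2
    exact_mod_cast h0
  have hK0 := Kc_ne_zero (ε := ε) d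
  have hKtop := Kc_ne_top hε d
  have htR : 0 < (Kc ε d).toReal := ENNReal.toReal_pos hK0 hKtop
  refine ⟨(Kc ε d).toReal⁻¹, inv_pos.mpr htR, ?_⟩
  intro μ hloc hex
  haveI := hloc
  obtain ⟨M, hM⟩ := hex
  have h := main_bound s ε hd hε μ M hM
  have hc : ENNReal.ofReal ((Kc ε d).toReal⁻¹) * Kc ε d = 1 := by
    rw [ENNReal.ofReal_inv_of_pos htR, ENNReal.ofReal_toReal hKtop,
      ENNReal.inv_mul_cancel hK0 hKtop]
  show ENNReal.ofReal ((Kc ε d).toReal⁻¹) * (∑' Q : triples d, term μ s ↑Q) ≤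
    ∑' Q : Dsel μ s ε, term μ s ↑Q
  calc ENNReal.ofReal ((Kc ε d).toReal⁻¹) * (∑' Q : triples d, term μ s ↑Q)
      ≤ ENNReal.ofReal ((Kc ε d).toReal⁻¹) * (Kc ε d * ∑' Q : Dsel μ s ε, term μ s ↑Q) :=
        mul_le_mul_right h _
    _ = (ENNReal.ofReal ((Kc ε d).toReal⁻¹) * Kc ε d) * ∑' Q : Dsel μ s ε, term μ s ↑Q :=
        (mul_assoc _ _ _).symm
    _ = 1 * ∑' Q : Dsel μ s ε, term μ s ↑Q := by rw [hc]
    _ = ∑' Q : Dsel μ s ε, term μ s ↑Q := one_mul _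

end UpDom

/-- Upward domination lemma: the selected cubes carry a fixed proportion of the dyadic
Wolff energy. -/
theorem upward_domination (d : ℕ) (s : ℝ) (hs : s ∈ Set.Ioo 0 (d : ℝ)) (ε : ℝ) (hε : 0 < ε) :
    ∃ c : ℝ, 0 < c ∧
      ∀ μ : Measure (Pt d), IsLocallyFiniteMeasure μ →
        (∃ M : ℝ, ∀ Q ∈ triples d, DensR μ s Q ≤ M) →
        ENNReal.ofReal c *
            ∑' Q : triples d,
              ENNReal.ofReal (DensR μ s Q.1 ^ 2) * μ (cubeSet Q.1.1 Q.1.2) ≤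
          ∑' Q : Dsel μ s ε,
            ENNReal.ofReal (DensR μ s Q.1 ^ 2) * μ (cubeSet Q.1.1 Q.1.2) := by
  have hd : 0 < d := by
    have h0 : (0:ℝ) < d := lt_trans hs.1 hs.2
    exact_mod_cast h0
  have hK0 := UpDom.Kc_ne_zero (ε := ε) d
  have hKtop := UpDom.Kc_ne_top hε d
  have htR : 0 < (UpDom.Kc ε d).toReal := ENNReal.toReal_pos hK0 hKtop
  refine ⟨(UpDom.Kc ε d).toReal⁻¹, inv_pos.mpr htR, ?_⟩
  intro μ hloc hex
  haveI := hloc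
  obtain ⟨M, hM⟩ := hex
  have h := UpDom.main_bound s ε hd hε μ M hM
  have hc : ENNReal.ofReal ((UpDom.Kc ε d).toReal⁻¹) * UpDom.Kc ε d = 1 := by
    rw [ENNReal.ofReal_inv_of_pos htR, ENNReal.ofReal_toReal hKtop,
      ENNReal.inv_mul_cancel hK0 hKtop]
  show ENNReal.ofReal ((UpDom.Kc ε d).toReal⁻¹) * (∑' Q : triples d, UpDom.term μ s ↑Q) ≤
    ∑' Q : Dsel μ s ε, UpDom.term μ s ↑Q
  calc ENNReal.ofReal ((UpDom.Kc ε d).toReal⁻¹) * (∑' Q : triples d, UpDom.term μ s ↑Q)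
      ≤ ENNReal.ofReal ((UpDom.Kc ε d).toReal⁻¹) *
          (UpDom.Kc ε d * ∑' Q : Dsel μ s ε, UpDom.term μ s ↑Q) :=
        mul_le_mul_right h _
    _ = (ENNReal.ofReal ((UpDom.Kc ε d).toReal⁻¹) * UpDom.Kc ε d) *
          ∑' Q : Dsel μ s ε, UpDom.term μ s ↑Q :=
        (mul_assoc _ _ _).symm
    _ = 1 * ∑' Q : Dsel μ s ε, UpDom.term μ s ↑Q := by rw [hc]
    _ = ∑' Q : Dsel μ s ε, UpDom.term μ s ↑Q := one_mul _
end
end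

section
/- (Downward domination lemma) Suppose sup_{Q ∈ 𝒟} D_μ(Q) < ∞. Then there exists c(ε) > 0 such that Σ_{Q ∈ 𝒟̂_sel(μ)} D_μ(Q)² μ(Q) ≥ c(ε) Σ_{Q ∈ 𝒟_sel(μ)} D_μ(Q)² μ(Q). -/
open MeasureTheory Metric Set Filter ENNReal
noncomputable section

/-- `Q` is dominated from below by the finite bunch `B`: all cubes of the bunch are selected,
have large density relative to `Q`, have disjoint triples contained in `3Q`, and carry a
large portion of the Wolff energy of `Q`. -/
def DomBelow {d : ℕ} (μ : Measure (Pt d)) (s ε : ℝ) (Q : (Fin d → ℝ) × ℝ)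
    (B : Finset ((Fin d → ℝ) × ℝ)) : Prop :=
  B.Nonempty ∧
  (∀ P ∈ B, P ∈ Dsel μ s ε) ∧
  (∀ P ∈ B, (2:ℝ) ^ (ε * ratio Q.2 P.2) * DensR μ s Q ≤ DensR μ s P) ∧
  ((B : Set ((Fin d → ℝ) × ℝ)).Pairwise fun P P' =>
    Disjoint (cubeSet P.1 (3 * P.2)) (cubeSet P'.1 (3 * P'.2))) ∧
  (∀ P ∈ B, cubeSet P.1 (3 * P.2) ⊆ cubeSet Q.1 (3 * Q.2)) ∧
  DensR μ s Q ^ 2 * (μ (cubeSet Q.1 Q.2)).toReal ≤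
    ∑ P ∈ B, DensR μ s P ^ 2 * (2:ℝ) ^ (-(2 * ε) * ratio Q.2 P.2) *
      (μ (cubeSet P.1 P.2)).toReal

/-- The doubly selected cubes: selected cubes admitting no dominating bunch from below other
than the trivial bunch `{Q}`. -/
def DhatSel {d : ℕ} (μ : Measure (Pt d)) (s ε : ℝ) : Set ((Fin d → ℝ) × ℝ) :=
  {Q ∈ Dsel μ s ε | ∀ B, DomBelow μ s ε Q B → B = {Q}}

open scoped Classical

namespace DD


lemma mem_cubeSet_self {d : ℕ} {c : Fin d → ℝ} {l : ℝ} (hl : 0 < l) :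
    WithLp.toLp 2 c ∈ cubeSet c l := by
  intro i
  simpa using by linarith

lemma cubeSet_sub_coord {d : ℕ} {c c' : Fin d → ℝ} {l l' : ℝ} (hl : 0 < l)
    (h : cubeSet c l ⊆ cubeSet c' l') (i : Fin d) : |c i - c' i| ≤ (l' - l) / 2 := by
  have key : ∀ t : ℝ, 0 ≤ t → t < l / 2 → |c i - c' i| + t < l' / 2 := by
    intro t ht htl
    set σ : ℝ := if 0 ≤ c i - c' i then 1 else -1 with hσ
    have hmem : WithLp.toLp 2 (Function.update c i (c i + σ * t)) ∈ cubeSet c l := by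
      intro j
      rcases eq_or_ne j i with rfl | hj
      · rw [PiLp.toLp_apply, Function.update_self]
        have he : c j + σ * t - c j = σ * t := by ring
        rw [he]
        have hσ1 : |σ| = 1 := by rw [hσ]; split_ifs <;> simp
        rw [abs_mul, hσ1, one_mul, abs_of_nonneg ht]
        exact htl
      · rw [PiLp.toLp_apply, Function.update_of_ne hj]
        simpa using by linarith
    have h2 := h hmem i
    rw [PiLp.toLp_apply, Function.update_self] at h2
    have he : |c i + σ * t - c' i| = |c i - c' i| + t := by
      rw [hσ]
      split_ifs with h0
      · rw [abs_of_nonneg h0, abs_of_nonneg (by linarith)]; ring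
      · push_neg at h0
        rw [abs_of_neg h0, abs_of_neg (by nlinarith)]; ring
    linarith [he ▸ h2]
  by_contra hcon
  push_neg at hcon
  rcases le_or_gt (l' / 2) |c i - c' i| with hc | hc
  · have := key 0 le_rfl (by linarith)
    simp only [add_zero] at this
    linarith
  · have := key (l' / 2 - |c i - c' i|) (by linarith) (by linarith)
    linarith

lemma side_le {d : ℕ} {c c' : Fin d → ℝ} {l l' : ℝ} (hd : 0 < d) (hl : 0 < l)
    (h : cubeSet c l ⊆ cubeSet c' l') : l ≤ l' := by
  have h1 := cubeSet_sub_coord hl h ⟨0, hd⟩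
  have h2 := abs_nonneg (c ⟨0, hd⟩ - c' ⟨0, hd⟩)
  linarith

lemma center_eq {d : ℕ} {c c' : Fin d → ℝ} {l : ℝ} (hl : 0 < l)
    (h : cubeSet c l ⊆ cubeSet c' l) : c = c' := by
  funext i
  have h1 := cubeSet_sub_coord hl h i
  have h2 := abs_nonneg (c i - c' i)
  have : |c i - c' i| = 0 := by linarith
  have := abs_eq_zero.mp this
  linarith [this]

def nOf (d : ℕ) (Q : (Fin d → ℝ) × ℝ) : ℤ := Int.log 2 (Q.2 / 3)
def mOf (d : ℕ) (Q : (Fin d → ℝ) × ℝ) (i : Fin d) : ℤ := ⌊Q.1 i / (2:ℝ) ^ nOf d Q⌋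

lemma triples_spec {d : ℕ} {Q : (Fin d → ℝ) × ℝ} (h : Q ∈ triples d) :
    Q.2 = 3 * (2:ℝ) ^ nOf d Q ∧ ∀ i, Q.1 i = (2:ℝ) ^ nOf d Q * (mOf d Q i + 1 / 2) := by
  obtain ⟨n, m, h2, h1⟩ := h
  have hz : ((2:ℝ) ^ n) ≠ 0 := by positivity
  have hn : nOf d Q = n := by
    rw [nOf, h2, mul_div_cancel_left₀ _ (by norm_num : (3:ℝ) ≠ 0)]
    exact Int.log_zpow (by norm_num) n
  refine ⟨by rw [hn]; exact h2, fun i => ?_⟩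
  have hm : mOf d Q i = m i := by
    rw [mOf, hn, h1 i, mul_div_cancel_left₀ _ hz]
    rw [Int.floor_eq_iff]
    constructor <;> [skip; push_cast] <;> norm_num
  rw [hn, hm]
  exact h1 i

lemma triples_pos {d : ℕ} {Q : (Fin d → ℝ) × ℝ} (h : Q ∈ triples d) : 0 < Q.2 := by
  obtain ⟨n, m, h2, _⟩ := h
  rw [h2]; positivity



lemma ratio_self (l : ℝ) : ratio l l = 0 := by
  rcases eq_or_ne l 0 with rfl | h
  · simp [ratio]
  · simp [ratio, div_self h]

lemma ratio_pow {a b : ℤ} (hba : b ≤ a) :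
    ratio (3 * (2:ℝ) ^ a) (3 * (2:ℝ) ^ b) = ((a - b : ℤ) : ℝ) := by
  have hne : ((2:ℝ) ^ a) ≠ 0 := by positivity
  have hdiv : (3 * (2:ℝ) ^ b) / (3 * (2:ℝ) ^ a) = (2:ℝ) ^ (b - a) := by
    rw [zpow_sub₀ (by norm_num : (2:ℝ) ≠ 0)]
    field_simp
  rw [ratio, hdiv, Real.logb, Real.log_zpow, mul_div_assoc,
    div_self (ne_of_gt (Real.log_pos (by norm_num))), mul_one]
  rw [abs_of_nonpos (by exact_mod_cast sub_nonpos.mpr hba)]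
  push_cast
  ring

lemma ratio_triples {d : ℕ} {Q R : (Fin d → ℝ) × ℝ} (hQ : Q ∈ triples d)
    (hR : R ∈ triples d) (hn : nOf d R ≤ nOf d Q) :
    ratio Q.2 R.2 = ((nOf d Q - nOf d R : ℤ) : ℝ) := by
  rw [(triples_spec hQ).1, (triples_spec hR).1, ratio_pow hn]

lemma nOf_mono {d : ℕ} {Q R : (Fin d → ℝ) × ℝ} (hR : R ∈ triples d)
    (h : R.2 ≤ Q.2) : nOf d R ≤ nOf d Q := by
  have h3 : (0:ℝ) < R.2 / 3 := by have := triples_pos hR; linarith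
  exact Int.log_mono_right h3 (by linarith)

lemma densR_nonneg {d : ℕ} {μ : Measure (Pt d)} {s : ℝ} {Q : (Fin d → ℝ) × ℝ}
    (h : Q ∈ triples d) : 0 ≤ DensR μ s Q := by
  have h2 : (0:ℝ) < Q.2 := triples_pos h
  exact div_nonneg ENNReal.toReal_nonneg (Real.rpow_nonneg h2.le s)

def En {d : ℕ} (μ : Measure (Pt d)) (s : ℝ) (Q : (Fin d → ℝ) × ℝ) : ℝ :=
  DensR μ s Q ^ 2 * (μ (cubeSet Q.1 Q.2)).toReal

def wt {d : ℕ} (ε : ℝ) (Q R : (Fin d → ℝ) × ℝ) : ℝ :=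
  (2:ℝ) ^ (-(2 * ε) * ratio Q.2 R.2)

lemma En_nonneg {d : ℕ} (μ : Measure (Pt d)) (s : ℝ) (Q : (Fin d → ℝ) × ℝ) :
    0 ≤ En μ s Q := mul_nonneg (sq_nonneg _) ENNReal.toReal_nonneg

lemma wt_nonneg {d : ℕ} (ε : ℝ) (Q R : (Fin d → ℝ) × ℝ) : 0 ≤ wt ε Q R :=
  Real.rpow_nonneg (by norm_num) _

def EE {d : ℕ} (μ : Measure (Pt d)) (s : ℝ) (P : (Fin d → ℝ) × ℝ) : ℝ≥0∞ :=
  ENNReal.ofReal (DensR μ s P ^ 2) * μ (cubeSet P.1 P.2)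

lemma ofReal_En {d : ℕ} (μ : Measure (Pt d)) (s : ℝ) (Q : (Fin d → ℝ) × ℝ) :
    ENNReal.ofReal (En μ s Q) = EE μ s Q := by
  rcases eq_or_ne (μ (cubeSet Q.1 Q.2)) ∞ with hμ | hμ
  · have hD : DensR μ s Q = 0 := by simp [DensR, hμ]
    simp [En, EE, hD, hμ]
  · rw [En, EE, ENNReal.ofReal_mul (sq_nonneg _), ENNReal.ofReal_toReal hμ]



lemma key_ind {d : ℕ} (hd : 0 < d) {s ε M : ℝ} (hε : 0 < ε) (μ : Measure (Pt d))
    (hM : ∀ Q ∈ triples d, DensR μ s Q ≤ M) :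
    ∀ N : ℕ, ∀ Q ∈ Dsel μ s ε, M < (2:ℝ) ^ (ε * N) * DensR μ s Q →
      ∃ L : Finset ((Fin d → ℝ) × ℝ), ↑L ⊆ DhatSel μ s ε ∧
        (∀ R ∈ L, cubeSet R.1 (3 * R.2) ⊆ cubeSet Q.1 (3 * Q.2)) ∧
        En μ s Q ≤ ∑ R ∈ L, wt ε Q R * En μ s R := by
  classical
  intro N
  induction N with
  | zero =>
    intro Q hQ h
    exfalso
    have h1 : DensR μ s Q ≤ M := hM Q hQ.1
    rw [Nat.cast_zero, mul_zero, Real.rpow_zero, one_mul] at h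
    linarith
  | succ N ih =>
    intro Q hQ h
    have hQt : Q ∈ triples d := hQ.1
    have hQpos : 0 < Q.2 := triples_pos hQt
    by_cases hQ' : Q ∈ DhatSel μ s ε
    · refine ⟨{Q}, by simpa using hQ', by simp, ?_⟩
      have hwt : wt ε Q Q = 1 := by
        rw [wt, ratio_self, mul_zero, Real.rpow_zero]
      rw [Finset.sum_singleton, hwt, one_mul]
    · obtain ⟨B, hB, hBne⟩ : ∃ B, DomBelow μ s ε Q B ∧ B ≠ {Q} := by
        by_contra h'
        push_neg at h'
        exact hQ' ⟨hQ, fun B hB => h' B hB⟩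
      obtain ⟨hBne', hBsel, hBden, hBdis, hBsub, hBen⟩ := hB
      have hQnotB : Q ∉ B := by
        intro hQB
        apply hBne
        apply Finset.eq_singleton_iff_unique_mem.mpr
        refine ⟨hQB, fun P hP => ?_⟩
        by_contra hPQ
        have hPt : P ∈ triples d := (hBsel P hP).1
        have hx : WithLp.toLp 2 P.1 ∈ cubeSet P.1 (3 * P.2) :=
          mem_cubeSet_self (by have := triples_pos hPt; linarith)
        exact Set.disjoint_left.mp
          (hBdis (Finset.mem_coe.mpr hP) (Finset.mem_coe.mpr hQB) hPQ) hx (hBsub P hP hx)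
      -- facts about bunch members
      have hPfacts : ∀ P ∈ B, P ∈ triples d ∧ nOf d P + 1 ≤ nOf d Q := by
        intro P hP
        have hPt : P ∈ triples d := (hBsel P hP).1
        have hPpos : 0 < P.2 := triples_pos hPt
        have hsub := hBsub P hP
        have hside : 3 * P.2 ≤ 3 * Q.2 := side_le hd (by linarith) hsub
        have hPle : P.2 ≤ Q.2 := by linarith
        have hPne : P.2 ≠ Q.2 := by
          intro he
          apply hQnotB
          have hc : P.1 = Q.1 := center_eq (by linarith) (he ▸ hsub)
          have : P = Q := Prod.ext hc he
          exact this ▸ hP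
        have hPlt : P.2 < Q.2 := lt_of_le_of_ne hPle hPne
        have h2 : (2:ℝ) ^ nOf d P < (2:ℝ) ^ nOf d Q := by
          have e1 := (triples_spec hPt).1
          have e2 := (triples_spec hQt).1
          rw [e1, e2] at hPlt
          linarith
        have := (zpow_lt_zpow_iff_right₀ (by norm_num : (1:ℝ) < 2)).mp h2
        exact ⟨hPt, by omega⟩
      have hDQ : 0 ≤ DensR μ s Q := densR_nonneg hQt
      have hEx : ∀ P ∈ B, ∃ L : Finset ((Fin d → ℝ) × ℝ), ↑L ⊆ DhatSel μ s ε ∧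
          (∀ R ∈ L, cubeSet R.1 (3 * R.2) ⊆ cubeSet P.1 (3 * P.2)) ∧
          En μ s P ≤ ∑ R ∈ L, wt ε P R * En μ s R := by
        intro P hP
        obtain ⟨hPt, hPn⟩ := hPfacts P hP
        have hr1 : (1:ℝ) ≤ ratio Q.2 P.2 := by
          rw [ratio_triples hQt hPt (by omega)]
          exact_mod_cast (by omega : (1:ℤ) ≤ nOf d Q - nOf d P)
        have h2e : (2:ℝ) ^ ε ≤ (2:ℝ) ^ (ε * ratio Q.2 P.2) := by
          apply (Real.rpow_le_rpow_left_iff (by norm_num : (1:ℝ) < 2)).mpr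
          nlinarith
        have hDP : (2:ℝ) ^ ε * DensR μ s Q ≤ DensR μ s P := by
          refine le_trans ?_ (hBden P hP)
          have := Real.rpow_nonneg (by norm_num : (0:ℝ) ≤ 2) ε
          nlinarith
        have hMP : M < (2:ℝ) ^ (ε * N) * DensR μ s P := by
          have hsplit : (2:ℝ) ^ (ε * ((N:ℝ) + 1)) = (2:ℝ) ^ (ε * N) * (2:ℝ) ^ ε := by
            rw [← Real.rpow_add (by norm_num : (0:ℝ) < 2)]
            ring_nf
          have hcast : ((N + 1 : ℕ) : ℝ) = (N : ℝ) + 1 := by push_cast; ring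
          rw [hcast, hsplit] at h
          have hpw : (0:ℝ) ≤ (2:ℝ) ^ (ε * N) := Real.rpow_nonneg (by norm_num) _
          nlinarith
        exact ih P (hBsel P hP) hMP
      choose! Lp hLp1 hLp2 hLp3 using hEx
      -- disjointness of the Lp's
      have hdisj : (↑B : Set ((Fin d → ℝ) × ℝ)).PairwiseDisjoint Lp := by
        intro P hP P' hP' hne
        apply Finset.disjoint_left.mpr
        intro R hRP hRP'
        have hPmem : P ∈ B := Finset.mem_coe.mp hP
        have hP'mem : P' ∈ B := Finset.mem_coe.mp hP'
        have hRt : R ∈ triples d := ((hLp1 P hPmem (Finset.mem_coe.mpr hRP)).1 : R ∈ Dsel μ s ε).1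
        have hx : WithLp.toLp 2 R.1 ∈ cubeSet R.1 (3 * R.2) :=
          mem_cubeSet_self (by have := triples_pos hRt; linarith)
        exact Set.disjoint_left.mp (hBdis hP hP' hne)
          (hLp2 P hPmem R hRP hx) (hLp2 P' hP'mem R hRP' hx)
      refine ⟨B.biUnion Lp, ?_, ?_, ?_⟩
      · intro R hR
        obtain ⟨P, hP, hRP⟩ := Finset.mem_biUnion.mp (Finset.mem_coe.mp hR)
        exact hLp1 P hP (Finset.mem_coe.mpr hRP)
      · intro R hR
        obtain ⟨P, hP, hRP⟩ := Finset.mem_biUnion.mp hR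
        exact (hLp2 P hP R hRP).trans (hBsub P hP)
      · have step1 : En μ s Q ≤ ∑ P ∈ B, wt ε Q P * En μ s P := by
          refine le_trans hBen (le_of_eq (Finset.sum_congr rfl fun P hP => ?_))
          rw [wt, En]
          ring
        have step2 : ∑ P ∈ B, wt ε Q P * En μ s P ≤
            ∑ P ∈ B, wt ε Q P * ∑ R ∈ Lp P, wt ε P R * En μ s R :=
          Finset.sum_le_sum fun P hP =>
            mul_le_mul_of_nonneg_left (hLp3 P hP) (wt_nonneg ε Q P)
        have step3 : ∀ P ∈ B, wt ε Q P * ∑ R ∈ Lp P, wt ε P R * En μ s R =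
            ∑ R ∈ Lp P, wt ε Q R * En μ s R := by
          intro P hP
          rw [Finset.mul_sum]
          refine Finset.sum_congr rfl fun R hR => ?_
          obtain ⟨hPt, hPn⟩ := hPfacts P hP
          have hRt : R ∈ triples d := ((hLp1 P hP (Finset.mem_coe.mpr hR)).1 : R ∈ Dsel μ s ε).1
          have hRpos : 0 < R.2 := triples_pos hRt
          have hRP : nOf d R ≤ nOf d P := by
            have hsub := hLp2 P hP R hR
            have hside : 3 * R.2 ≤ 3 * P.2 := side_le hd (by linarith) hsub
            exact nOf_mono hRt (by linarith)
          have hPQ : nOf d P ≤ nOf d Q := by omega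
          rw [← mul_assoc, wt, wt, wt, ← Real.rpow_add (by norm_num : (0:ℝ) < 2),
            ratio_triples hQt hPt hPQ, ratio_triples hPt hRt hRP,
            ratio_triples hQt hRt (by omega)]
          congr 2
          push_cast
          ring
        have step4 : ∑ P ∈ B, ∑ R ∈ Lp P, wt ε Q R * En μ s R =
            ∑ R ∈ B.biUnion Lp, wt ε Q R * En μ s R :=
          (Finset.sum_biUnion hdisj).symm
        calc En μ s Q ≤ ∑ P ∈ B, wt ε Q P * En μ s P := step1
          _ ≤ ∑ P ∈ B, wt ε Q P * ∑ R ∈ Lp P, wt ε P R * En μ s R := step2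
          _ = ∑ P ∈ B, ∑ R ∈ Lp P, wt ε Q R * En μ s R :=
            Finset.sum_congr rfl step3
          _ = ∑ R ∈ B.biUnion Lp, wt ε Q R * En μ s R := step4



lemma coord_bounds {d : ℕ} (hd : 0 < d) {Q R : (Fin d → ℝ) × ℝ}
    (hQ : Q ∈ triples d) (hR : R ∈ triples d)
    (hsub : cubeSet R.1 (3 * R.2) ⊆ cubeSet Q.1 (3 * Q.2)) :
    nOf d R ≤ nOf d Q ∧
    ∀ i, ⌈R.1 i / (2:ℝ) ^ nOf d Q - 5⌉ ≤ mOf d Q i ∧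
      mOf d Q i ≤ ⌈R.1 i / (2:ℝ) ^ nOf d Q - 5⌉ + 9 := by
  have hRpos : 0 < R.2 := triples_pos hR
  have hQpos : 0 < Q.2 := triples_pos hQ
  have hside : 3 * R.2 ≤ 3 * Q.2 := side_le hd (by linarith) hsub
  have hn : nOf d R ≤ nOf d Q := nOf_mono hR (by linarith)
  refine ⟨hn, fun i => ?_⟩
  have hco := cubeSet_sub_coord (by linarith : (0:ℝ) < 3 * R.2) hsub i
  set z : ℝ := (2:ℝ) ^ nOf d Q with hz
  have hzpos : 0 < z := by rw [hz]; positivity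
  have hQ2 : Q.2 = 3 * z := (triples_spec hQ).1
  have hQ1 : Q.1 i = z * (mOf d Q i + 1 / 2) := (triples_spec hQ).2 i
  set c : ℝ := R.1 i with hc
  set m : ℤ := mOf d Q i with hm
  -- |c - Q.1 i| ≤ (3*Q.2 - 3*R.2)/2 ≤ (9/2) z
  have habs : |c - Q.1 i| ≤ (9 / 2) * z := by
    calc |c - Q.1 i| ≤ (3 * Q.2 - 3 * R.2) / 2 := hco
      _ ≤ (9 / 2) * z := by rw [hQ2]; linarith
  obtain ⟨h1, h2⟩ := abs_le.mp habs
  rw [hQ1] at h1 h2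
  -- real bounds on m
  have hmlow : c / z - 5 ≤ (m : ℝ) := by
    rw [sub_le_iff_le_add, div_le_iff₀ hzpos]
    nlinarith
  have hmup : (m : ℝ) ≤ c / z + 4 := by
    rw [← sub_le_iff_le_add, le_div_iff₀ hzpos]
    nlinarith
  constructor
  · exact Int.ceil_le.mpr hmlow
  · have hcl : c / z - 5 ≤ (⌈c / z - 5⌉ : ℝ) := Int.le_ceil _
    have : (m : ℝ) ≤ (⌈c / z - 5⌉ : ℝ) + 9 := by linarith
    exact_mod_cast this



lemma count_bound {d : ℕ} (hd : 0 < d) {s ε : ℝ} (μ : Measure (Pt d))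
    {R : (Fin d → ℝ) × ℝ} (hR : R ∈ triples d) :
    ∑' Q : ↥(Dsel μ s ε),
        (if cubeSet R.1 (3 * R.2) ⊆ cubeSet Q.1.1 (3 * Q.1.2) then
          ENNReal.ofReal ((2:ℝ) ^ (-(2 * ε) * ratio Q.1.2 R.2)) else 0) ≤
      ∑' p : ℕ × (Fin d → Fin 10), ENNReal.ofReal ((2:ℝ) ^ (-(2 * ε))) ^ p.1 := by
  set g : ℕ × (Fin d → Fin 10) → ℝ≥0∞ :=
    fun p => ENNReal.ofReal ((2:ℝ) ^ (-(2 * ε))) ^ p.1 with hg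
  set f : ↥(Dsel μ s ε) → ℝ≥0∞ := fun Q =>
    if cubeSet R.1 (3 * R.2) ⊆ cubeSet Q.1.1 (3 * Q.1.2) then
      ENNReal.ofReal ((2:ℝ) ^ (-(2 * ε) * ratio Q.1.2 R.2)) else 0 with hf
  set S : Set ↥(Dsel μ s ε) :=
    {Q | cubeSet R.1 (3 * R.2) ⊆ cubeSet Q.1.1 (3 * Q.1.2)} with hS
  have hsupp : Function.support f ⊆ S := by
    intro Q hQ
    by_contra h
    exact hQ (if_neg h)
  rw [← tsum_subtype_eq_of_support_subset hsupp]
  set φ : ↥S → ℕ × (Fin d → Fin 10) := fun Q =>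
    ((nOf d Q.1.1 - nOf d R).toNat,
     fun i => ⟨(mOf d Q.1.1 i - ⌈R.1 i / (2:ℝ) ^ nOf d Q.1.1 - 5⌉).toNat % 10,
       Nat.mod_lt _ (by norm_num)⟩) with hφ
  have hfacts : ∀ Q : ↥S, Q.1.1 ∈ triples d ∧ nOf d R ≤ nOf d Q.1.1 ∧
      ∀ i, ⌈R.1 i / (2:ℝ) ^ nOf d Q.1.1 - 5⌉ ≤ mOf d Q.1.1 i ∧
        mOf d Q.1.1 i ≤ ⌈R.1 i / (2:ℝ) ^ nOf d Q.1.1 - 5⌉ + 9 := by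
    intro Q
    have hQt : Q.1.1 ∈ triples d := Q.1.2.1
    obtain ⟨hn, hb⟩ := coord_bounds hd hQt hR Q.2
    exact ⟨hQt, hn, hb⟩
  have hinj : Function.Injective φ := by
    intro X Y heq
    obtain ⟨hXt, hnX, hbX⟩ := hfacts X
    obtain ⟨hYt, hnY, hbY⟩ := hfacts Y
    have h1 : (nOf d X.1.1 - nOf d R).toNat = (nOf d Y.1.1 - nOf d R).toNat :=
      congrArg Prod.fst heq
    have hn : nOf d X.1.1 = nOf d Y.1.1 := by omega
    have hm : ∀ i, mOf d X.1.1 i = mOf d Y.1.1 i := by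
      intro i
      have h2 : (mOf d X.1.1 i - ⌈R.1 i / (2:ℝ) ^ nOf d X.1.1 - 5⌉).toNat % 10 =
          (mOf d Y.1.1 i - ⌈R.1 i / (2:ℝ) ^ nOf d Y.1.1 - 5⌉).toNat % 10 :=
        congrArg (fun p : ℕ × (Fin d → Fin 10) => ((p.2 i : Fin 10) : ℕ)) heq
      obtain ⟨hl, hu⟩ := hbX i
      obtain ⟨hl', hu'⟩ := hbY i
      rw [hn] at h2 hl hu
      omega
    apply Subtype.ext
    apply Subtype.ext
    apply Prod.ext
    · funext i
      rw [(triples_spec hXt).2 i, (triples_spec hYt).2 i, hn, hm i]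
    · rw [(triples_spec hXt).1, (triples_spec hYt).1, hn]
  have hval : ∀ Q : ↥S, f Q.1 = g (φ Q) := by
    intro X
    obtain ⟨hXt, hn, _⟩ := hfacts X
    show (if cubeSet R.1 (3 * R.2) ⊆ cubeSet X.1.1.1 (3 * X.1.1.2) then
        ENNReal.ofReal ((2:ℝ) ^ (-(2 * ε) * ratio X.1.1.2 R.2)) else 0) =
      ENNReal.ofReal ((2:ℝ) ^ (-(2 * ε))) ^ ((nOf d X.1.1 - nOf d R).toNat)
    rw [if_pos (show cubeSet R.1 (3 * R.2) ⊆ cubeSet X.1.1.1 (3 * X.1.1.2) from X.2)]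
    have hr : ratio X.1.1.2 R.2 = (((nOf d X.1.1 - nOf d R).toNat : ℕ) : ℝ) := by
      rw [ratio_triples hXt hR hn]
      have h3 : ((nOf d X.1.1 - nOf d R).toNat : ℤ) = nOf d X.1.1 - nOf d R :=
        Int.toNat_of_nonneg (by omega)
      exact_mod_cast (congrArg (fun z : ℤ => (z : ℝ)) h3).symm
    rw [hr]
    have h4 : (2:ℝ) ^ (-(2 * ε) * (((nOf d X.1.1 - nOf d R).toNat : ℕ) : ℝ)) =
        ((2:ℝ) ^ (-(2 * ε))) ^ ((nOf d X.1.1 - nOf d R).toNat : ℕ) := by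
      rw [← Real.rpow_natCast ((2:ℝ) ^ (-(2 * ε))) _,
        ← Real.rpow_mul (by norm_num : (0:ℝ) ≤ 2)]
    rw [h4, ENNReal.ofReal_pow (Real.rpow_nonneg (by norm_num) _)]
  calc ∑' Q : ↥S, f Q.1 = ∑' Q : ↥S, g (φ Q) := tsum_congr hval
    _ ≤ ∑' p, g p := ENNReal.tsum_comp_le_tsum_of_injective hinj g



lemma main_bound {d : ℕ} (hd : 0 < d) {s ε M : ℝ} (hε : 0 < ε) (μ : Measure (Pt d))
    (hM : ∀ Q ∈ triples d, DensR μ s Q ≤ M) :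
    (∑' Q : ↥(Dsel μ s ε), EE μ s Q.1) ≤
      (∑' p : ℕ × (Fin d → Fin 10), ENNReal.ofReal ((2:ℝ) ^ (-(2 * ε))) ^ p.1) *
        ∑' Rq : ↥(DhatSel μ s ε), EE μ s Rq.1 := by
  have hLex : ∀ Q : ↥(Dsel μ s ε), ∃ L : Finset ((Fin d → ℝ) × ℝ),
      ↑L ⊆ DhatSel μ s ε ∧
      (∀ Rp ∈ L, cubeSet Rp.1 (3 * Rp.2) ⊆ cubeSet Q.1.1 (3 * Q.1.2)) ∧
      En μ s Q.1 ≤ ∑ Rp ∈ L, wt ε Q.1 Rp * En μ s Rp := by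
    rintro ⟨Q, hQ⟩
    rcases eq_or_lt_of_le (densR_nonneg (μ := μ) (s := s) hQ.1) with hD0 | hDpos
    · refine ⟨∅, by simp, by simp, ?_⟩
      simp [En, hD0.symm]
    · obtain ⟨N, hN⟩ := pow_unbounded_of_one_lt (M / DensR μ s Q)
        ((Real.one_lt_rpow_iff_of_pos (by norm_num : (0:ℝ) < 2)).mpr
          (Or.inl ⟨by norm_num, hε⟩))
      have hpow : (2:ℝ) ^ (ε * (N:ℝ)) = ((2:ℝ) ^ ε) ^ N := by
        rw [← Real.rpow_natCast ((2:ℝ) ^ ε) N, ← Real.rpow_mul (by norm_num)]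
      have hN' : M < (2:ℝ) ^ (ε * (N:ℝ)) * DensR μ s Q := by
        rw [hpow]
        exact (div_lt_iff₀ hDpos).mp hN
      exact key_ind hd hε μ hM N Q hQ hN'
  choose L hL1 hL2 hL3 using hLex
  have hpt : ∀ Q : ↥(Dsel μ s ε), EE μ s Q.1 ≤
      ∑' Rq : ↥(DhatSel μ s ε),
        (if Rq.1 ∈ L Q then ENNReal.ofReal (wt ε Q.1 Rq.1) * EE μ s Rq.1 else 0) := by
    intro Q
    have h0 : EE μ s Q.1 = ENNReal.ofReal (En μ s Q.1) := (ofReal_En μ s Q.1).symm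
    rw [h0]
    have c1 : ENNReal.ofReal (En μ s Q.1) ≤
        ∑ Rp ∈ L Q, ENNReal.ofReal (wt ε Q.1 Rp) * EE μ s Rp := by
      refine le_trans (ENNReal.ofReal_le_ofReal (hL3 Q)) ?_
      rw [ENNReal.ofReal_sum_of_nonneg
        (fun Rp _ => mul_nonneg (wt_nonneg ε Q.1 Rp) (En_nonneg μ s Rp))]
      refine le_of_eq (Finset.sum_congr rfl fun Rp _ => ?_)
      rw [ENNReal.ofReal_mul (wt_nonneg ε Q.1 Rp), ofReal_En]
    refine c1.trans ?_
    set G : ↥(DhatSel μ s ε) → ℝ≥0∞ := fun Rq =>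
      if Rq.1 ∈ L Q then ENNReal.ofReal (wt ε Q.1 Rq.1) * EE μ s Rq.1 else 0 with hG
    set e : {x // x ∈ L Q} → ↥(DhatSel μ s ε) :=
      fun x => ⟨x.1, hL1 Q (Finset.mem_coe.mpr x.2)⟩ with he
    have heinj : Function.Injective e := by
      intro a b hab
      have h2 : (e a).1 = (e b).1 := congrArg Subtype.val hab
      exact Subtype.ext h2
    calc ∑ Rp ∈ L Q, ENNReal.ofReal (wt ε Q.1 Rp) * EE μ s Rp
        = ∑ x ∈ (L Q).attach, ENNReal.ofReal (wt ε Q.1 x.1) * EE μ s x.1 :=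
          (Finset.sum_attach _ _).symm
      _ = ∑ x ∈ (L Q).attach, G (e x) :=
          Finset.sum_congr rfl (fun x _ => (if_pos x.2).symm)
      _ = ∑ y ∈ (L Q).attach.image e, G y :=
          (Finset.sum_image (fun a _ b _ h => heinj h)).symm
      _ ≤ ∑' Rq : ↥(DhatSel μ s ε), G Rq :=
          ENNReal.sum_le_tsum _
  have inner : ∀ Rq : ↥(DhatSel μ s ε),
      (∑' Q : ↥(Dsel μ s ε),
        (if Rq.1 ∈ L Q then ENNReal.ofReal (wt ε Q.1 Rq.1) * EE μ s Rq.1 else 0)) ≤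
      (∑' p : ℕ × (Fin d → Fin 10), ENNReal.ofReal ((2:ℝ) ^ (-(2 * ε))) ^ p.1) *
        EE μ s Rq.1 := by
    intro Rq
    have hRt : Rq.1 ∈ triples d := Rq.2.1.1
    have step : ∀ Q : ↥(Dsel μ s ε),
        (if Rq.1 ∈ L Q then ENNReal.ofReal (wt ε Q.1 Rq.1) * EE μ s Rq.1 else 0) ≤
          (if cubeSet Rq.1.1 (3 * Rq.1.2) ⊆ cubeSet Q.1.1 (3 * Q.1.2) then
            ENNReal.ofReal ((2:ℝ) ^ (-(2 * ε) * ratio Q.1.2 Rq.1.2)) else 0) * EE μ s Rq.1 := by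
      intro Q
      by_cases h1 : Rq.1 ∈ L Q
      · rw [if_pos h1, if_pos (hL2 Q Rq.1 h1)]
        exact le_of_eq (by rw [wt])
      · rw [if_neg h1]; exact zero_le
    calc (∑' Q : ↥(Dsel μ s ε),
          (if Rq.1 ∈ L Q then ENNReal.ofReal (wt ε Q.1 Rq.1) * EE μ s Rq.1 else 0))
        ≤ ∑' Q : ↥(Dsel μ s ε),
            (if cubeSet Rq.1.1 (3 * Rq.1.2) ⊆ cubeSet Q.1.1 (3 * Q.1.2) then
              ENNReal.ofReal ((2:ℝ) ^ (-(2 * ε) * ratio Q.1.2 Rq.1.2)) else 0) * EE μ s Rq.1 :=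
          ENNReal.tsum_le_tsum step
      _ = (∑' Q : ↥(Dsel μ s ε),
            (if cubeSet Rq.1.1 (3 * Rq.1.2) ⊆ cubeSet Q.1.1 (3 * Q.1.2) then
              ENNReal.ofReal ((2:ℝ) ^ (-(2 * ε) * ratio Q.1.2 Rq.1.2)) else 0)) * EE μ s Rq.1 :=
          ENNReal.tsum_mul_right
      _ ≤ (∑' p : ℕ × (Fin d → Fin 10), ENNReal.ofReal ((2:ℝ) ^ (-(2 * ε))) ^ p.1) *
            EE μ s Rq.1 :=
          mul_le_mul_left (count_bound hd μ hRt) _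
  calc ∑' Q : ↥(Dsel μ s ε), EE μ s Q.1
      ≤ ∑' Q : ↥(Dsel μ s ε), ∑' Rq : ↥(DhatSel μ s ε),
          (if Rq.1 ∈ L Q then ENNReal.ofReal (wt ε Q.1 Rq.1) * EE μ s Rq.1 else 0) :=
        ENNReal.tsum_le_tsum hpt
    _ = ∑' Rq : ↥(DhatSel μ s ε), ∑' Q : ↥(Dsel μ s ε),
          (if Rq.1 ∈ L Q then ENNReal.ofReal (wt ε Q.1 Rq.1) * EE μ s Rq.1 else 0) :=
        ENNReal.tsum_comm
    _ ≤ ∑' Rq : ↥(DhatSel μ s ε),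
          (∑' p : ℕ × (Fin d → Fin 10), ENNReal.ofReal ((2:ℝ) ^ (-(2 * ε))) ^ p.1) *
            EE μ s Rq.1 :=
        ENNReal.tsum_le_tsum inner
    _ = (∑' p : ℕ × (Fin d → Fin 10), ENNReal.ofReal ((2:ℝ) ^ (-(2 * ε))) ^ p.1) *
          ∑' Rq : ↥(DhatSel μ s ε), EE μ s Rq.1 :=
        ENNReal.tsum_mul_left


end DD

/-- Downward domination lemma: the doubly selected cubes carry a fixed proportion of the
Wolff energy of the selected cubes. -/
theorem downward_domination (d : ℕ) (s : ℝ) (hs : s ∈ Set.Ioo 0 (d : ℝ)) (ε : ℝ) (hε : 0 < ε) :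
    ∃ c : ℝ, 0 < c ∧
      ∀ μ : Measure (Pt d), IsLocallyFiniteMeasure μ →
        (∃ M : ℝ, ∀ Q ∈ triples d, DensR μ s Q ≤ M) →
        ENNReal.ofReal c *
            ∑' Q : Dsel μ s ε,
              ENNReal.ofReal (DensR μ s Q.1 ^ 2) * μ (cubeSet Q.1.1 Q.1.2) ≤
          ∑' Q : DhatSel μ s ε,
            ENNReal.ofReal (DensR μ s Q.1 ^ 2) * μ (cubeSet Q.1.1 Q.1.2) := by
  obtain ⟨hs0, hsd⟩ := hs
  have hd : 0 < d := by exact_mod_cast hs0.trans hsd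
  set w0 : ℝ≥0∞ := ENNReal.ofReal ((2:ℝ) ^ (-(2 * ε))) with hw0def
  have hw0lt : w0 < 1 := by
    rw [hw0def]
    exact ENNReal.ofReal_lt_one.mpr
      (Real.rpow_lt_one_of_one_lt_of_neg (by norm_num) (by linarith))
  set K : ℝ≥0∞ := ∑' p : ℕ × (Fin d → Fin 10), w0 ^ p.1 with hKdef
  have hKeq : K = (Fintype.card (Fin d → Fin 10) : ℝ≥0∞) * (1 - w0)⁻¹ := by
    rw [hKdef, ENNReal.tsum_prod']
    have h1 : ∀ a : ℕ, ∑' _ : Fin d → Fin 10, w0 ^ a =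
        (Fintype.card (Fin d → Fin 10) : ℝ≥0∞) * w0 ^ a := by
      intro a
      rw [tsum_fintype]
      simp [Finset.sum_const, Finset.card_univ, nsmul_eq_mul]
    calc ∑' (a : ℕ) (_ : Fin d → Fin 10), w0 ^ a
        = ∑' a : ℕ, (Fintype.card (Fin d → Fin 10) : ℝ≥0∞) * w0 ^ a := tsum_congr h1
      _ = (Fintype.card (Fin d → Fin 10) : ℝ≥0∞) * ∑' a : ℕ, w0 ^ a := ENNReal.tsum_mul_left
      _ = (Fintype.card (Fin d → Fin 10) : ℝ≥0∞) * (1 - w0)⁻¹ := by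
          rw [ENNReal.tsum_geometric]
  have hKtop : K ≠ ∞ := by
    rw [hKeq]
    refine ENNReal.mul_ne_top (by simp) ?_
    rw [Ne, ENNReal.inv_eq_top, tsub_eq_zero_iff_le]
    exact not_le.mpr hw0lt
  have hK0 : K ≠ 0 := by
    have h1 : w0 ^ (0:ℕ) ≤ K := by
      rw [hKdef]
      exact ENNReal.le_tsum ((0 : ℕ), fun _ => (0 : Fin 10))
    rw [pow_zero] at h1
    intro h
    rw [h] at h1
    simp at h1
  refine ⟨(K⁻¹).toReal, ENNReal.toReal_pos (ENNReal.inv_ne_zero.mpr hKtop)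
    (ENNReal.inv_ne_top.mpr hK0), ?_⟩
  rintro μ _ ⟨M, hM⟩
  have main := DD.main_bound hd hε μ hM
  rw [← hw0def, ← hKdef] at main
  have hA : (∑' Q : Dsel μ s ε,
      ENNReal.ofReal (DensR μ s Q.1 ^ 2) * μ (cubeSet Q.1.1 Q.1.2)) =
      ∑' Q : ↥(Dsel μ s ε), DD.EE μ s Q.1 := tsum_congr fun Q => rfl
  have hB : (∑' Q : DhatSel μ s ε,
      ENNReal.ofReal (DensR μ s Q.1 ^ 2) * μ (cubeSet Q.1.1 Q.1.2)) =
      ∑' Q : ↥(DhatSel μ s ε), DD.EE μ s Q.1 := tsum_congr fun Q => rfl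
  rw [hA, hB, ENNReal.ofReal_toReal (ENNReal.inv_ne_top.mpr hK0)]
  calc K⁻¹ * ∑' Q : ↥(Dsel μ s ε), DD.EE μ s Q.1
      ≤ K⁻¹ * (K * ∑' Q : ↥(DhatSel μ s ε), DD.EE μ s Q.1) := mul_le_mul_right main _
    _ = ∑' Q : ↥(DhatSel μ s ε), DD.EE μ s Q.1 := by
        rw [← mul_assoc, ENNReal.inv_mul_cancel hK0 hKtop, one_mul]
end
end

section
/- Suppose sup_{Q ∈ 𝒟} D_μ(Q) < ∞. Then every Q ∈ 𝒟_sel(μ) with μ(Q) > 0 is dominated from below by a bunch of cubes all belonging to 𝒟̂_sel(μ). -/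
open MeasureTheory Metric Set Filter ENNReal
noncomputable section

section Helpers
variable {d : ℕ}

variable {d : ℕ}

lemma triples_side_pos {p : (Fin d → ℝ) × ℝ} (hp : p ∈ triples d) : 0 < p.2 := by
  obtain ⟨n, m, h, -⟩ := hp
  rw [h]; positivity

lemma cube_nonempty {c : Fin d → ℝ} {l : ℝ} (hl : 0 < l) : (cubeSet c l).Nonempty :=
  ⟨(WithLp.equiv 2 (Fin d → ℝ)).symm c, fun i => by
    show |c i - c i| < l / 2
    simpa using by linarith⟩

lemma cube_subset_side (hd : 0 < d) {c c' : Fin d → ℝ} {a b : ℝ} (ha : 0 < a)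
    (h : cubeSet c' a ⊆ cubeSet c b) : a ≤ b ∧ ∀ i, |c' i - c i| ≤ (b - a) / 2 := by
  have key : ∀ (i : Fin d) (t : ℝ), |t| < a / 2 → |c' i + t - c i| < b / 2 := by
    intro i t ht
    have hx : (WithLp.equiv 2 (Fin d → ℝ)).symm (fun j => c' j + if j = i then t else 0)
        ∈ cubeSet c' a := by
      intro j
      show |(c' j + if j = i then t else 0) - c' j| < a / 2
      by_cases hj : j = i <;> simp [hj, ht] <;> linarith
    have := h hx i
    simpa using this
  have hco : ∀ (i : Fin d), (c' i - c i) + a / 2 ≤ b / 2 ∧ (c i - c' i) + a / 2 ≤ b / 2 := by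
    intro i
    constructor
    · refine le_of_forall_pos_le_add ?_
      intro η hη
      have hm : 0 < min η (a / 2) := lt_min hη (by linarith)
      have hm2 : min η (a / 2) ≤ a / 2 := min_le_right _ _
      have ht : |a / 2 - min η (a / 2)| < a / 2 := by
        rw [abs_of_nonneg (by linarith)]; linarith
      have := (abs_lt.mp (key i _ ht)).2
      have := min_le_left η (a / 2)
      linarith
    · refine le_of_forall_pos_le_add ?_
      intro η hη
      have hm : 0 < min η (a / 2) := lt_min hη (by linarith)
      have hm2 : min η (a / 2) ≤ a / 2 := min_le_right _ _
      have ht : |-(a / 2 - min η (a / 2))| < a / 2 := by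
        rw [abs_neg, abs_of_nonneg (by linarith)]; linarith
      have := (abs_lt.mp (key i _ ht)).1
      have := min_le_left η (a / 2)
      linarith
  constructor
  · obtain ⟨h1, h2⟩ := hco ⟨0, hd⟩
    linarith
  · intro i
    obtain ⟨h1, h2⟩ := hco i
    rw [abs_le]; constructor <;> linarith

lemma measure_cube_lt_top (μ : Measure (Pt d)) [IsLocallyFiniteMeasure μ]
    (c : Fin d → ℝ) (l : ℝ) : μ (cubeSet c l) < ⊤ := by
  set c₀ : Pt d := (WithLp.equiv 2 (Fin d → ℝ)).symm c
  have hsub : cubeSet c l ⊆ Metric.closedBall c₀ (Real.sqrt (d * (|l| / 2) ^ 2)) := by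
    intro x hx
    rw [Metric.mem_closedBall, EuclideanSpace.dist_eq]
    apply Real.sqrt_le_sqrt
    calc ∑ i, dist (x i) (c₀ i) ^ 2 ≤ ∑ _i : Fin d, (|l| / 2) ^ 2 := by
          apply Finset.sum_le_sum
          intro i _
          have h1 : dist (x i) (c₀ i) = |x i - c i| := rfl
          have h2 := hx i
          have h3 : |x i - c i| ≤ |l| / 2 := le_trans h2.le (by
            have := le_abs_self l; linarith)
          rw [h1]
          exact pow_le_pow_left₀ (abs_nonneg _) h3 2
      _ = d * (|l| / 2) ^ 2 := by simp [Finset.sum_const, mul_comm]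
  exact lt_of_le_of_lt (measure_mono hsub) (isCompact_closedBall c₀ _).measure_lt_top

lemma densR_nonneg {μ : Measure (Pt d)} {s : ℝ} {p : (Fin d → ℝ) × ℝ} (hp : 0 < p.2) :
    0 ≤ DensR μ s p :=
  div_nonneg ENNReal.toReal_nonneg (Real.rpow_nonneg hp.le s)

lemma densR_pos {μ : Measure (Pt d)} [IsLocallyFiniteMeasure μ] {s : ℝ}
    {p : (Fin d → ℝ) × ℝ} (hp : 0 < p.2) (hμ : 0 < μ (cubeSet p.1 p.2)) :
    0 < DensR μ s p :=
  div_pos (ENNReal.toReal_pos hμ.ne' (measure_cube_lt_top μ p.1 p.2).ne)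
    (Real.rpow_pos_of_pos hp s)

lemma pos_of_densR_pos {μ : Measure (Pt d)} {s : ℝ} {p : (Fin d → ℝ) × ℝ}
    (h : 0 < DensR μ s p) : 0 < μ (cubeSet p.1 p.2) := by
  by_contra h0
  push_neg at h0
  have : μ (cubeSet p.1 p.2) = 0 := le_antisymm h0 zero_le
  rw [DensR, this] at h
  simp at h

lemma ratio_self {l : ℝ} (hl : l ≠ 0) : ratio l l = 0 := by
  simp [ratio, div_self hl]

lemma ratio_nonneg (l l' : ℝ) : 0 ≤ ratio l l' := abs_nonneg _

lemma ratio_triangle {a b c : ℝ} (ha : 0 < a) (hb : 0 < b) (hc : 0 < c) :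
    ratio a c ≤ ratio a b + ratio b c := by
  unfold ratio
  have h : c / a = (b / a) * (c / b) := by field_simp
  rw [h, Real.logb_mul (by positivity) (by positivity)]
  exact abs_add_le _ _



lemma dens_comp {μ : Measure (Pt d)} {s ε : ℝ} (hε : 0 < ε) {P P' R : (Fin d → ℝ) × ℝ}
    (hP : 0 < P.2) (hP' : 0 < P'.2) (hR : 0 < R.2)
    (h1 : (2:ℝ) ^ (ε * ratio P.2 P'.2) * DensR μ s P ≤ DensR μ s P')
    (h2 : (2:ℝ) ^ (ε * ratio P'.2 R.2) * DensR μ s P' ≤ DensR μ s R) :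
    (2:ℝ) ^ (ε * ratio P.2 R.2) * DensR μ s P ≤ DensR μ s R := by
  have htri := ratio_triangle hP hP' hR
  have hD : 0 ≤ DensR μ s P := densR_nonneg hP
  calc (2:ℝ) ^ (ε * ratio P.2 R.2) * DensR μ s P
      ≤ (2:ℝ) ^ (ε * (ratio P.2 P'.2 + ratio P'.2 R.2)) * DensR μ s P := by
        apply mul_le_mul_of_nonneg_right _ hD
        apply Real.rpow_le_rpow_of_exponent_le one_le_two
        nlinarith
    _ = (2:ℝ) ^ (ε * ratio P'.2 R.2) * ((2:ℝ) ^ (ε * ratio P.2 P'.2) * DensR μ s P) := by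
        rw [mul_add, Real.rpow_add two_pos]; ring
    _ ≤ (2:ℝ) ^ (ε * ratio P'.2 R.2) * DensR μ s P' :=
        mul_le_mul_of_nonneg_left h1 (Real.rpow_nonneg (by norm_num) _)
    _ ≤ DensR μ s R := h2

lemma exp_comp {ε : ℝ} (hε : 0 < ε) {a b c : ℝ} (ha : 0 < a) (hb : 0 < b) (hc : 0 < c) :
    (2:ℝ) ^ (-(2 * ε) * ratio a b) * (2:ℝ) ^ (-(2 * ε) * ratio b c) ≤
      (2:ℝ) ^ (-(2 * ε) * ratio a c) := by
  rw [← Real.rpow_add two_pos]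
  apply Real.rpow_le_rpow_of_exponent_le one_le_two
  have htri := ratio_triangle ha hb hc
  nlinarith

lemma domBelow_self {μ : Measure (Pt d)} {s ε : ℝ} {Q : (Fin d → ℝ) × ℝ}
    (hQ : Q ∈ Dsel μ s ε) : DomBelow μ s ε Q {Q} := by
  have hl : Q.2 ≠ 0 := (triples_side_pos hQ.1).ne'
  refine ⟨⟨Q, Finset.mem_singleton_self Q⟩, ?_, ?_, ?_, ?_, ?_⟩
  · intro P hP; rw [Finset.mem_singleton] at hP; subst hP; exact hQ
  · intro P hP; rw [Finset.mem_singleton] at hP; subst hP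
    simp [ratio_self hl]
  · simp
  · intro P hP; rw [Finset.mem_singleton] at hP; subst hP; exact subset_rfl
  · rw [Finset.sum_singleton, ratio_self hl]
    simp

lemma bunch_small (hd : 0 < d) {μ : Measure (Pt d)} {s ε : ℝ} {P : (Fin d → ℝ) × ℝ}
    {B : Finset ((Fin d → ℝ) × ℝ)} (hPt : P ∈ triples d)
    (hB : DomBelow μ s ε P B) (hne : B ≠ {P}) :
    ∀ P' ∈ B, P'.2 ≤ P.2 / 2 := by
  obtain ⟨hBne, hsel, hdens, hdisj, hsub, hen⟩ := hB
  have hPnot : P ∉ B := by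
    intro hPB
    obtain ⟨P'', hP''B, hP''ne⟩ : ∃ P'' ∈ B, P'' ≠ P := by
      by_contra hc; push_neg at hc
      exact hne (Finset.eq_singleton_iff_unique_mem.mpr ⟨hPB, hc⟩)
    have hpos := triples_side_pos (hsel P'' hP''B).1
    obtain ⟨x, hx⟩ := cube_nonempty (c := P''.1) (l := 3 * P''.2) (by linarith)
    exact Set.disjoint_left.mp (hdisj hP''B hPB hP''ne) hx (hsub P'' hP''B hx)
  intro P' hP'B
  have hP'ne : P' ≠ P := fun h => hPnot (h ▸ hP'B)
  have hP't := (hsel P' hP'B).1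
  have hP'pos := triples_side_pos hP't
  have hPpos := triples_side_pos hPt
  obtain ⟨hle, hcent⟩ := cube_subset_side hd
    (show (0:ℝ) < 3 * P'.2 by linarith) (hsub P' hP'B)
  obtain ⟨n', m', hsn', hcn'⟩ := hP't
  obtain ⟨n, m, hsn, hcn⟩ := hPt
  have hlt : n' < n := by
    have hle2 : (2:ℝ) ^ n' ≤ (2:ℝ) ^ n := by
      rw [hsn', hsn] at hle; linarith
    have hn'n : n' ≤ n := by
      by_contra hc; push_neg at hc
      have := zpow_lt_zpow_right₀ (show (1:ℝ) < 2 by norm_num) hc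
      linarith
    rcases lt_or_eq_of_le hn'n with h | h
    · exact h
    · exfalso; subst h
      apply hP'ne
      have hceq : ∀ i, P'.1 i = P.1 i := by
        intro i
        have h1 := hcent i
        rw [hsn', hsn] at h1
        have : |P'.1 i - P.1 i| ≤ 0 := by
          calc |P'.1 i - P.1 i| ≤ (3 * (3 * 2 ^ n') - 3 * (3 * 2 ^ n')) / 2 := h1
            _ = 0 := by ring
        have := abs_nonneg (P'.1 i - P.1 i)
        have heq : |P'.1 i - P.1 i| = 0 := le_antisymm ‹_› this
        have := abs_eq_zero.mp heq
        linarith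
      exact Prod.ext (funext hceq) (by rw [hsn', hsn])
  rw [hsn', hsn]
  have h1 : (2:ℝ) ^ n' ≤ (2:ℝ) ^ (n - 1) :=
    zpow_le_zpow_right₀ (by norm_num) (by omega)
  have h2 : (2:ℝ) ^ (n - 1) = 2 ^ n / 2 := by
    rw [zpow_sub₀ (by norm_num : (2:ℝ) ≠ 0)]; norm_num
  rw [h2] at h1
  linarith


end Helpers

lemma not_dhat {d : ℕ} {μ : Measure (Pt d)} {s ε : ℝ} {P : (Fin d → ℝ) × ℝ}
    (hP : P ∈ Dsel μ s ε) (h : P ∉ DhatSel μ s ε) :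
    ∃ B, DomBelow μ s ε P B ∧ B ≠ {P} := by
  simp only [DhatSel, Set.mem_sep_iff] at h
  push_neg at h
  exact h hP

lemma main_claim (d : ℕ) (hd : 0 < d) (s ε : ℝ) (hε : 0 < ε) (μ : Measure (Pt d))
    [IsLocallyFiniteMeasure μ] (k : ℕ) :
    ∀ P ∈ Dsel μ s ε, 0 < μ (cubeSet P.1 P.2) →
      (∀ R ∈ triples d, R.2 ≤ P.2 →
        (2:ℝ) ^ (ε * ratio P.2 R.2) * DensR μ s P ≤ DensR μ s R → P.2 ≤ 2 ^ k * R.2) →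
      ∃ B, DomBelow μ s ε P B ∧ ∀ R ∈ B, R ∈ DhatSel μ s ε := by
  induction k with
  | zero =>
    intro P hP hμ hH
    by_cases hhat : P ∈ DhatSel μ s ε
    · refine ⟨{P}, domBelow_self hP, ?_⟩
      intro R hR; rw [Finset.mem_singleton] at hR; subst hR; exact hhat
    · exfalso
      obtain ⟨B, hB, hBne⟩ := not_dhat hP hhat
      obtain ⟨P', hP'B⟩ := hB.1
      have hsmall := bunch_small hd hP.1 hB hBne P' hP'B
      have hP't := (hB.2.1 P' hP'B).1
      have hPpos := triples_side_pos hP.1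
      have := hH P' hP't (by linarith) (hB.2.2.1 P' hP'B)
      simp only [pow_zero, one_mul] at this
      linarith
  | succ k ih =>
    intro P hP hμ hH
    by_cases hhat : P ∈ DhatSel μ s ε
    · refine ⟨{P}, domBelow_self hP, ?_⟩
      intro R hR; rw [Finset.mem_singleton] at hR; subst hR; exact hhat
    · obtain ⟨B, hB, hBne⟩ := not_dhat hP hhat
      have hsmall := bunch_small hd hP.1 hB hBne
      obtain ⟨hBnonempty, hsel, hdens, hdisj, hsub, hen⟩ := hB
      have hPpos := triples_side_pos hP.1
      have hDP : 0 < DensR μ s P := densR_pos hPpos hμ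
      have hrec : ∀ P' ∈ B, ∃ B', DomBelow μ s ε P' B' ∧ ∀ R ∈ B', R ∈ DhatSel μ s ε := by
        intro P' hP'B
        have hP'sel := hsel P' hP'B
        have hP'pos := triples_side_pos hP'sel.1
        have hDP' : 0 < DensR μ s P' :=
          lt_of_lt_of_le (by positivity) (hdens P' hP'B)
        refine ih P' hP'sel (pos_of_densR_pos hDP') ?_
        intro R hRt hRle hRd
        have hRpos := triples_side_pos hRt
        have hcomp := dens_comp hε hPpos hP'pos hRpos (hdens P' hP'B) hRd
        have hsm := hsmall P' hP'B
        have hup := hH R hRt (by linarith) hcomp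
        have h2 : (2:ℝ) ^ (k + 1) = 2 * 2 ^ k := by ring
        rw [h2] at hup
        linarith
      choose! f hf1 hf2 using hrec
      have hfam : ∀ P' ∈ B, ∀ R ∈ f P', cubeSet R.1 (3 * R.2) ⊆ cubeSet P'.1 (3 * P'.2) :=
        fun P' h => (hf1 P' h).2.2.2.2.1
      have hRtriple : ∀ P' ∈ B, ∀ R ∈ f P', R ∈ Dsel μ s ε :=
        fun P' h => (hf1 P' h).2.1
      have hpairdisj : (↑B : Set ((Fin d → ℝ) × ℝ)).PairwiseDisjoint f := by
        intro P' hP' P'' hP'' hne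
        rw [Function.onFun, Finset.disjoint_left]
        intro R hR1 hR2
        have hRpos := triples_side_pos (hRtriple P' hP' R hR1).1
        obtain ⟨x, hx⟩ := cube_nonempty (c := R.1) (l := 3 * R.2) (by linarith)
        exact Set.disjoint_left.mp (hdisj hP' hP'' hne)
          (hfam P' hP' R hR1 hx) (hfam P'' hP'' R hR2 hx)
      refine ⟨B.biUnion f, ⟨?_, ?_, ?_, ?_, ?_, ?_⟩, ?_⟩
      · obtain ⟨P₀, hP₀⟩ := hBnonempty
        obtain ⟨R₀, hR₀⟩ := (hf1 P₀ hP₀).1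
        exact ⟨R₀, Finset.mem_biUnion.mpr ⟨P₀, hP₀, hR₀⟩⟩
      · intro R hR
        obtain ⟨P', hP', hRf⟩ := Finset.mem_biUnion.mp hR
        exact hRtriple P' hP' R hRf
      · intro R hR
        obtain ⟨P', hP', hRf⟩ := Finset.mem_biUnion.mp hR
        exact dens_comp hε hPpos (triples_side_pos (hsel P' hP').1)
          (triples_side_pos (hRtriple P' hP' R hRf).1)
          (hdens P' hP') ((hf1 P' hP').2.2.1 R hRf)
      · intro R hR R' hR' hne
        obtain ⟨P', hP', hRf⟩ := Finset.mem_biUnion.mp (Finset.mem_coe.mp hR)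
        obtain ⟨P'', hP'', hRf'⟩ := Finset.mem_biUnion.mp (Finset.mem_coe.mp hR')
        by_cases hPP : P' = P''
        · subst hPP
          exact (hf1 P' hP').2.2.2.1 hRf hRf' hne
        · exact Disjoint.mono (hfam P' hP' R hRf) (hfam P'' hP'' R' hRf')
            (hdisj hP' hP'' hPP)
      · intro R hR
        obtain ⟨P', hP', hRf⟩ := Finset.mem_biUnion.mp hR
        exact (hfam P' hP' R hRf).trans (hsub P' hP')
      · rw [Finset.sum_biUnion hpairdisj]
        refine le_trans hen (Finset.sum_le_sum ?_)
        intro P' hP'B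
        have hP'pos := triples_side_pos (hsel P' hP'B).1
        have hen' := (hf1 P' hP'B).2.2.2.2.2
        calc DensR μ s P' ^ 2 * (2:ℝ) ^ (-(2 * ε) * ratio P.2 P'.2) *
              (μ (cubeSet P'.1 P'.2)).toReal
            = (2:ℝ) ^ (-(2 * ε) * ratio P.2 P'.2) *
              (DensR μ s P' ^ 2 * (μ (cubeSet P'.1 P'.2)).toReal) := by ring
          _ ≤ (2:ℝ) ^ (-(2 * ε) * ratio P.2 P'.2) *
              ∑ R ∈ f P', DensR μ s R ^ 2 * (2:ℝ) ^ (-(2 * ε) * ratio P'.2 R.2) *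
                (μ (cubeSet R.1 R.2)).toReal :=
            mul_le_mul_of_nonneg_left hen' (Real.rpow_nonneg (by norm_num) _)
          _ ≤ ∑ R ∈ f P', DensR μ s R ^ 2 * (2:ℝ) ^ (-(2 * ε) * ratio P.2 R.2) *
                (μ (cubeSet R.1 R.2)).toReal := by
            rw [Finset.mul_sum]
            refine Finset.sum_le_sum ?_
            intro R hRf
            have hRpos := triples_side_pos (hRtriple P' hP'B R hRf).1
            have hec := exp_comp hε hPpos hP'pos hRpos
            calc (2:ℝ) ^ (-(2 * ε) * ratio P.2 P'.2) *
                  (DensR μ s R ^ 2 * (2:ℝ) ^ (-(2 * ε) * ratio P'.2 R.2) *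
                    (μ (cubeSet R.1 R.2)).toReal)
                = ((2:ℝ) ^ (-(2 * ε) * ratio P.2 P'.2) *
                    (2:ℝ) ^ (-(2 * ε) * ratio P'.2 R.2)) *
                  (DensR μ s R ^ 2 * (μ (cubeSet R.1 R.2)).toReal) := by ring
              _ ≤ (2:ℝ) ^ (-(2 * ε) * ratio P.2 R.2) *
                  (DensR μ s R ^ 2 * (μ (cubeSet R.1 R.2)).toReal) := by
                  apply mul_le_mul_of_nonneg_right hec
                  positivity
              _ = DensR μ s R ^ 2 * (2:ℝ) ^ (-(2 * ε) * ratio P.2 R.2) *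
                  (μ (cubeSet R.1 R.2)).toReal := by ring
      · intro R hR
        obtain ⟨P', hP', hRf⟩ := Finset.mem_biUnion.mp hR
        exact hf2 P' hP' R hRf

/-- Every selected cube of positive measure is dominated from below by a bunch of doubly
selected cubes. -/
theorem dominated_by_doubly_selected (d : ℕ) (s : ℝ) (hs : s ∈ Set.Ioo 0 (d : ℝ))
    (ε : ℝ) (hε : 0 < ε) (μ : Measure (Pt d)) (hloc : IsLocallyFiniteMeasure μ)
    (hsup : ∃ M : ℝ, ∀ Q ∈ triples d, DensR μ s Q ≤ M) :
    ∀ Q ∈ Dsel μ s ε, 0 < μ (cubeSet Q.1 Q.2) →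
      ∃ B : Finset ((Fin d → ℝ) × ℝ), DomBelow μ s ε Q B ∧ ∀ P ∈ B, P ∈ DhatSel μ s ε := by
  have hd : 0 < d := by
    rcases Nat.eq_zero_or_pos d with h | h
    · exfalso
      rw [h] at hs
      obtain ⟨h1, h2⟩ := hs
      norm_num at h2
      linarith
    · exact h
  obtain ⟨M, hM⟩ := hsup
  intro Q hQ hμ
  have hQpos := triples_side_pos hQ.1
  have hDQ : 0 < DensR μ s Q := densR_pos hQpos hμ
  set k := ⌈Real.logb 2 (M / DensR μ s Q) / ε⌉₊ with hk
  apply main_claim d hd s ε hε μ k Q hQ hμ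
  intro R hRt hRle hRd
  have hRpos := triples_side_pos hRt
  have h1 : (2:ℝ) ^ (ε * ratio Q.2 R.2) ≤ M / DensR μ s Q := by
    rw [le_div_iff₀ hDQ]
    exact hRd.trans (hM R hRt)
  have hposM : 0 < M / DensR μ s Q :=
    lt_of_lt_of_le (Real.rpow_pos_of_pos two_pos _) h1
  have h2 : ε * ratio Q.2 R.2 ≤ Real.logb 2 (M / DensR μ s Q) :=
    (Real.le_logb_iff_rpow_le one_lt_two hposM).mpr h1
  have h3 : ratio Q.2 R.2 ≤ (k : ℝ) := by
    have hr2 : ratio Q.2 R.2 ≤ Real.logb 2 (M / DensR μ s Q) / ε := by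
      rw [le_div_iff₀ hε]
      linarith [h2]
    exact hr2.trans (Nat.le_ceil _)
  have hrr : ratio Q.2 R.2 = Real.logb 2 (Q.2 / R.2) := by
    unfold ratio
    rw [abs_of_nonpos (Real.logb_nonpos one_lt_two (by positivity)
      (by rw [div_le_one hQpos]; exact hRle)), ← Real.logb_inv]
    congr 1
    field_simp
  rw [hrr] at h3
  have h4 : Q.2 / R.2 ≤ (2:ℝ) ^ (k : ℝ) :=
    (Real.logb_le_iff_le_rpow one_lt_two (by positivity)).mp h3
  rw [Real.rpow_natCast] at h4
  rw [div_le_iff₀ hRpos] at h4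
  linarith
end
end

section
/- Let μ be a smoothly reflectionless measure on ℝ^d. Then for every open ball B ⊂ ℝ^d there is a constant Λ_B ∈ ℝ such that μ(x+B) − μ(x−B) = Λ_B for all x ∈ supp(μ). -/
open MeasureTheory Metric Set Filter
noncomputable section

/-- The closed support of a measure: points all of whose balls have positive measure. -/
def msupp {d : ℕ} (μ : Measure (Pt d)) : Set (Pt d) :=
  {x | ∀ r : ℝ, 0 < r → 0 < μ (ball x r)}

/-- `μ` is smoothly reflectionless: for every odd compactly supported Lipschitz function `φ`,
the convolution `φ * μ` is constant on the support of `μ`. -/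
def SmoothlyReflectionless {d : ℕ} (μ : Measure (Pt d)) : Prop :=
  ∀ φ : Pt d → ℝ, (∀ x, φ (-x) = -φ x) → HasCompactSupport φ →
    (∃ K : NNReal, LipschitzWith K φ) →
    ∃ Λ : ℝ, ∀ x ∈ msupp μ, (∫ y, φ (x - y) ∂μ) = Λ

/-- For a smoothly reflectionless measure, for every open ball `B = B(x₀,r)` there is a
constant `Λ_B` with `μ(x+B) − μ(x−B) = Λ_B` for all `x ∈ supp μ`. -/
theorem reflectionless_ball_constant (d : ℕ) (μ : Measure (Pt d))
    (hloc : IsLocallyFiniteMeasure μ) (hrefl : SmoothlyReflectionless μ) :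
    ∀ (x₀ : Pt d) (r : ℝ), 0 < r →
      ∃ Λ : ℝ, ∀ x ∈ msupp μ,
        (μ (ball (x + x₀) r)).toReal - (μ (ball (x - x₀) r)).toReal = Λ := by
  intro x₀ r hr
  -- bump functions approximating the indicator of `ball 0 r`
  set f : ℕ → Pt d → ℝ := fun n z => min 1 ((n : ℝ) * max (r - ‖z‖) 0) with hfdef
  have hf_norm : ∀ n (z w : Pt d), ‖z‖ = ‖w‖ → f n z = f n w := by
    intro n z w h; simp [hfdef, h]
  have hf_lip : ∀ n : ℕ, LipschitzWith n (f n) := by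
    intro n
    have h1 : LipschitzWith 1 (fun z : Pt d => max (r - ‖z‖) 0) := by
      have : LipschitzWith 1 (fun z : Pt d => r - ‖z‖) := by
        simpa using (LipschitzWith.const' r (K := 0)).sub lipschitzWith_one_norm
      simpa using this.max_const 0
    have h2 : LipschitzWith n (fun z : Pt d => (n : ℝ) * max (r - ‖z‖) 0) := by
      have := (lipschitzWith_smul (β := ℝ) ((n:ℝ))).comp h1
      simpa [smul_eq_mul, Function.comp_def] using this
    simpa [hfdef] using h2.const_min 1
  have hf_cont : ∀ n, Continuous (f n) := fun n => (hf_lip n).continuous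
  have hf_zero : ∀ n (z : Pt d), r ≤ ‖z‖ → f n z = 0 := by
    intro n z hz
    have : max (r - ‖z‖) 0 = 0 := max_eq_right (by linarith)
    simp [hfdef, this]
  have hf_mono : ∀ z : Pt d, Monotone fun n => f n z := by
    intro z m k hmk
    exact min_le_min le_rfl (mul_le_mul_of_nonneg_right (by exact_mod_cast hmk) (le_max_right _ _))
  have hf_tendsto : ∀ z : Pt d,
      Tendsto (fun n => f n z) atTop (nhds ((ball (0 : Pt d) r).indicator (fun _ => (1:ℝ)) z)) := by
    intro z
    by_cases hz : z ∈ ball (0 : Pt d) r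
    · have ht : 0 < r - ‖z‖ := by
        have := mem_ball_zero_iff.mp hz; linarith
      have hmax : max (r - ‖z‖) 0 = r - ‖z‖ := max_eq_left ht.le
      rw [indicator_of_mem hz]
      have : ∀ᶠ n : ℕ in atTop, f n z = 1 := by
        have := eventually_atTop.mpr ⟨⌈(r - ‖z‖)⁻¹⌉₊, fun n hn => le_refl n⟩
        filter_upwards [eventually_ge_atTop (⌈(r - ‖z‖)⁻¹⌉₊ + 1)] with n hn
        have h1 : (1:ℝ) ≤ (n : ℝ) * (r - ‖z‖) := by
          have hn' : (r - ‖z‖)⁻¹ ≤ (n : ℝ) := by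
            calc (r - ‖z‖)⁻¹ ≤ (⌈(r - ‖z‖)⁻¹⌉₊ : ℝ) := Nat.le_ceil _
            _ ≤ (n : ℝ) := by exact_mod_cast le_trans (Nat.le_succ _) hn
          calc (1:ℝ) = (r - ‖z‖)⁻¹ * (r - ‖z‖) := (inv_mul_cancel₀ ht.ne').symm
          _ ≤ (n : ℝ) * (r - ‖z‖) := mul_le_mul_of_nonneg_right hn' ht.le
        simp [hfdef, hmax, min_eq_left h1]
      exact Tendsto.congr' (this.mono fun n h => h.symm) tendsto_const_nhds
    · have hz' : r ≤ ‖z‖ := by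
        have := mem_ball_zero_iff.not.mp hz; linarith [not_lt.mp this]
      rw [indicator_of_notMem hz]
      simp only [hf_zero _ _ hz']; exact (tendsto_const_nhds : Tendsto (fun _ : ℕ => (0:ℝ)) atTop _)
  -- integrability and convergence of ∫ f n (c - y) dμ
  have hball_fin : ∀ c : Pt d, μ (ball c r) < ⊤ := by
    intro c
    exact lt_of_le_of_lt (measure_mono ball_subset_closedBall)
      (isCompact_closedBall c r).measure_lt_top
  have hint : ∀ (n : ℕ) (c : Pt d), Integrable (fun y => f n (c - y)) μ := by
    intro n c
    refine Continuous.integrable_of_hasCompactSupport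
      ((hf_cont n).comp (continuous_const.sub continuous_id)) ?_
    refine HasCompactSupport.intro (isCompact_closedBall c r) ?_
    intro y hy
    refine hf_zero n _ ?_
    have : r < dist y c := by simpa [Metric.mem_closedBall, not_le] using hy
    rw [show c - y = -(y - c) by abel, norm_neg]
    simpa [dist_eq_norm] using this.le
  have hA : ∀ c : Pt d,
      Tendsto (fun n => ∫ y, f n (c - y) ∂μ) atTop (nhds ((μ (ball c r)).toReal)) := by
    intro c
    have hind : Integrable ((ball c r).indicator (fun _ => (1:ℝ))) μ := by
      refine (integrable_indicator_iff measurableSet_ball).mpr ?_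
      exact integrableOn_const (hball_fin c).ne
    have key : Tendsto (fun n => ∫ y, f n (c - y) ∂μ) atTop
        (nhds (∫ y, (ball c r).indicator (fun _ => (1:ℝ)) y ∂μ)) := by
      refine integral_tendsto_of_tendsto_of_monotone (fun n => hint n c) hind ?_ ?_
      · exact ae_of_all _ fun y => hf_mono (c - y)
      · refine ae_of_all _ fun y => ?_
        have := hf_tendsto (c - y)
        have hmem : c - y ∈ ball (0 : Pt d) r ↔ y ∈ ball c r := by
          rw [mem_ball_zero_iff, mem_ball, dist_eq_norm, norm_sub_rev]
        by_cases hy : y ∈ ball c r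
        · simpa [indicator_of_mem (hmem.mpr hy), indicator_of_mem hy] using this
        · simpa [indicator_of_notMem (hmem.not.mpr hy), indicator_of_notMem hy] using this
    have : (∫ y, (ball c r).indicator (fun _ => (1:ℝ)) y ∂μ) = (μ (ball c r)).toReal := by
      rw [← measureReal_def]; exact integral_indicator_one (μ := μ) measurableSet_ball
    rwa [this] at key
  -- the odd test functions
  set φ : ℕ → Pt d → ℝ := fun n y => f n (y - x₀) - f n (y + x₀) with hφdef
  have hφ_odd : ∀ n (y : Pt d), φ n (-y) = -φ n y := by
    intro n y
    have h1 : f n (-y - x₀) = f n (y + x₀) := hf_norm n _ _ (by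
      rw [show -y - x₀ = -(y + x₀) by abel, norm_neg])
    have h2 : f n (-y + x₀) = f n (y - x₀) := hf_norm n _ _ (by
      rw [show -y + x₀ = -(y - x₀) by abel, norm_neg])
    simp only [hφdef, h1, h2]; ring
  have hφ_supp : ∀ n, HasCompactSupport (φ n) := by
    intro n
    refine HasCompactSupport.intro ((isCompact_closedBall x₀ r).union
      (isCompact_closedBall (-x₀) r)) ?_
    intro y hy
    simp only [Set.mem_union, Metric.mem_closedBall, not_or, not_le] at hy
    have h1 : f n (y - x₀) = 0 := hf_zero n _ (by
      rw [← dist_eq_norm]; exact hy.1.le)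
    have h2 : f n (y + x₀) = 0 := hf_zero n _ (by
      rw [show y + x₀ = y - (-x₀) by abel, ← dist_eq_norm]; exact hy.2.le)
    simp [hφdef, h1, h2]
  have hφ_lip : ∀ n, ∃ K : NNReal, LipschitzWith K (φ n) := by
    intro n
    refine ⟨n * 1 + n * 1, ?_⟩
    have s1 : LipschitzWith 1 (fun y : Pt d => y - x₀) :=
      LipschitzWith.of_dist_le_mul fun a b => by simp [dist_sub_right]
    have s2 : LipschitzWith 1 (fun y : Pt d => y + x₀) :=
      LipschitzWith.of_dist_le_mul fun a b => by simp [dist_add_right]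
    have l1 : LipschitzWith (n * 1) (fun y : Pt d => f n (y - x₀)) := (hf_lip n).comp s1
    have l2 : LipschitzWith (n * 1) (fun y : Pt d => f n (y + x₀)) := (hf_lip n).comp s2
    have := l1.sub l2
    simpa [mul_one] using this
  -- apply the hypothesis and pass to the limit
  have hΛ : ∀ n : ℕ, ∃ Λ : ℝ, ∀ x ∈ msupp μ, (∫ y, φ n (x - y) ∂μ) = Λ :=
    fun n => hrefl (φ n) (hφ_odd n) (hφ_supp n) (hφ_lip n)
  choose Λ hΛ using hΛ
  have hconv : ∀ x : Pt d,
      Tendsto (fun n => ∫ y, φ n (x - y) ∂μ) atTop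
        (nhds ((μ (ball (x - x₀) r)).toReal - (μ (ball (x + x₀) r)).toReal)) := by
    intro x
    have hsplit : ∀ n, (∫ y, φ n (x - y) ∂μ)
        = (∫ y, f n ((x - x₀) - y) ∂μ) - (∫ y, f n ((x + x₀) - y) ∂μ) := by
      intro n
      have e1 : ∀ y : Pt d, f n ((x - y) - x₀) = f n ((x - x₀) - y) := by
        intro y; congr 1; abel
      have e2 : ∀ y : Pt d, f n ((x - y) + x₀) = f n ((x + x₀) - y) := by
        intro y; congr 1; abel
      calc (∫ y, φ n (x - y) ∂μ)
          = ∫ y, (f n ((x - x₀) - y) - f n ((x + x₀) - y)) ∂μ := by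
            refine integral_congr_ae (ae_of_all _ fun y => ?_)
            simp only [hφdef]; rw [e1 y, e2 y]
        _ = _ := integral_sub (hint n (x - x₀)) (hint n (x + x₀))
    rw [funext hsplit]
    exact (hA (x - x₀)).sub (hA (x + x₀))
  by_cases hne : ∃ x, x ∈ msupp μ
  · obtain ⟨x₁, hx₁⟩ := hne
    refine ⟨(μ (ball (x₁ + x₀) r)).toReal - (μ (ball (x₁ - x₀) r)).toReal, ?_⟩
    intro x hx
    have t1 : Tendsto (fun n => Λ n) atTop
        (nhds ((μ (ball (x - x₀) r)).toReal - (μ (ball (x + x₀) r)).toReal)) := by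
      refine Tendsto.congr (fun n => hΛ n x hx) (hconv x)
    have t2 : Tendsto (fun n => Λ n) atTop
        (nhds ((μ (ball (x₁ - x₀) r)).toReal - (μ (ball (x₁ + x₀) r)).toReal)) := by
      refine Tendsto.congr (fun n => hΛ n x₁ hx₁) (hconv x₁)
    have := tendsto_nhds_unique t1 t2
    linarith
  · exact ⟨0, fun x hx => absurd ⟨x, hx⟩ hne⟩
end
end

section
/- (Two-point lemma) Let μ be a smoothly reflectionless measure and x, y ∈ supp(μ), z = y − x. Then x + kz ∈ supp(μ) for every k ∈ ℤ, and moreover μ(B(x + 2kz, r)) = μ(B(x, r)) for every k ∈ ℤ and r > 0. -/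
open MeasureTheory Metric Set Filter
noncomputable section

open Topology

-- cutoff functions
def cut (r : ℝ) (n : ℕ) (t : ℝ) : ℝ := max 0 (min 1 (((n : ℝ) + 1) * (r - t)))

lemma lip_mul (a : ℝ) : LipschitzWith ⟨|a|, abs_nonneg a⟩ (fun t : ℝ => a * t) :=
  LipschitzWith.of_dist_le_mul fun x y => by
    rw [Real.dist_eq, Real.dist_eq, ← mul_sub, abs_mul]; exact le_rfl

lemma lip_const_sub (r : ℝ) : LipschitzWith 1 (fun t : ℝ => r - t) :=
  LipschitzWith.mk_one fun a b => le_of_eq (dist_sub_left r a b)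

lemma lip_clamp : LipschitzWith 1 (fun t : ℝ => max 0 (min 1 t)) :=
  (LipschitzWith.id.const_min 1).const_max 0

lemma cut_lip (r : ℝ) (n : ℕ) : ∃ K : NNReal, LipschitzWith K (cut r n) := by
  refine ⟨1 * (⟨|((n:ℝ)+1)|, abs_nonneg _⟩ * 1), ?_⟩
  exact lip_clamp.comp ((lip_mul _).comp (lip_const_sub r))

lemma cut_nonneg (r : ℝ) (n : ℕ) (t : ℝ) : 0 ≤ cut r n t := le_max_left _ _

lemma cut_le_one (r : ℝ) (n : ℕ) (t : ℝ) : cut r n t ≤ 1 :=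
  max_le zero_le_one (min_le_left _ _)

lemma cut_eq_zero (r : ℝ) (n : ℕ) {t : ℝ} (h : r ≤ t) : cut r n t = 0 := by
  have h1 : ((n : ℝ) + 1) * (r - t) ≤ 0 :=
    mul_nonpos_of_nonneg_of_nonpos (by positivity) (by linarith)
  have h2 : min 1 (((n : ℝ) + 1) * (r - t)) ≤ 0 := le_trans (min_le_right _ _) h1
  simp [cut, max_eq_left h2]

lemma cut_tendsto (r : ℝ) {t : ℝ} (h : t < r) :
    Tendsto (fun n : ℕ => cut r n t) atTop (𝓝 1) := by
  have hε : 0 < r - t := by linarith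
  apply tendsto_const_nhds.congr'
  obtain ⟨N, hN⟩ := exists_nat_ge (1 / (r - t))
  filter_upwards [eventually_ge_atTop N] with n hn
  have h1 : (1 : ℝ) ≤ ((n : ℝ) + 1) * (r - t) := by
    have : (1 / (r - t)) * (r - t) ≤ ((n : ℝ) + 1) * (r - t) := by
      apply mul_le_mul_of_nonneg_right _ hε.le
      have : (N : ℝ) ≤ (n : ℝ) := Nat.cast_le.2 hn
      linarith
    rwa [one_div_mul_cancel hε.ne'] at this
  simp [cut, min_eq_left h1]

lemma cut_cont (r : ℝ) (n : ℕ) : Continuous (cut r n) := by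
  obtain ⟨K, h⟩ := cut_lip r n; exact h.continuous

lemma cut_integrable {d : ℕ} (μ : Measure (Pt d)) [IsLocallyFiniteMeasure μ]
    (q : Pt d) (r : ℝ) (n : ℕ) : Integrable (fun w => cut r n (dist w q)) μ := by
  apply Continuous.integrable_of_hasCompactSupport
  · exact (cut_cont r n).comp (continuous_id.dist continuous_const)
  · apply HasCompactSupport.intro (isCompact_closedBall q r)
    intro w hw
    exact cut_eq_zero r n (le_of_lt (by simpa [closedBall, dist] using hw))

lemma cut_integral_tendsto {d : ℕ} (μ : Measure (Pt d)) [IsLocallyFiniteMeasure μ]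
    (q : Pt d) (r : ℝ) :
    Tendsto (fun n : ℕ => ∫ w, cut r n (dist w q) ∂μ) atTop (𝓝 (μ (ball q r)).toReal) := by
  have hind : ∫ w, (ball q r).indicator (fun _ => (1:ℝ)) w ∂μ = (μ (ball q r)).toReal := by
    exact integral_indicator_one (μ := μ) measurableSet_ball
  rw [← hind]
  apply tendsto_integral_of_dominated_convergence
      ((closedBall q r).indicator (fun _ => (1:ℝ)))
  · intro n
    exact ((cut_cont r n).comp (continuous_id.dist continuous_const)).aestronglyMeasurable
  · rw [integrable_indicator_iff measurableSet_closedBall]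
    exact integrableOn_const measure_closedBall_lt_top.ne
  · intro n
    filter_upwards with w
    by_cases hw : w ∈ closedBall q r
    · rw [indicator_of_mem hw]
      rw [Real.norm_eq_abs, abs_of_nonneg (cut_nonneg _ _ _)]
      exact cut_le_one _ _ _
    · rw [indicator_of_notMem hw]
      rw [cut_eq_zero _ _ (le_of_lt (by simpa [closedBall, dist] using hw))]
      simp
  · filter_upwards with w
    by_cases hw : w ∈ ball q r
    · rw [indicator_of_mem hw]
      exact cut_tendsto r (by simpa [ball, dist] using hw)
    · rw [indicator_of_notMem hw]
      have : ∀ n : ℕ, cut r n (dist w q) = 0 := fun n =>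
        cut_eq_zero r n (by simpa [ball, dist, not_lt] using hw)
      simp only [this]
      exact tendsto_const_nhds

lemma dist_sub_helper {d : ℕ} (p q w : Pt d) : dist (p - w) q = dist w (p - q) := by
  rw [dist_eq_norm, dist_eq_norm, show p - w - q = -(w - (p - q)) by abel, norm_neg]

lemma key {d : ℕ} (μ : Measure (Pt d)) [IsLocallyFiniteMeasure μ]
    (hrefl : SmoothlyReflectionless μ) {u v : Pt d}
    (hu : u ∈ msupp μ) (hv : v ∈ msupp μ) (c : Pt d) (r : ℝ) :
    (μ (ball (u - c) r)).toReal - (μ (ball (u + c) r)).toReal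
      = (μ (ball (v - c) r)).toReal - (μ (ball (v + c) r)).toReal := by
  set φ : ℕ → Pt d → ℝ := fun n w => cut r n (dist w c) - cut r n (dist w (-c)) with hφ
  have hdn : ∀ w : Pt d, dist (-w) c = dist w (-c) := fun w => by
    rw [← dist_neg_neg, neg_neg]
  have hodd : ∀ n (w : Pt d), φ n (-w) = - φ n w := by
    intro n w
    simp only [hφ, hdn w, ← dist_neg_neg (-w) (-c), neg_neg]
    ring
  have hK : ∀ n, ∃ K : NNReal, LipschitzWith K (φ n) := by
    intro n
    obtain ⟨K, hKl⟩ := cut_lip r n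
    exact ⟨K * 1 + K * 1, ((hKl.comp (LipschitzWith.dist_left c)).sub
      (hKl.comp (LipschitzWith.dist_left (-c))))⟩
  have hsupp : ∀ n, HasCompactSupport (φ n) := by
    intro n
    apply HasCompactSupport.intro ((isCompact_closedBall c r).union (isCompact_closedBall (-c) r))
    intro w hw
    simp only [Set.mem_union, mem_closedBall, not_or, not_le] at hw
    simp only [hφ, cut_eq_zero r n hw.1.le, cut_eq_zero r n hw.2.le, sub_zero]
  choose Λ hΛ using fun n => hrefl (φ n) (hodd n) (hsupp n) (hK n)
  have hI : ∀ p : Pt d, Tendsto (fun n => ∫ w, φ n (p - w) ∂μ) atTop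
      (𝓝 ((μ (ball (p - c) r)).toReal - (μ (ball (p + c) r)).toReal)) := by
    intro p
    have he : ∀ n, (∫ w, φ n (p - w) ∂μ)
        = (∫ w, cut r n (dist w (p - c)) ∂μ) - ∫ w, cut r n (dist w (p + c)) ∂μ := by
      intro n
      rw [← integral_sub (cut_integrable μ _ r n) (cut_integrable μ _ r n)]
      refine integral_congr_ae (Eventually.of_forall fun w => ?_)
      simp only [hφ, dist_sub_helper p c w, dist_sub_helper p (-c) w, sub_neg_eq_add]
    simp only [he]
    exact (cut_integral_tendsto μ (p - c) r).sub (cut_integral_tendsto μ (p + c) r)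
  have h1 := hI u
  have h2 := hI v
  have heq : (fun n => ∫ w, φ n (u - w) ∂μ) = fun n => ∫ w, φ n (v - w) ∂μ :=
    funext fun n => by rw [hΛ n u hu, hΛ n v hv]
  rw [heq] at h1
  exact tendsto_nhds_unique h1 h2

lemma pairSum {d : ℕ} (μ : Measure (Pt d)) [IsLocallyFiniteMeasure μ]
    (hrefl : SmoothlyReflectionless μ) {u v : Pt d} (hu : u ∈ msupp μ) (hv : v ∈ msupp μ)
    (r : ℝ) (k : ℤ) :
    (μ (ball (u + k • (v - u)) r)).toReal + (μ (ball (u + (1 - k) • (v - u)) r)).toReal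
      = (μ (ball u r)).toReal + (μ (ball v r)).toReal := by
  set w : Pt d := v - u with hw
  set a : ℤ → ℝ := fun n => (μ (ball (u + n • w) r)).toReal with ha
  have hvw : v = u + (1 : ℤ) • w := by simp [hw]
  have rel : ∀ k : ℤ, a (-k) + a (1 + k) = a k + a (1 - k) := by
    intro k
    have H := key μ hrefl hu hv (k • w) r
    have e1 : u - k • w = u + (-k) • w := by rw [neg_smul]; abel
    have e2 : v - k • w = u + (1 - k) • w := by rw [hvw, sub_smul, one_smul]; abel
    have e3 : v + k • w = u + (1 + k) • w := by rw [hvw, add_smul, one_smul]; abel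
    rw [e1, e2, e3] at H
    have : a (-k) - a k = a (1 - k) - a (1 + k) := H
    linarith
  have step : ∀ k : ℤ, a (k + 1) + a (1 - (k + 1)) = a k + a (1 - k) := by
    intro k
    have h1 := rel k
    have e1 : (1 - (k + 1) : ℤ) = -k := by ring
    have e2 : (1 + k : ℤ) = k + 1 := by ring
    rw [e1]
    rw [e2] at h1
    linarith
  have main : ∀ k : ℤ, a k + a (1 - k) = a 0 + a 1 := by
    intro k
    induction k using Int.induction_on with
    | zero => norm_num
    | succ n ih => rw [step n]; exact ih
    | pred n ih =>
        have := step (-n - 1)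
        have e : (-n - 1 + 1 : ℤ) = -n := by ring
        rw [e] at this
        rw [← this]
        exact ih
  have h0 : a 0 = (μ (ball u r)).toReal := by simp [ha]
  have huw : u + (1 : ℤ) • w = v := by rw [one_smul, hw]; abel
  have h1 : a 1 = (μ (ball v r)).toReal := by rw [ha]; simp only [huw]
  have := main k
  rw [h0, h1] at this
  exact this

lemma seq_rigid (f : ℤ → ℝ) (δ : ℝ) (h2 : ∀ j : ℤ, f (j + 2) = f j + δ)
    (h0 : ∀ j : ℤ, 0 ≤ f j) : ∀ n : ℤ, f (2 * n) = f 0 ∧ f (2 * n + 1) = f 1 := by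
  have keyrec : ∀ n : ℤ, ∀ t : ℤ, f (t + 2 * n) = f t + (n : ℝ) * δ := by
    intro n
    induction n using Int.induction_on with
    | zero => intro t; simp
    | succ m ih =>
        intro t
        have e : (t + 2 * ((m : ℤ) + 1) : ℤ) = (t + 2 * m) + 2 := by ring
        rw [e, h2, ih]
        push_cast
        ring
    | pred m ih =>
        intro t
        have h := h2 (t + 2 * (-(m : ℤ) - 1))
        have e : (t + 2 * (-(m : ℤ) - 1) + 2 : ℤ) = t + 2 * (-(m : ℤ)) := by ring
        rw [e, ih] at h
        push_cast at h ⊢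
        linarith
  have hδ : δ = 0 := by
    by_contra hne
    have habs : 0 < |δ| := abs_pos.2 hne
    obtain ⟨N, hN⟩ := exists_nat_gt (f 0 / |δ|)
    have hlt : f 0 < (N : ℝ) * |δ| := by
      rw [div_lt_iff₀ habs] at hN
      exact hN
    set n : ℤ := if δ < 0 then (N : ℤ) else -(N : ℤ) with hn
    have hval : (n : ℝ) * δ = -((N : ℝ) * |δ|) := by
      by_cases hd : δ < 0
      · simp only [hn, if_pos hd]
        rw [abs_of_neg hd]
        push_cast
        ring
      · have hpos : 0 < δ := lt_of_le_of_ne (not_lt.1 hd) (Ne.symm hne)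
        simp only [hn, if_neg hd]
        rw [abs_of_pos hpos]
        push_cast
        ring
    have hk := keyrec n 0
    rw [hval] at hk
    have := h0 (0 + 2 * n)
    linarith
  intro n
  constructor
  · have := keyrec n 0
    rw [hδ] at this
    simpa using this
  · have := keyrec n 1
    rw [hδ] at this
    have e : (1 + 2 * n : ℤ) = 2 * n + 1 := by ring
    rw [e] at this
    simpa using this

lemma ball_toReal_pos {d : ℕ} {μ : Measure (Pt d)} [IsLocallyFiniteMeasure μ]
    {p : Pt d} (hp : p ∈ msupp μ) {r : ℝ} (hr : 0 < r) : 0 < (μ (ball p r)).toReal :=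
  ENNReal.toReal_pos (hp r hr).ne' measure_ball_lt_top.ne

lemma mem_msupp_of_toReal_pos {d : ℕ} {μ : Measure (Pt d)} {p : Pt d}
    (h : ∀ r : ℝ, 0 < r → 0 < (μ (ball p r)).toReal) : p ∈ msupp μ := by
  intro r hr
  have := h r hr
  refine pos_iff_ne_zero.2 fun h0 => ?_
  rw [h0] at this
  simp at this

lemma extend_down {d : ℕ} (μ : Measure (Pt d)) [IsLocallyFiniteMeasure μ]
    (hrefl : SmoothlyReflectionless μ) {u v : Pt d} (hu : u ∈ msupp μ) (hv : v ∈ msupp μ) :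
    u - (v - u) ∈ msupp μ := by
  set w : Pt d := v - u with hw
  set a : ℝ → ℤ → ℝ := fun r n => (μ (ball (u + n • w) r)).toReal with ha
  have hvw : v = u + w := by rw [hw]; abel
  have e0 : ∀ r : ℝ, (μ (ball u r)).toReal = a r 0 := by intro r; simp [ha]
  have e1 : ∀ r : ℝ, (μ (ball v r)).toReal = a r 1 := by
    intro r
    have : u + (1 : ℤ) • w = v := by rw [one_smul, hvw]
    simp only [ha, this]
  have em1 : ∀ r : ℝ, (μ (ball (u - w) r)).toReal = a r (-1) := by
    intro r
    have : u + (-1 : ℤ) • w = u - w := by rw [neg_smul, one_smul, sub_eq_add_neg]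
    simp only [ha, this]
  have PS1 : ∀ (r : ℝ) (k : ℤ), a r k + a r (1 - k) = a r 0 + a r 1 := by
    intro r k
    have H := pairSum μ hrefl hu hv r k
    rw [e0 r, e1 r] at H
    exact H
  -- suppose u - w were not in the support
  by_contra hns
  simp only [msupp, Set.mem_setOf_eq] at hns
  push_neg at hns
  obtain ⟨r0, hr0, hz⟩ := hns
  have hz0 : μ (ball (u - w) r0) = 0 := le_zero_iff.1 hz
  -- then u + 2w is in the support
  have base : ∀ r : ℝ, 0 < r → r ≤ r0 → 0 < a r 2 := by
    intro r hr hrr0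
    have hz' : μ (ball (u - w) r) = 0 := measure_mono_null (ball_subset_ball hrr0) hz0
    have H := PS1 r (-1)
    have eidx : (1 - (-1) : ℤ) = 2 := by norm_num
    rw [eidx] at H
    have hm1 : a r (-1) = 0 := by rw [← em1 r, hz']; simp
    have h0pos : 0 < a r 0 := by rw [← e0 r]; exact ball_toReal_pos hu hr
    have h1pos : 0 < a r 1 := by rw [← e1 r]; exact ball_toReal_pos hv hr
    linarith
  have hu2 : u + (2 : ℤ) • w ∈ msupp μ := by
    apply mem_msupp_of_toReal_pos
    intro r hr
    rcases le_or_gt r r0 with h | h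
    · exact base r hr h
    · have h2 := base r0 hr0 le_rfl
      have : a r0 2 ≤ a r 2 := by
        apply ENNReal.toReal_mono measure_ball_lt_top.ne
        exact measure_mono (ball_subset_ball h.le)
      linarith
  -- second family of relations from the pair (v, u + 2w)
  have hdiff : (u + (2 : ℤ) • w) - v = w := by rw [hvw, two_zsmul]; abel
  have ev : ∀ k : ℤ, v + k • w = u + (1 + k) • w := by
    intro k
    rw [hvw, add_smul, one_smul]
    abel
  have e2 : ∀ r : ℝ, (μ (ball (u + (2 : ℤ) • w) r)).toReal = a r 2 := fun r => rfl
  have PS2 : ∀ (r : ℝ) (k : ℤ), a r (1 + k) + a r (1 + (1 - k)) = a r 1 + a r 2 := by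
    intro r k
    have H := pairSum μ hrefl hv hu2 r k
    rw [hdiff, ev k, ev (1 - k), e1 r, e2 r] at H
    exact H
  -- rigidity
  have h2step : ∀ j : ℤ, a r0 (j + 2) = a r0 j + (a r0 2 - a r0 0) := by
    intro j
    have A := PS2 r0 (j + 1)
    have eA1 : (1 + (j + 1) : ℤ) = j + 2 := by ring
    have eA2 : (1 + (1 - (j + 1)) : ℤ) = 1 - j := by ring
    rw [eA1, eA2] at A
    have B := PS1 r0 j
    linarith
  have hnn : ∀ j : ℤ, 0 ≤ a r0 j := fun j => ENNReal.toReal_nonneg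
  have := (seq_rigid (a r0) _ h2step hnn (-1)).2
  have eidx : (2 * (-1) + 1 : ℤ) = -1 := by ring
  rw [eidx] at this
  have hm1 : a r0 (-1) = 0 := by rw [← em1 r0, hz0]; simp
  have h1pos : 0 < a r0 1 := by rw [← e1 r0]; exact ball_toReal_pos hv hr0
  rw [hm1] at this
  linarith

lemma extend_up {d : ℕ} (μ : Measure (Pt d)) [IsLocallyFiniteMeasure μ]
    (hrefl : SmoothlyReflectionless μ) {u v : Pt d} (hu : u ∈ msupp μ) (hv : v ∈ msupp μ) :
    v + (v - u) ∈ msupp μ := by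
  have := extend_down μ hrefl hv hu
  have e : v - (u - v) = v + (v - u) := by abel
  rwa [e] at this


/-- Two-point lemma: if `x, y ∈ supp μ` and `z = y − x`, then `x + kz ∈ supp μ` for all
`k ∈ ℤ`, and `μ(B(x+2kz, r)) = μ(B(x,r))` for all `k ∈ ℤ`, `r > 0`. -/
theorem two_point_lemma (d : ℕ) (μ : Measure (Pt d)) (hloc : IsLocallyFiniteMeasure μ)
    (hrefl : SmoothlyReflectionless μ) (x y : Pt d) (hx : x ∈ msupp μ) (hy : y ∈ msupp μ)
    (z : Pt d) (hz : z = y - x) :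
    (∀ k : ℤ, x + k • z ∈ msupp μ) ∧
    (∀ k : ℤ, ∀ r : ℝ, 0 < r → μ (ball (x + (2 * k) • z) r) = μ (ball x r)) := by
  haveI := hloc
  have hyx : y = x + z := by rw [hz]; abel
  have eup : ∀ k : ℤ, (x + k • z) + z = x + (k + 1) • z := by
    intro k; rw [add_smul, one_smul]; abel
  have consec : ∀ k : ℤ, (x + (k + 1) • z) - (x + k • z) = z := by
    intro k; rw [add_smul, one_smul]; abel
  have Q : ∀ k : ℤ, x + k • z ∈ msupp μ ∧ x + (k + 1) • z ∈ msupp μ := by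
    intro k
    induction k using Int.induction_on with
    | zero =>
        constructor
        · simpa using hx
        · have e : x + (0 + 1 : ℤ) • z = y := by rw [hyx]; norm_num
          rw [e]; exact hy
    | succ n ih =>
        refine ⟨ih.2, ?_⟩
        have H := extend_up μ hrefl ih.1 ih.2
        rw [consec n, eup ((n : ℤ) + 1)] at H
        exact H
    | pred n ih =>
        constructor
        · have H := extend_down μ hrefl ih.1 ih.2
          have e1 : (x + (-(n : ℤ)) • z) - ((x + ((-(n : ℤ)) + 1) • z) - (x + (-(n : ℤ)) • z))
              = x + (-(n : ℤ) - 1) • z := by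
            rw [consec (-(n : ℤ))]
            rw [sub_smul, one_smul]
            abel
          rw [e1] at H
          exact H
        · have e : (-(n : ℤ) - 1 + 1) = -(n : ℤ) := by ring
          rw [e]
          exact ih.1
  refine ⟨fun k => (Q k).1, ?_⟩
  intro k r hr
  set a : ℤ → ℝ := fun n => (μ (ball (x + n • z) r)).toReal with ha
  have e0 : (μ (ball x r)).toReal = a 0 := by simp [ha]
  have e1 : (μ (ball y r)).toReal = a 1 := by
    have : x + (1 : ℤ) • z = y := by rw [one_smul, hyx]
    simp only [ha, this]
  have em1 : (μ (ball (x - z) r)).toReal = a (-1) := by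
    have : x + (-1 : ℤ) • z = x - z := by rw [neg_smul, one_smul, sub_eq_add_neg]
    simp only [ha, this]
  have hxm1 : x - z ∈ msupp μ := by
    have := (Q (-1)).1
    have e : x + (-1 : ℤ) • z = x - z := by rw [neg_smul, one_smul, sub_eq_add_neg]
    rwa [e] at this
  have PS1 : ∀ j : ℤ, a j + a (1 - j) = a 0 + a 1 := by
    intro j
    have H := pairSum μ hrefl hx hy r j
    rw [← hz, e0, e1] at H
    exact H
  have PS0 : ∀ j : ℤ, a (j - 1) + a (-j) = a (-1) + a 0 := by
    intro j
    have H := pairSum μ hrefl hxm1 hx r j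
    have hd : x - (x - z) = z := by abel
    have ew : ∀ m : ℤ, (x - z) + m • z = x + (m - 1) • z := by
      intro m; rw [sub_smul, one_smul]; abel
    rw [hd, ew j, ew (1 - j), em1, e0] at H
    have e : (1 - j - 1 : ℤ) = -j := by ring
    rw [e] at H
    exact H
  have h2step : ∀ j : ℤ, a (j + 2) = a j + (a 1 - a (-1)) := by
    intro j
    have A := PS1 (j + 2)
    have eA : (1 - (j + 2) : ℤ) = -1 - j := by ring
    rw [eA] at A
    have B := PS0 (-j)
    have eB1 : (-j - 1 : ℤ) = -1 - j := by ring
    have eB2 : (-(-j) : ℤ) = j := by ring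
    rw [eB1, eB2] at B
    linarith
  have hnn : ∀ j : ℤ, 0 ≤ a j := fun j => ENNReal.toReal_nonneg
  have hfin := (seq_rigid a _ h2step hnn k).1
  have : (μ (ball (x + (2 * k) • z) r)).toReal = (μ (ball x r)).toReal := by
    rw [e0]; exact hfin
  exact (ENNReal.toReal_eq_toReal_iff' measure_ball_lt_top.ne measure_ball_lt_top.ne).1 this
end
end

section
/- Let μ be a smoothly reflectionless measure on ℝ^d, V a linear subspace, and x₀ ∈ supp(μ) with V + x₀ ⊂ supp(μ). Then for every y ∈ supp(μ), the plane V + y is contained in supp(μ). -/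
open MeasureTheory Metric Set Filter
noncomputable section

/-! ### Auxiliary bump functions -/

/-- A tent bump function of radius `ρ`. -/
def psi {d : ℕ} (ρ : ℝ) (t : Pt d) : ℝ := max (ρ - ‖t‖) 0

lemma psi_nonneg {d : ℕ} (ρ : ℝ) (t : Pt d) : 0 ≤ psi ρ t := le_max_right _ _

lemma psi_even {d : ℕ} (ρ : ℝ) (t : Pt d) : psi ρ (-t) = psi ρ t := by
  simp [psi]

lemma psi_eq_zero {d : ℕ} {ρ : ℝ} {t : Pt d} (h : ρ ≤ ‖t‖) : psi ρ t = 0 :=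
  max_eq_right (by linarith)

lemma psi_ne_zero_iff {d : ℕ} {ρ : ℝ} {t : Pt d} : psi ρ t ≠ 0 ↔ ‖t‖ < ρ := by
  constructor
  · intro h
    by_contra hc
    exact h (psi_eq_zero (not_lt.mp hc))
  · intro h
    have : 0 < ρ - ‖t‖ := by linarith
    simp only [psi]
    positivity

lemma psi_lipschitz {d : ℕ} (ρ : ℝ) : LipschitzWith 1 (psi (d := d) ρ) := by
  have h : LipschitzWith (0 + 1) (fun t : Pt d => ρ - ‖t‖) :=
    (LipschitzWith.const ρ).sub lipschitzWith_one_norm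
  exact (by simpa using h.max_const 0 : LipschitzWith 1 (fun t : Pt d => max (ρ - ‖t‖) 0))

lemma lipschitz_sub_const {d : ℕ} (c : Pt d) : LipschitzWith 1 (fun u : Pt d => u - c) :=
  LipschitzWith.of_dist_le_mul fun u v => by rw [dist_sub_right]; simp

lemma lipschitz_add_const {d : ℕ} (c : Pt d) : LipschitzWith 1 (fun u : Pt d => u + c) :=
  LipschitzWith.of_dist_le_mul fun u v => by rw [dist_add_right]; simp

/-- The convolution of the tent bump with `μ`. -/
def FF {d : ℕ} (μ : Measure (Pt d)) (ρ : ℝ) (u : Pt d) : ℝ := ∫ w, psi ρ (u - w) ∂μ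

lemma support_psi_shift {d : ℕ} (ρ : ℝ) (u : Pt d) :
    Function.support (fun w => psi (d := d) ρ (u - w)) = ball u ρ := by
  ext w
  simp only [Function.mem_support, psi_ne_zero_iff, mem_ball, dist_comm w u, dist_eq_norm]

lemma integrable_psi_shift {d : ℕ} (μ : Measure (Pt d)) [IsLocallyFiniteMeasure μ]
    (ρ : ℝ) (u : Pt d) : Integrable (fun w => psi (d := d) ρ (u - w)) μ := by
  have hcont : Continuous (fun w : Pt d => psi (d := d) ρ (u - w)) :=
    (psi_lipschitz ρ).continuous.comp (continuous_const.sub continuous_id)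
  have hcs : HasCompactSupport (fun w : Pt d => psi (d := d) ρ (u - w)) := by
    apply HasCompactSupport.intro (isCompact_closedBall u ρ)
    intro w hw
    apply psi_eq_zero
    have : ρ < dist w u := by simpa [mem_closedBall, not_le] using hw
    rw [← dist_eq_norm, dist_comm]
    exact this.le
  exact hcont.integrable_of_hasCompactSupport hcs

lemma FF_nonneg {d : ℕ} (μ : Measure (Pt d)) (ρ : ℝ) (u : Pt d) : 0 ≤ FF μ ρ u :=
  integral_nonneg fun w => psi_nonneg _ _

lemma FF_pos_iff {d : ℕ} (μ : Measure (Pt d)) [IsLocallyFiniteMeasure μ] (ρ : ℝ) (u : Pt d) :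
    0 < FF μ ρ u ↔ 0 < μ (ball u ρ) := by
  rw [FF, integral_pos_iff_support_of_nonneg (fun w => psi_nonneg _ _)
    (integrable_psi_shift μ ρ u), support_psi_shift]

lemma FF_eq_zero {d : ℕ} (μ : Measure (Pt d)) [IsLocallyFiniteMeasure μ] {ρ : ℝ} {u : Pt d}
    (h : μ (ball u ρ) = 0) : FF μ ρ u = 0 := by
  have h1 := FF_nonneg μ ρ u
  have h2 : ¬ 0 < FF μ ρ u := by
    rw [FF_pos_iff, h]
    simp
  exact le_antisymm (not_lt.mp h2) h1

/-- The fundamental relation: for any two points of the support and any vector `c`,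
the antisymmetrized bump integrals agree. -/
lemma FF_rel {d : ℕ} {μ : Measure (Pt d)} [IsLocallyFiniteMeasure μ]
    (hrefl : SmoothlyReflectionless μ) {s t : Pt d} (hs : s ∈ msupp μ) (ht : t ∈ msupp μ)
    (ρ : ℝ) (c : Pt d) :
    FF μ ρ (s - c) - FF μ ρ (s + c) = FF μ ρ (t - c) - FF μ ρ (t + c) := by
  set φ : Pt d → ℝ := fun u => psi ρ (u - c) - psi ρ (u + c) with hφ
  have hodd : ∀ u, φ (-u) = -φ u := by
    intro u
    show psi ρ (-u - c) - psi ρ (-u + c) = -(psi ρ (u - c) - psi ρ (u + c))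
    rw [show -u - c = -(u + c) by abel, show -u + c = -(u - c) by abel, psi_even, psi_even]
    ring
  have hcs : HasCompactSupport φ := by
    apply HasCompactSupport.intro ((isCompact_closedBall c ρ).union (isCompact_closedBall (-c) ρ))
    intro u hu
    simp only [Set.mem_union, mem_closedBall, not_or, not_le] at hu
    show psi ρ (u - c) - psi ρ (u + c) = 0
    rw [psi_eq_zero (by rw [← dist_eq_norm]; exact hu.1.le),
      psi_eq_zero (by rw [show u + c = u - (-c) by abel, ← dist_eq_norm]; exact hu.2.le)]
    ring
  have hlip : ∃ K : NNReal, LipschitzWith K φ := by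
    refine ⟨1 * 1 + 1 * 1, ?_⟩
    exact LipschitzWith.sub ((psi_lipschitz ρ).comp (lipschitz_sub_const c))
      ((psi_lipschitz ρ).comp (lipschitz_add_const c))
  obtain ⟨Λ, hΛ⟩ := hrefl φ hodd hcs hlip
  have key : ∀ p : Pt d, (∫ w, φ (p - w) ∂μ) = FF μ ρ (p - c) - FF μ ρ (p + c) := by
    intro p
    have e1 : (fun w => φ (p - w)) =
        fun w => psi (d := d) ρ ((p - c) - w) - psi ρ ((p + c) - w) := by
      funext w
      show psi ρ (p - w - c) - psi ρ (p - w + c) = _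
      rw [show p - w - c = (p - c) - w by abel, show p - w + c = (p + c) - w by abel]
    calc (∫ w, φ (p - w) ∂μ)
        = ∫ w, (psi (d := d) ρ ((p - c) - w) - psi ρ ((p + c) - w)) ∂μ := by rw [e1]
      _ = FF μ ρ (p - c) - FF μ ρ (p + c) :=
          integral_sub (integrable_psi_shift μ ρ _) (integrable_psi_shift μ ρ _)
  have h1 := hΛ s hs
  have h2 := hΛ t ht
  rw [key] at h1 h2
  rw [h1, h2]

/-- Support of a reflectionless measure is symmetric about each of its points. -/
lemma reflect_mem {d : ℕ} {μ : Measure (Pt d)} [IsLocallyFiniteMeasure μ]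
    (hrefl : SmoothlyReflectionless μ) {x y : Pt d} (hx : x ∈ msupp μ) (hy : y ∈ msupp μ) :
    y + (y - x) ∈ msupp μ := by
  by_contra hz
  simp only [msupp, Set.mem_setOf_eq, not_forall, not_lt] at hz
  obtain ⟨r, hr, hr0⟩ := hz
  have hr0 : μ (ball (y + (y - x)) r) = 0 := le_antisymm hr0 zero_le
  set c : Pt d := x - y with hc
  have hy' : x - c ∈ msupp μ := by
    rwa [show x - c = y by rw [hc]; abel]
  -- FF vanishes at the reflected point z = x - c - c for radii ≤ r
  have hzF : ∀ ρ : ℝ, ρ ≤ r → FF μ ρ (x - c - c) = 0 := by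
    intro ρ hρr
    apply FF_eq_zero
    apply measure_mono_null _ hr0
    rw [show x - c - c = y + (y - x) by rw [hc]; abel]
    exact ball_subset_ball hρr
  have hA : ∀ ρ : ℝ, 0 < ρ → 0 < FF μ ρ x := fun ρ hρ => (FF_pos_iff μ ρ x).2 (hx ρ hρ)
  have hB : ∀ ρ : ℝ, 0 < ρ → 0 < FF μ ρ (x - c) := fun ρ hρ =>
    (FF_pos_iff μ ρ (x - c)).2 (hy' ρ hρ)
  -- Step 1: FF (x + c) = FF x + FF (x - c)
  have h1 : ∀ ρ : ℝ, ρ ≤ r → FF μ ρ (x + c) = FF μ ρ x + FF μ ρ (x - c) := by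
    intro ρ hρr
    have := FF_rel hrefl hx hy' ρ c
    rw [show x - c - c = x - c - c from rfl, show x - c + c = x by abel] at this
    rw [hzF ρ hρr] at this
    linarith
  -- membership of x + c
  have hP1 : x + c ∈ msupp μ := by
    intro s hs
    have hρ : (0 : ℝ) < min s r := lt_min hs hr
    have hpos : 0 < FF μ (min s r) (x + c) := by
      rw [h1 _ (min_le_right s r)]
      have := hA _ hρ; have := hB _ hρ; linarith
    have := (FF_pos_iff μ (min s r) (x + c)).1 hpos
    exact this.trans_le (measure_mono (ball_subset_ball (min_le_left s r)))
  -- Step 2: FF (x + c + c) = 2 * FF x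
  have h2 : ∀ ρ : ℝ, ρ ≤ r → FF μ ρ (x + c + c) = 2 * FF μ ρ x := by
    intro ρ hρr
    have := FF_rel hrefl hP1 hx ρ c
    rw [show x + c - c = x by abel] at this
    have h1' := h1 ρ hρr
    linarith
  -- membership of x + c + c
  have hP2 : x + c + c ∈ msupp μ := by
    intro s hs
    have hρ : (0 : ℝ) < min s r := lt_min hs hr
    have hpos : 0 < FF μ (min s r) (x + c + c) := by
      rw [h2 _ (min_le_right s r)]
      have := hA _ hρ; linarith
    have := (FF_pos_iff μ (min s r) (x + c + c)).1 hpos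
    exact this.trans_le (measure_mono (ball_subset_ball (min_le_left s r)))
  -- Step 3: FF (x + c + c + c) = 2 * FF x + FF (x - c)
  have h3 : ∀ ρ : ℝ, ρ ≤ r → FF μ ρ (x + c + c + c) = 2 * FF μ ρ x + FF μ ρ (x - c) := by
    intro ρ hρr
    have := FF_rel hrefl hP2 hx ρ c
    rw [show x + c + c - c = x + c by abel] at this
    have h1' := h1 ρ hρr
    linarith
  -- Step 4: FF (x - c - c - c) = FF (x - c) - FF x
  have h4 : ∀ ρ : ℝ, ρ ≤ r → FF μ ρ (x - c - c - c) = FF μ ρ (x - c) - FF μ ρ x := by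
    intro ρ hρr
    have := FF_rel hrefl hx hy' ρ (c + c)
    rw [show x - (c + c) = x - c - c by abel, show x + (c + c) = x + c + c by abel,
      show x - c - (c + c) = x - c - c - c by abel, show x - c + (c + c) = x + c by abel]
      at this
    rw [hzF ρ hρr] at this
    have h1' := h1 ρ hρr
    have h2' := h2 ρ hρr
    linarith
  -- Step 5: FF (x - c - c - c - c) = - FF x < 0, contradiction
  have h5 := FF_rel hrefl hx hy' r (c + c + c)
  rw [show x - (c + c + c) = x - c - c - c by abel,
    show x + (c + c + c) = x + c + c + c by abel,
    show x - c - (c + c + c) = x - c - c - c - c by abel,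
    show x - c + (c + c + c) = x + c + c by abel] at h5
  have h2' := h2 r le_rfl
  have h3' := h3 r le_rfl
  have h4' := h4 r le_rfl
  have hAr := hA r hr
  have hnon := FF_nonneg μ r (x - c - c - c - c)
  linarith

/-- If `V + x₀ ⊆ supp μ` for some `x₀ ∈ supp μ`, then `V + y ⊆ supp μ` for every
`y ∈ supp μ`. -/
theorem plane_propagates (d : ℕ) (μ : Measure (Pt d)) (hloc : IsLocallyFiniteMeasure μ)
    (hrefl : SmoothlyReflectionless μ) (V : Submodule ℝ (Pt d)) (x₀ : Pt d)
    (hx₀ : x₀ ∈ msupp μ) (hV : ∀ v ∈ V, v + x₀ ∈ msupp μ) :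
    ∀ y ∈ msupp μ, ∀ v ∈ V, v + y ∈ msupp μ := by
  intro y hy v hv
  -- reflect y about x₀
  have h1 : x₀ + (x₀ - y) ∈ msupp μ := reflect_mem hrefl hy hx₀
  -- the midpoint x₀ + v/2 is in the support
  have hmid : (2⁻¹ : ℝ) • v + x₀ ∈ msupp μ := hV _ (V.smul_mem _ hv)
  -- reflect (x₀ + (x₀ - y)) about the midpoint
  have h2 := reflect_mem hrefl h1 hmid
  have : ((2⁻¹ : ℝ) • v + x₀) + (((2⁻¹ : ℝ) • v + x₀) - (x₀ + (x₀ - y))) = v + y := by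
    have hvv : (2⁻¹ : ℝ) • v + (2⁻¹ : ℝ) • v = v := by
      rw [← add_smul]; norm_num
    rw [show ((2⁻¹ : ℝ) • v + x₀) + (((2⁻¹ : ℝ) • v + x₀) - (x₀ + (x₀ - y))) =
      ((2⁻¹ : ℝ) • v + (2⁻¹ : ℝ) • v) + y by abel, hvv]
  rwa [this] at h2
end
end
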